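/- arXiv:1812.03324 — 3 statements merged into one kernel-verified Lean document; each statement's English description precedes it below -/
import Mathlib

section
/- Let n > m ≥ 2 and k ≥ 1 be integers, let X_1,…,X_k be i.i.d. random variables with X_1 ∼ P_X strictly positive on a set X with |X| = n and P_X(1) ≥ … ≥ P_X(n), let f ∈ F_{n,m} be an arbitrary deterministic function, and set Y_i = f(X_i) for all i. Let g_{X^k} and g_{Y^k} be ranking functions of X^k = (X_1,…,X_k) and Y^k = (Y_1,…,Y_k), respectively. Let X̃_m be as follows: if P_X(1) < 1/m, X̃_m is uniform on {1,…,m}; otherwise P_{X̃_m}(i) = P_X(i) for i ≤ n* and P_{X̃_m}(i) = (1/(m−n*))·Σ_{j=n*+1}^{n} P_X(j) for n* < i ≤ m, where n* is the maximal integer i ∈ {1,…,m−1} with P_X(i) ≥ (1/(m−i))·Σ_{j=i+1}^{n} P_X(j). Then for every ρ > 0: (1/k)·log( E[g_{X^k}(X^k)^ρ] / E[g_{Y^k}(Y^k)^ρ] ) ≥ ρ·[H_{1/(1+ρ)}(X) − H_{1/(1+ρ)}(X̃_m)] − (ρ/k)·log(1 + k·log n). -/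
open Finset

/-- `P` is a probability mass function, strictly positive on `{1,…,n}`. -/
def IsPMF (n : ℕ) (P : ℕ → ℝ) : Prop :=
  (∀ i ∈ Finset.Icc 1 n, 0 < P i) ∧ ∑ i ∈ Finset.Icc 1 n, P i = 1

/-- The ratio of the maximal to minimal mass of `P` on `{1,…,n}` is at most `ρ`. -/
def RatioBdd (n : ℕ) (ρ : ℝ) (P : ℕ → ℝ) : Prop :=
  ∀ i ∈ Finset.Icc 1 n, ∀ j ∈ Finset.Icc 1 n, P i ≤ ρ * P j

/-- `P` is nonincreasing on `{1,…,n}`. -/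
def DecOn (n : ℕ) (P : ℕ → ℝ) : Prop :=
  ∀ i ∈ Finset.Icc 1 n, ∀ j ∈ Finset.Icc 1 n, i ≤ j → P j ≤ P i

/-- Sum of the `k` largest masses of `P` on `{1,…,n}`. -/
noncomputable def topSum (n : ℕ) (P : ℕ → ℝ) (k : ℕ) : ℝ :=
  sSup ((fun s : Finset ℕ => ∑ i ∈ s, P i) '' {s | s ⊆ Finset.Icc 1 n ∧ s.card = k})

/-- `P ≺ Q`: `P` is majorized by `Q`, both viewed on `{1,…,n}`. -/
def MajorizedBy (n : ℕ) (P Q : ℕ → ℝ) : Prop :=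
  ∀ k, 1 ≤ k → k ≤ n - 1 → topSum n P k ≤ topSum n Q k

/-- Zero-padding of a pmf on `{1,…,m}` outside of `{1,…,m}`. -/
def padTo (m : ℕ) (Q : ℕ → ℝ) : ℕ → ℝ := fun i => if i ≤ m then Q i else 0

/-- Rényi entropy of order `α` of `P` on `{1,…,n}` (Shannon entropy for `α = 1`);
natural logarithms. -/
noncomputable def renyiH (n : ℕ) (α : ℝ) (P : ℕ → ℝ) : ℝ :=
  if α = 1 then -∑ i ∈ Finset.Icc 1 n, P i * Real.log (P i)
  else (1 - α)⁻¹ * Real.log (∑ i ∈ Finset.Icc 1 n, P i ^ α)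

/-- `c_α^{(n)}(ρ) = log n − min_{P ∈ 𝒫_n(ρ)} H_α(P)` for `n ≥ 2`, and `0` for `n ≤ 1`. -/
noncomputable def cN (α ρ : ℝ) (n : ℕ) : ℝ :=
  if n ≤ 1 then 0
  else Real.log n - sInf (renyiH n α '' {P | IsPMF n P ∧ RatioBdd n ρ P})

/-- The closed-form expression for `c_α^{(∞)}(ρ)`, `α ∈ (0,1) ∪ (1,∞)`. -/
noncomputable def cInfinity (α ρ : ℝ) : ℝ :=
  (α - 1)⁻¹ * Real.log (1 + (1 + α * (ρ - 1) - ρ ^ α) / ((1 - α) * (ρ - 1)))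
    - α / (α - 1) * Real.log (1 + (1 + α * (ρ - 1) - ρ ^ α) / ((1 - α) * (ρ ^ α - 1)))

/-- `v(α) := c_α^{(∞)}(2)`, with the continuous extension at `α = 1`. -/
noncomputable def vFun (α : ℝ) : ℝ :=
  if α = 1 then Real.log (2 / (Real.exp 1 * Real.log 2))
  else Real.log ((α - 1) / ((2 : ℝ) ^ α - 2)) - α / (α - 1) * Real.log (α / ((2 : ℝ) ^ α - 1))

/-- `n*`: the maximal `i ∈ {1,…,m−1}` with `P i ≥ (m−i)⁻¹ ∑_{j=i+1}^n P j`. -/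
noncomputable def nStar (n m : ℕ) (P : ℕ → ℝ) : ℕ :=
  sSup {i : ℕ | 1 ≤ i ∧ i ≤ m - 1 ∧
    ((m : ℝ) - (i : ℝ))⁻¹ * ∑ j ∈ Finset.Icc (i + 1) n, P j ≤ P i}

/-- The pmf of `X̃_m` on `{1,…,m}`, built from a nonincreasing pmf `P` on `{1,…,n}`. -/
noncomputable def tildeX (n m : ℕ) (P : ℕ → ℝ) : ℕ → ℝ := fun i =>
  if P 1 < 1 / (m : ℝ) then 1 / (m : ℝ)
  else if i ≤ nStar n m P then P i
  else ((m : ℝ) - (nStar n m P : ℝ))⁻¹ * ∑ j ∈ Finset.Icc (nStar n m P + 1) n, P j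

/-- The pmf of `Ỹ_m` on `{1,…,m}`. -/
def tildeY (n m : ℕ) (P : ℕ → ℝ) : ℕ → ℝ := fun i =>
  if i = 1 then ∑ j ∈ Finset.Icc 1 (n - m + 1), P j else P (n - m + i)

/-- The pmf of `f(X)`: `(push n f P) j = ∑_{i ∈ {1,…,n}, f i = j} P i`. -/
def push (n : ℕ) (f : ℕ → ℕ) (P : ℕ → ℝ) : ℕ → ℝ := fun j =>
  ∑ i ∈ (Finset.Icc 1 n).filter (fun i => f i = j), P i

/-- The set `{1,…,n}^k` of source sequences of length `k`. -/
def seqSet (n k : ℕ) : Finset (Fin k → ℕ) := Fintype.piFinset fun _ => Finset.Icc 1 n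

/-- Product (i.i.d.) probability of a sequence. -/
def prodP (k : ℕ) (P : ℕ → ℝ) (x : Fin k → ℕ) : ℝ := ∏ i, P (x i)

/-- `g` is a ranking function for the i.i.d. vector on `{1,…,n}^k` with marginal `P`:
a bijection onto `{1,…,n^k}` which assigns smaller ranks to larger masses. -/
def IsRanking (n k : ℕ) (P : ℕ → ℝ) (g : (Fin k → ℕ) → ℕ) : Prop :=
  Set.BijOn g (↑(seqSet n k)) (Set.Icc 1 (n ^ k)) ∧
    ∀ x ∈ seqSet n k, ∀ y ∈ seqSet n k, prodP k P y < prodP k P x → g x < g y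

/-- The `ρ`-th guessing moment `E[g(Z^k)^ρ]`. -/
noncomputable def gmoment (n k : ℕ) (P : ℕ → ℝ) (g : (Fin k → ℕ) → ℕ) (ρ : ℝ) : ℝ :=
  ∑ x ∈ seqSet n k, prodP k P x * (g x : ℝ) ^ ρ

/-- Kraft inequality for a `D`-ary length function on `{1,…,n}^k`. -/
def Kraft (n k D : ℕ) (ℓ : (Fin k → ℕ) → ℕ) : Prop :=
  ∑ x ∈ seqSet n k, (D : ℝ) ^ (-(ℓ x : ℝ)) ≤ 1

/-- Scaled cumulant generating function `Λ_k(ρ)` of the codeword lengths (base-`D` log). -/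
noncomputable def cgf (n k D : ℕ) (P : ℕ → ℝ) (ℓ : (Fin k → ℕ) → ℕ) (ρ : ℝ) : ℝ :=
  (1 / (k : ℝ)) * Real.logb D (∑ x ∈ seqSet n k, prodP k P x * (D : ℝ) ^ (ρ * (ℓ x : ℝ)))

/-- `i_β` of Lemma 2. -/
noncomputable def iBeta (n : ℕ) (ρ β : ℝ) : ℕ := Nat.floor ((1 - (n : ℝ) * β) / ((ρ - 1) * β))

/-- The pmf `Q_β` of Lemma 2. -/
noncomputable def Qbeta (n : ℕ) (ρ β : ℝ) : ℕ → ℝ := fun j =>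
  if j ≤ iBeta n ρ β then ρ * β
  else if j = iBeta n ρ β + 1 then
    1 - ((n : ℝ) + (iBeta n ρ β : ℝ) * ρ - (iBeta n ρ β : ℝ) - 1) * β
  else β

lemma harm_le (N : ℕ) : ∑ i ∈ Finset.Icc 1 N, ((i:ℝ))⁻¹ ≤ 1 + Real.log N := by
  have h := harmonic_le_one_add_log N
  have e : ((harmonic N : ℚ) : ℝ) = ∑ i ∈ Finset.Icc 1 N, ((i:ℝ))⁻¹ := by
    rw [harmonic_eq_sum_Icc]; push_cast; rfl
  linarith [e ▸ h]

lemma sum_prod_rpow (M k : ℕ) (Q : ℕ → ℝ) (hQ : ∀ j ∈ Finset.Icc 1 M, 0 ≤ Q j) (α : ℝ) :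
    ∑ x ∈ seqSet M k, prodP k Q x ^ α = (∑ j ∈ Finset.Icc 1 M, Q j ^ α) ^ k := by
  have e1 : ∀ x ∈ seqSet M k, prodP k Q x ^ α = ∏ i, Q (x i) ^ α := by
    intro x hx
    exact (Real.finset_prod_rpow univ (fun i => Q (x i))
      (fun i _ => hQ _ (Fintype.mem_piFinset.mp hx i)) α).symm
  have e2 := Finset.prod_univ_sum (fun _ : Fin k => Finset.Icc 1 M) (fun _ j => Q j ^ α)
  rw [Finset.sum_congr rfl e1]
  rw [show (∑ x ∈ seqSet M k, ∏ i, Q (x i) ^ α)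
      = ∑ x ∈ Fintype.piFinset (fun _ : Fin k => Finset.Icc 1 M), ∏ i, Q (x i) ^ α from rfl]
  rw [← e2, Finset.prod_const, Finset.card_univ, Fintype.card_fin]

lemma seqSet_nonempty (M k : ℕ) (hM : 1 ≤ M) : (seqSet M k).Nonempty :=
  ⟨fun _ => 1, Fintype.mem_piFinset.mpr (fun _ => Finset.mem_Icc.mpr ⟨le_rfl, hM⟩)⟩

lemma partA (n k : ℕ) (hn : 1 ≤ n) (P : ℕ → ℝ)
    (hpos : ∀ i ∈ Finset.Icc 1 n, 0 < P i) (g : (Fin k → ℕ) → ℕ)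
    (hg : IsRanking n k P g) (ρ : ℝ) (hρ : 0 < ρ) :
    (k : ℝ) * (1 + ρ) * Real.log (∑ i ∈ Finset.Icc 1 n, P i ^ (1/(1+ρ)))
      - ρ * Real.log (1 + (k : ℝ) * Real.log n) ≤ Real.log (gmoment n k P g ρ) := by
  have h1ρ : (0:ℝ) < 1 + ρ := by linarith
  set α := 1/(1+ρ) with hα
  have hα0 : 0 < α := by positivity
  have hαρ : α * (1 + ρ) = 1 := by rw [hα]; field_simp
  have hmem : ∀ x ∈ seqSet n k, ∀ i, x i ∈ Finset.Icc 1 n := by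
    intro x hx i; exact Fintype.mem_piFinset.mp hx i
  have hpp : ∀ x ∈ seqSet n k, 0 < prodP k P x := by
    intro x hx
    exact Finset.prod_pos (fun i _ => hpos _ (hmem x hx i))
  have hg1 : ∀ x ∈ seqSet n k, 1 ≤ g x ∧ g x ≤ n ^ k := by
    intro x hx
    exact Set.mem_Icc.mp (hg.1.mapsTo (Finset.mem_coe.mpr hx))
  have hgpos : ∀ x ∈ seqSet n k, (0:ℝ) < (g x : ℝ) := by
    intro x hx
    exact_mod_cast Nat.lt_of_lt_of_le Nat.zero_lt_one (hg1 x hx).1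
  have hne := seqSet_nonempty n k hn
  set A := gmoment n k P g ρ with hA
  set S := ∑ i ∈ Finset.Icc 1 n, P i ^ α with hS
  set H := ∑ x ∈ seqSet n k, ((g x : ℝ))⁻¹ with hH
  have hApos : 0 < A := by
    rw [hA, gmoment]
    apply Finset.sum_pos _ hne
    intro x hx
    have h1 := hpp x hx
    have h2 := hgpos x hx
    positivity
  have hHpos : 0 < H := by
    rw [hH]
    apply Finset.sum_pos _ hne
    intro x hx
    exact inv_pos.mpr (hgpos x hx)
  have hSpos : 0 < S := by
    rw [hS]
    apply Finset.sum_pos _ ⟨1, Finset.mem_Icc.mpr ⟨le_rfl, hn⟩⟩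
    intro i hi
    exact Real.rpow_pos_of_pos (hpos i hi) α
  have hconj : Real.HolderConjugate (1+ρ) ((1+ρ)/ρ) := by
    rw [Real.holderConjugate_iff]; constructor
    · linarith
    · field_simp
  have hold := Real.inner_le_Lp_mul_Lq_of_nonneg (seqSet n k)
      (f := fun x => (prodP k P x * (g x : ℝ) ^ ρ) ^ α)
      (g := fun x => ((g x : ℝ)) ^ (-(ρ * α))) hconj
      (fun x hx => Real.rpow_nonneg (mul_nonneg (hpp x hx).le (Real.rpow_nonneg (Nat.cast_nonneg _) _)) α)
      (fun x _ => Real.rpow_nonneg (Nat.cast_nonneg _) _)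
  have eL : ∑ x ∈ seqSet n k, (prodP k P x * (g x : ℝ) ^ ρ) ^ α * ((g x : ℝ)) ^ (-(ρ * α))
      = ∑ x ∈ seqSet n k, prodP k P x ^ α := by
    apply Finset.sum_congr rfl
    intro x hx
    have hp := hpp x hx
    have hr := hgpos x hx
    rw [Real.mul_rpow hp.le (Real.rpow_nonneg hr.le ρ), ← Real.rpow_mul hr.le,
      mul_assoc, ← Real.rpow_add hr, add_neg_cancel, Real.rpow_zero, mul_one]
  have eR1 : ∑ x ∈ seqSet n k, ((prodP k P x * (g x : ℝ) ^ ρ) ^ α) ^ (1+ρ) = A := by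
    rw [hA, gmoment]
    apply Finset.sum_congr rfl
    intro x hx
    have hp := hpp x hx
    have hr := hgpos x hx
    rw [← Real.rpow_mul (by positivity), hαρ, Real.rpow_one]
  have eR2 : ∑ x ∈ seqSet n k, (((g x : ℝ)) ^ (-(ρ * α))) ^ ((1+ρ)/ρ) = H := by
    rw [hH]
    apply Finset.sum_congr rfl
    intro x hx
    have hr := hgpos x hx
    rw [← Real.rpow_mul hr.le]
    have e : -(ρ * α) * ((1+ρ)/ρ) = -1 := by
      rw [hα]; field_simp
    rw [e, Real.rpow_neg_one]
  rw [eL, eR1, eR2] at hold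
  -- hold : ∑ prodP^α ≤ A ^ (1/(1+ρ)) * H ^ (1/((1+ρ)/ρ))
  have hSPk : ∑ x ∈ seqSet n k, prodP k P x ^ α = S ^ k :=
    sum_prod_rpow n k P (fun j hj => (hpos j hj).le) α
  rw [hSPk] at hold
  have hSkpos : (0:ℝ) < S ^ k := pow_pos hSpos k
  have hlog1 : Real.log (S ^ k) ≤ α * Real.log A + (ρ * α) * Real.log H := by
    have h1 : Real.log (S ^ k) ≤ Real.log (A ^ (1/(1+ρ)) * H ^ (1/((1+ρ)/ρ))) :=
      Real.log_le_log hSkpos hold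
    rw [Real.log_mul (ne_of_gt (Real.rpow_pos_of_pos hApos _))
        (ne_of_gt (Real.rpow_pos_of_pos hHpos _)),
      Real.log_rpow hApos, Real.log_rpow hHpos] at h1
    have e1 : 1/(1+ρ) = α := hα.symm
    have e2 : 1/((1+ρ)/ρ) = ρ * α := by rw [hα]; field_simp
    rw [e1, e2] at h1
    exact h1
  rw [Real.log_pow] at hlog1
  have hHle : Real.log H ≤ Real.log (1 + (k:ℝ) * Real.log n) := by
    apply Real.log_le_log hHpos
    have e : H = ∑ i ∈ Finset.Icc 1 (n ^ k), ((i:ℝ))⁻¹ := by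
      rw [hH]
      apply Finset.sum_nbij (i := g)
      · intro x hx
        exact Finset.mem_Icc.mpr (hg1 x hx)
      · exact hg.1.injOn
      · rw [Finset.coe_Icc]; exact hg.1.surjOn
      · intro x hx; rfl
    rw [e]
    have h2 := harm_le (n ^ k)
    have e2 : Real.log ((n ^ k : ℕ) : ℝ) = (k:ℝ) * Real.log n := by
      push_cast
      rw [Real.log_pow]
    rw [e2] at h2
    exact h2
  have hmul := mul_le_mul_of_nonneg_left hlog1 h1ρ.le
  have e3 : (1+ρ) * (α * Real.log A + (ρ * α) * Real.log H)
      = Real.log A + ρ * Real.log H := by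
    linear_combination (Real.log A + ρ * Real.log H) * hαρ
  rw [e3] at hmul
  have h4 : ρ * Real.log H ≤ ρ * Real.log (1 + (k:ℝ) * Real.log n) :=
    mul_le_mul_of_nonneg_left hHle hρ.le
  nlinarith [hmul, h4]

lemma tangent_line {α x v : ℝ} (hα0 : 0 < α) (hα1 : α < 1) (hx : 0 < x) (hv : 0 ≤ v) :
    v ^ α ≤ x ^ α + α * x ^ (α - 1) * (v - x) := by
  have key : v ^ α * x ^ (1 - α) ≤ α * v + (1 - α) * x :=
    Real.geom_mean_le_arith_mean2_weighted hα0.le (by linarith) hv hx.le (by ring)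
  have h2 : x ^ (1 - α) * x ^ (α - 1) = 1 := by
    rw [← Real.rpow_add hx]; norm_num
  have h3 : x ^ (α - 1) * x = x ^ α := by
    nth_rewrite 2 [← Real.rpow_one x]
    rw [← Real.rpow_add hx]; norm_num
  have hnn : (0:ℝ) ≤ x ^ (α - 1) := Real.rpow_nonneg hx.le _
  calc v ^ α = (v ^ α * x ^ (1 - α)) * x ^ (α - 1) := by
        rw [mul_assoc, h2, mul_one]
    _ ≤ (α * v + (1 - α) * x) * x ^ (α - 1) := mul_le_mul_of_nonneg_right key hnn
    _ = x ^ α + α * x ^ (α - 1) * (v - x) := by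
        have e : (α * v + (1 - α) * x) * x ^ (α - 1)
            = α * x ^ (α - 1) * v + (1 - α) * (x ^ (α - 1) * x) := by ring
        rw [e]; linear_combination h3

lemma abel_le (a d : ℕ → ℝ) (m : ℕ) (hm : 1 ≤ m)
    (hmono : ∀ i, i + 1 < m → a i ≤ a (i + 1))
    (hD : ∀ t, t ≤ m → 0 ≤ ∑ i ∈ Finset.range t, d i) :
    ∑ i ∈ Finset.range m, a i * d i ≤ a (m - 1) * ∑ i ∈ Finset.range m, d i := by
  induction m with
  | zero => omega
  | succ t ih =>
    rcases Nat.eq_or_lt_of_le hm with h1 | h1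
    · simp [← h1]
    · have ht : 1 ≤ t := by omega
      have ih' := ih ht (fun i hi => hmono i (by omega)) (fun u hu => hD u (by omega))
      have e1 : ∑ i ∈ Finset.range (t + 1), a i * d i
          = (∑ i ∈ Finset.range t, a i * d i) + a t * d t := Finset.sum_range_succ _ _
      have e2 : ∑ i ∈ Finset.range (t + 1), d i
          = (∑ i ∈ Finset.range t, d i) + d t := Finset.sum_range_succ _ _
      have hat : a (t - 1) ≤ a t := by
        have h := hmono (t - 1) (by omega)
        have e : t - 1 + 1 = t := by omega
        rwa [e] at h
      have hDt : 0 ≤ ∑ i ∈ Finset.range t, d i := hD t (by omega)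
      have h4 : a (t-1) * ∑ i ∈ Finset.range t, d i ≤ a t * ∑ i ∈ Finset.range t, d i :=
        mul_le_mul_of_nonneg_right hat hDt
      have e3 : t + 1 - 1 = t := by omega
      rw [e1, e2, e3, mul_add]
      linarith

lemma sum_le_top (v : ℕ → ℝ) (hv : Antitone v) (h0 : ∀ i, 0 ≤ v i) (S : Finset ℕ) (t : ℕ)
    (hcard : S.card ≤ t) : ∑ i ∈ S, v i ≤ ∑ i ∈ Finset.range t, v i := by
  classical
  set A := Finset.range t with hA
  have hcard2 : (S \ A).card ≤ (A \ S).card := by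
    have h1 := Finset.card_sdiff_add_card_inter S A
    have h2 := Finset.card_sdiff_add_card_inter A S
    have h3 : (S ∩ A).card = (A ∩ S).card := by rw [Finset.inter_comm]
    have h4 : A.card = t := Finset.card_range t
    omega
  have key : ∑ i ∈ S \ A, v i ≤ ∑ i ∈ A \ S, v i := by
    calc ∑ i ∈ S \ A, v i ≤ (S \ A).card • v t := by
          apply Finset.sum_le_card_nsmul
          intro x hx
          have hx2 : t ≤ x := by
            have := (Finset.mem_sdiff.mp hx).2
            simp only [hA, Finset.mem_range] at this; omega
          exact hv hx2
      _ ≤ (A \ S).card • v t := by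
          have h := h0 t
          simpa using mul_le_mul_of_nonneg_right
            (by exact_mod_cast Nat.cast_le.mpr hcard2 : ((S \ A).card : ℝ) ≤ ((A \ S).card : ℝ)) h
      _ ≤ ∑ i ∈ A \ S, v i := by
          apply Finset.card_nsmul_le_sum
          intro x hx
          have hx2 : x ≤ t := by
            have := (Finset.mem_sdiff.mp hx).1
            simp only [hA, Finset.mem_range] at this; omega
          exact hv hx2
  have e1 : ∑ i ∈ S, v i = ∑ i ∈ S ∩ A, v i + ∑ i ∈ S \ A, v i :=
    (Finset.sum_inter_add_sum_sdiff S A v).symm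
  have e2 : ∑ i ∈ A, v i = ∑ i ∈ A ∩ S, v i + ∑ i ∈ A \ S, v i :=
    (Finset.sum_inter_add_sum_sdiff A S v).symm
  have e3 : ∑ i ∈ S ∩ A, v i = ∑ i ∈ A ∩ S, v i := by rw [Finset.inter_comm]
  linarith

lemma sum_Icc_one_eq_range' (g : ℕ → ℝ) (t : ℕ) :
    ∑ j ∈ Finset.Icc 1 t, g j = ∑ i ∈ Finset.range t, g (i + 1) := by
  induction t with
  | zero => simp
  | succ u ih =>
    rw [Finset.sum_Icc_succ_top (by omega), ih, Finset.sum_range_succ]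

lemma sum_Icc_split (g : ℕ → ℝ) (a b : ℕ) (h : a ≤ b) :
    ∑ j ∈ Finset.Icc 1 b, g j = ∑ j ∈ Finset.Icc 1 a, g j + ∑ j ∈ Finset.Icc (a+1) b, g j := by
  rw [show Finset.Icc 1 b = Finset.Ioc 0 b from Finset.Icc_add_one_left_eq_Ioc 0 b ▸ rfl,
    show Finset.Icc 1 a = Finset.Ioc 0 a from Finset.Icc_add_one_left_eq_Ioc 0 a ▸ rfl,
    show Finset.Icc (a+1) b = Finset.Ioc a b from Finset.Icc_add_one_left_eq_Ioc a b ▸ rfl]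
  exact (Finset.sum_Ioc_consecutive g (Nat.zero_le a) h).symm

lemma exists_sorted (m : ℕ) (Q : ℕ → ℝ) (hQ : ∀ j, 0 ≤ Q j) :
    ∃ v : ℕ → ℝ, Antitone v ∧ (∀ i, 0 ≤ v i) ∧
      (∀ G : ℝ → ℝ, ∑ i ∈ Finset.range m, G (v i) = ∑ j ∈ Finset.Icc 1 m, G (Q j)) ∧
      (∀ S : Finset ℕ, S ⊆ Finset.Icc 1 m → ∃ S' : Finset ℕ,
        S'.card = S.card ∧ ∑ i ∈ S', v i = ∑ j ∈ S, Q j) := by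
  classical
  set u : Fin m → ℝ := fun i => Q (1 + i.val) with hu
  set σ : Equiv.Perm (Fin m) := Tuple.sort u with hσ
  set v : ℕ → ℝ := fun i => if h : i < m then u (σ (Fin.rev ⟨i, h⟩)) else 0 with hv
  have hv0 : ∀ i, 0 ≤ v i := by
    intro i; simp only [hv]; split
    · exact hQ _
    · exact le_rfl
  have hmono : Monotone (u ∘ σ) := Tuple.monotone_sort u
  have hanti : Antitone v := by
    intro i j hij
    by_cases hj : j < m
    · have hi : i < m := lt_of_le_of_lt hij hj
      simp only [hv, dif_pos hi, dif_pos hj]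
      have hrev : Fin.rev ⟨j, hj⟩ ≤ Fin.rev ⟨i, hi⟩ := by
        rw [Fin.rev_le_rev]; exact hij
      exact hmono hrev
    · have hz : v j = 0 := by simp only [hv, dif_neg hj]
      rw [hz]; exact hv0 i
  have hG : ∀ G : ℝ → ℝ, ∑ i ∈ Finset.range m, G (v i) = ∑ j ∈ Finset.Icc 1 m, G (Q j) := by
    intro G
    have e1 : ∑ i ∈ Finset.range m, G (v i) = ∑ i : Fin m, G (v i.val) :=
      (Fin.sum_univ_eq_sum_range (fun i => G (v i)) m).symm
    have e2 : ∀ i : Fin m, G (v i.val) = G (u (σ (Fin.rev i))) := by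
      intro i
      simp only [hv, dif_pos i.isLt]
    have e3 : ∑ i : Fin m, G (u (σ (Fin.rev i))) = ∑ i : Fin m, G (u i) := by
      have := Equiv.sum_comp (Fin.revPerm.trans σ) (fun i => G (u i))
      simpa using this
    have e4 : ∑ i : Fin m, G (u i) = ∑ i ∈ Finset.range m, G (Q (1 + i)) :=
      Fin.sum_univ_eq_sum_range (fun i => G (Q (1 + i))) m
    have e5 : ∑ j ∈ Finset.Icc 1 m, G (Q j) = ∑ i ∈ Finset.range m, G (Q (1 + i)) := by
      rw [sum_Icc_one_eq_range' (fun j => G (Q j)) m]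
      exact Finset.sum_congr rfl (fun i _ => by rw [add_comm])
    rw [e1, Finset.sum_congr rfl (fun i _ => e2 i), e3, e4, e5]
  refine ⟨v, hanti, hv0, hG, ?_⟩
  intro S hS
  set ι : ℕ → ℕ := fun j => if h : j - 1 < m then (Fin.rev (σ.symm ⟨j - 1, h⟩)).val else 0 with hι
  have hjm : ∀ j ∈ S, 1 ≤ j ∧ j ≤ m := fun j hj => Finset.mem_Icc.mp (hS hj)
  have hvι : ∀ j ∈ S, v (ι j) = Q j := by
    intro j hj
    obtain ⟨h1, h2⟩ := hjm j hj
    have hh : j - 1 < m := by omega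
    have hlt : (Fin.rev (σ.symm ⟨j - 1, hh⟩)).val < m := (Fin.rev _).isLt
    simp only [hι, dif_pos hh, hv, dif_pos hlt]
    have he : (⟨(Fin.rev (σ.symm ⟨j - 1, hh⟩)).val, hlt⟩ : Fin m)
        = Fin.rev (σ.symm ⟨j - 1, hh⟩) := rfl
    rw [he, Fin.rev_rev, Equiv.apply_symm_apply]
    simp only [hu]
    congr 1
    omega
  have hinj : Set.InjOn ι S := by
    intro j1 h1 j2 h2 he
    obtain ⟨ha1, hb1⟩ := hjm j1 h1
    obtain ⟨ha2, hb2⟩ := hjm j2 h2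
    have hh1 : j1 - 1 < m := by omega
    have hh2 : j2 - 1 < m := by omega
    simp only [hι, dif_pos hh1, dif_pos hh2] at he
    have e1 : Fin.rev (σ.symm ⟨j1 - 1, hh1⟩) = Fin.rev (σ.symm ⟨j2 - 1, hh2⟩) :=
      Fin.val_injective he
    have e2 := Fin.rev_injective e1
    have e3 := σ.symm.injective e2
    have e4 : j1 - 1 = j2 - 1 := congrArg Fin.val e3
    omega
  refine ⟨S.image ι, Finset.card_image_of_injOn hinj, ?_⟩
  rw [Finset.sum_image (fun a ha b hb => hinj ha hb)]
  exact Finset.sum_congr rfl hvι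

lemma ratio_bound {mt ts B M vt cc : ℝ} (hmt : 0 < mt) (hts : 0 ≤ ts)
    (h1 : ts * B ≤ ts * (mt * vt)) (h2 : mt * (ts * vt) ≤ mt * M)
    (h3 : mt * (M + B) ≤ mt * ((mt + ts) * cc)) : B ≤ mt * cc := by
  have h5 : (0:ℝ) < mt + ts := by linarith
  have h4 : (mt + ts) * B ≤ (mt + ts) * (mt * cc) := by nlinarith
  exact le_of_mul_le_mul_left h4 h5


lemma sum_prodP (M k : ℕ) (Q : ℕ → ℝ) :
    ∑ x ∈ seqSet M k, prodP k Q x = (∑ j ∈ Finset.Icc 1 M, Q j) ^ k := by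
  have e2 := Finset.prod_univ_sum (fun _ : Fin k => Finset.Icc 1 M) (fun _ j => Q j)
  rw [show (∑ x ∈ seqSet M k, prodP k Q x)
      = ∑ x ∈ Fintype.piFinset (fun _ : Fin k => Finset.Icc 1 M), ∏ i, Q (x i) from rfl]
  rw [← e2, Finset.prod_const, Finset.card_univ, Fintype.card_fin]

lemma gmoment_ge_one (M k : ℕ) (Q : ℕ → ℝ) (hQ0 : ∀ x ∈ seqSet M k, 0 ≤ prodP k Q x)
    (hQs : ∑ j ∈ Finset.Icc 1 M, Q j = 1) (g : (Fin k → ℕ) → ℕ)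
    (hg : IsRanking M k Q g) (ρ : ℝ) (hρ : 0 < ρ) : 1 ≤ gmoment M k Q g ρ := by
  have h1 : ∑ x ∈ seqSet M k, prodP k Q x = 1 := by rw [sum_prodP, hQs, one_pow]
  calc (1:ℝ) = ∑ x ∈ seqSet M k, prodP k Q x := h1.symm
    _ ≤ ∑ x ∈ seqSet M k, prodP k Q x * (g x : ℝ) ^ ρ := by
        apply Finset.sum_le_sum
        intro x hx
        have hg1 : 1 ≤ g x := (Set.mem_Icc.mp (hg.1.mapsTo (Finset.mem_coe.mpr hx))).1
        have hg1' : (1:ℝ) ≤ (g x : ℝ) := by exact_mod_cast hg1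
        have h2 : (1:ℝ) ≤ (g x : ℝ) ^ ρ := by
          calc (1:ℝ) = 1 ^ ρ := (Real.one_rpow ρ).symm
            _ ≤ (g x : ℝ) ^ ρ := Real.rpow_le_rpow zero_le_one hg1' hρ.le
        exact le_mul_of_one_le_right (hQ0 x hx) h2
    _ = gmoment M k Q g ρ := rfl

lemma partB (m k : ℕ) (Q : ℕ → ℝ) (hQ : ∀ j, 0 ≤ Q j)
    (g : (Fin k → ℕ) → ℕ) (hg : IsRanking m k Q g) (ρ : ℝ) (hρ : 0 < ρ)
    (hSpos : 0 < ∑ x ∈ seqSet m k, prodP k Q x ^ (1/(1+ρ))) :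
    gmoment m k Q g ρ ≤ (∑ x ∈ seqSet m k, prodP k Q x ^ (1/(1+ρ))) ^ (1+ρ) := by
  have h1ρ : (0:ℝ) < 1 + ρ := by linarith
  set α := 1/(1+ρ) with hα
  have hα0 : 0 < α := by positivity
  have hαρ : α * (1 + ρ) = 1 := by rw [hα]; field_simp
  set S := ∑ x ∈ seqSet m k, prodP k Q x ^ α with hS
  have hq0 : ∀ x : Fin k → ℕ, 0 ≤ prodP k Q x :=
    fun x => Finset.prod_nonneg (fun i _ => hQ _)
  have key : ∀ y ∈ seqSet m k, prodP k Q y * (g y:ℝ) ^ ρ ≤ prodP k Q y ^ α * S ^ ρ := by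
    intro y hy
    by_cases hqy : 0 < prodP k Q y
    · have hgy : 1 ≤ g y ∧ g y ≤ m ^ k :=
        Set.mem_Icc.mp (hg.1.mapsTo (Finset.mem_coe.mpr hy))
      have hcount : ((seqSet m k).filter (fun x => g x ≤ g y)).card = g y := by
        have hbij := Finset.card_nbij (s := (seqSet m k).filter (fun x => g x ≤ g y))
          (t := Finset.Icc 1 (g y)) (i := g)
          (by
            intro x hx
            obtain ⟨hx1, hx2⟩ := Finset.mem_filter.mp hx
            exact Finset.mem_Icc.mpr ⟨(Set.mem_Icc.mp (hg.1.mapsTo (Finset.mem_coe.mpr hx1))).1, hx2⟩)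
          (hg.1.injOn.mono (by
            intro x hx
            exact Finset.mem_coe.mpr (Finset.mem_of_mem_filter x (Finset.mem_coe.mp hx))))
          (by
            intro ℓ hℓ
            rw [Finset.coe_Icc, Set.mem_Icc] at hℓ
            have hℓ2 : ℓ ∈ Set.Icc 1 (m ^ k) := Set.mem_Icc.mpr ⟨hℓ.1, le_trans hℓ.2 hgy.2⟩
            obtain ⟨x, hx, hgx⟩ := hg.1.surjOn hℓ2
            refine ⟨x, ?_, hgx⟩
            rw [Finset.coe_filter]
            exact ⟨Finset.mem_coe.mp hx, by omega⟩)
        rw [hbij, Nat.card_Icc]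
        omega
      have hpyα : (0:ℝ) < prodP k Q y ^ α := Real.rpow_pos_of_pos hqy α
      have hcard_le : ((g y:ℝ)) ≤ S / prodP k Q y ^ α := by
        have h1 : ∀ x ∈ (seqSet m k).filter (fun x => g x ≤ g y),
            (1:ℝ) ≤ (prodP k Q x / prodP k Q y) ^ α := by
          intro x hx
          obtain ⟨hx1, hx2⟩ := Finset.mem_filter.mp hx
          have hle : prodP k Q y ≤ prodP k Q x := by
            by_contra hcon
            push_neg at hcon
            exact absurd (hg.2 y hy x hx1 hcon) (by omega)
          calc (1:ℝ) = 1 ^ α := (Real.one_rpow α).symm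
            _ ≤ (prodP k Q x / prodP k Q y) ^ α :=
              Real.rpow_le_rpow zero_le_one ((one_le_div hqy).mpr hle) hα0.le
        have h2 : ((g y:ℝ)) = ∑ _x ∈ (seqSet m k).filter (fun x => g x ≤ g y), (1:ℝ) := by
          rw [Finset.sum_const, nsmul_eq_mul, mul_one, hcount]
        rw [h2]
        calc ∑ _x ∈ (seqSet m k).filter (fun x => g x ≤ g y), (1:ℝ)
            ≤ ∑ x ∈ (seqSet m k).filter (fun x => g x ≤ g y), (prodP k Q x / prodP k Q y) ^ α :=
              Finset.sum_le_sum h1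
          _ = ∑ x ∈ (seqSet m k).filter (fun x => g x ≤ g y), prodP k Q x ^ α / prodP k Q y ^ α :=
              Finset.sum_congr rfl (fun x _ => Real.div_rpow (hq0 x) (hq0 y) α)
          _ = (∑ x ∈ (seqSet m k).filter (fun x => g x ≤ g y), prodP k Q x ^ α) / prodP k Q y ^ α := by
              rw [← Finset.sum_div]
          _ ≤ S / prodP k Q y ^ α := by
              have h6 : ∑ x ∈ (seqSet m k).filter (fun x => g x ≤ g y), prodP k Q x ^ α ≤ S :=
                Finset.sum_le_sum_of_subset_of_nonneg (Finset.filter_subset _ _)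
                  (fun x _ _ => Real.rpow_nonneg (hq0 x) α)
              gcongr
      have hgy0 : (0:ℝ) ≤ (g y : ℝ) := Nat.cast_nonneg _
      have h7 : ((g y:ℝ)) ^ ρ ≤ (S / prodP k Q y ^ α) ^ ρ :=
        Real.rpow_le_rpow hgy0 hcard_le hρ.le
      have h8 : prodP k Q y * ((g y:ℝ)) ^ ρ ≤ prodP k Q y * (S / prodP k Q y ^ α) ^ ρ :=
        mul_le_mul_of_nonneg_left h7 (hq0 y)
      have e : prodP k Q y * (S / prodP k Q y ^ α) ^ ρ = prodP k Q y ^ α * S ^ ρ := by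
        rw [Real.div_rpow hSpos.le hpyα.le, ← Real.rpow_mul (hq0 y)]
        have e2 : prodP k Q y ^ α * prodP k Q y ^ (α * ρ) = prodP k Q y := by
          rw [← Real.rpow_add hqy]
          have e3 : α + α * ρ = 1 := by linear_combination hαρ
          rw [e3, Real.rpow_one]
        have hne : prodP k Q y ^ (α * ρ) ≠ 0 := ne_of_gt (Real.rpow_pos_of_pos hqy _)
        field_simp
        linear_combination (-1) * e2
      rw [e] at h8
      exact h8
    · have hq : prodP k Q y = 0 := le_antisymm (not_lt.mp hqy) (hq0 y)
      rw [hq, zero_mul, Real.zero_rpow (ne_of_gt hα0), zero_mul]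
  calc gmoment m k Q g ρ ≤ ∑ y ∈ seqSet m k, prodP k Q y ^ α * S ^ ρ :=
        Finset.sum_le_sum key
    _ = S * S ^ ρ := by rw [← Finset.sum_mul]
    _ = S ^ (1+ρ) := by
        rw [Real.rpow_add hSpos 1 ρ, Real.rpow_one]

lemma partC (n m : ℕ) (hm : 2 ≤ m) (hmn : m < n) (P : ℕ → ℝ)
    (hP : IsPMF n P) (hdec : DecOn n P) (f : ℕ → ℕ)
    (hf : ∀ i ∈ Finset.Icc 1 n, f i ∈ Finset.Icc 1 m)
    (α : ℝ) (hα0 : 0 < α) (hα1 : α < 1) :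
    ∑ j ∈ Finset.Icc 1 m, push n f P j ^ α ≤ ∑ j ∈ Finset.Icc 1 m, tildeX n m P j ^ α := by
  classical
  obtain ⟨hpos, hsum⟩ := hP
  have hm2 : (2:ℝ) ≤ (m:ℝ) := by exact_mod_cast hm
  have hm0 : (0:ℝ) < m := by linarith
  have hQ0 : ∀ j, 0 ≤ push n f P j := by
    intro j
    apply Finset.sum_nonneg
    intro i hi
    exact (hpos i (Finset.mem_of_mem_filter i hi)).le
  have hQsum : ∑ j ∈ Finset.Icc 1 m, push n f P j = 1 := by
    rw [show (∑ j ∈ Finset.Icc 1 m, push n f P j)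
        = ∑ j ∈ Finset.Icc 1 m, ∑ i ∈ (Finset.Icc 1 n).filter (fun i => f i = j), P i from rfl]
    rw [Finset.sum_fiberwise_of_maps_to hf P]
    exact hsum
  by_cases hP1 : P 1 < 1 / (m:ℝ)
  · -- Case 1 : uniform tildeX
    have hTX : ∀ j, tildeX n m P j = 1/(m:ℝ) := fun j => if_pos hP1
    have hconj : Real.HolderConjugate α⁻¹ (1-α)⁻¹ := by
      rw [Real.holderConjugate_iff]; constructor
      · rw [← one_div]
        exact (one_lt_div hα0).mpr hα1
      · rw [inv_inv, inv_inv]; ring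
    have hold := Real.inner_le_Lp_mul_Lq_of_nonneg (Finset.Icc 1 m)
      (f := fun j => push n f P j ^ α) (g := fun _ => (1:ℝ)) hconj
      (fun j _ => Real.rpow_nonneg (hQ0 j) α) (fun j _ => zero_le_one)
    simp only [mul_one] at hold
    have e1 : ∑ j ∈ Finset.Icc 1 m, (push n f P j ^ α) ^ (α⁻¹) = 1 := by
      have e0 : ∀ j ∈ Finset.Icc 1 m, (push n f P j ^ α) ^ (α⁻¹) = push n f P j := by
        intro j _
        rw [← Real.rpow_mul (hQ0 j), mul_inv_cancel₀ (ne_of_gt hα0), Real.rpow_one]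
      rw [Finset.sum_congr rfl e0, hQsum]
    have e2 : ∑ j ∈ Finset.Icc 1 m, ((1:ℝ)) ^ ((1-α)⁻¹) = (m:ℝ) := by
      simp [Nat.card_Icc]
    rw [e1, e2, Real.one_rpow, one_mul] at hold
    have e3 : 1/((1-α)⁻¹) = 1 - α := by rw [one_div, inv_inv]
    rw [e3] at hold
    calc ∑ j ∈ Finset.Icc 1 m, push n f P j ^ α ≤ (m:ℝ) ^ (1-α) := hold
      _ = ∑ j ∈ Finset.Icc 1 m, tildeX n m P j ^ α := by
          rw [Finset.sum_congr rfl (fun j _ => by rw [hTX j]), Finset.sum_const, Nat.card_Icc]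
          rw [show m + 1 - 1 = m from rfl, nsmul_eq_mul, one_div,
            Real.inv_rpow hm0.le, Real.rpow_sub hm0, Real.rpow_one, div_eq_mul_inv]
  · -- Case 2
    have hP1' : 1 / (m:ℝ) ≤ P 1 := not_lt.mp hP1
    have hx : ∀ j, tildeX n m P j
        = if j ≤ nStar n m P then P j
          else ((m:ℝ) - (nStar n m P : ℝ))⁻¹ * ∑ jj ∈ Finset.Icc (nStar n m P + 1) n, P jj :=
      fun j => if_neg hP1
    have h1K : 1 ∈ {i : ℕ | 1 ≤ i ∧ i ≤ m - 1 ∧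
        ((m : ℝ) - (i : ℝ))⁻¹ * ∑ j ∈ Finset.Icc (i + 1) n, P j ≤ P i} := by
      refine ⟨le_rfl, by omega, ?_⟩
      have hsplit := sum_Icc_split P 1 n (by omega)
      rw [Finset.Icc_self, Finset.sum_singleton, hsum] at hsplit
      have hP1m : 1 ≤ P 1 * (m:ℝ) := (div_le_iff₀ hm0).mp hP1'
      have hkey : ∑ j ∈ Finset.Icc (1+1) n, P j ≤ ((m:ℝ) - 1) * P 1 := by nlinarith
      have hinv0 : (0:ℝ) ≤ ((m:ℝ) - 1)⁻¹ := by
        apply inv_nonneg.mpr; linarith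
      push_cast
      calc ((m:ℝ) - 1)⁻¹ * ∑ j ∈ Finset.Icc (1+1) n, P j
          ≤ ((m:ℝ) - 1)⁻¹ * (((m:ℝ) - 1) * P 1) := mul_le_mul_of_nonneg_left hkey hinv0
        _ = P 1 := by
            rw [← mul_assoc, inv_mul_cancel₀ (by linarith), one_mul]
    have hbdd : BddAbove {i : ℕ | 1 ≤ i ∧ i ≤ m - 1 ∧
        ((m : ℝ) - (i : ℝ))⁻¹ * ∑ j ∈ Finset.Icc (i + 1) n, P j ≤ P i} :=
      ⟨m - 1, fun i hi => hi.2.1⟩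
    have hnsK := Nat.sSup_mem ⟨1, h1K⟩ hbdd
    obtain ⟨hs1, hs2, hsc⟩ : 1 ≤ nStar n m P ∧ nStar n m P ≤ m - 1 ∧
        ((m : ℝ) - (nStar n m P : ℝ))⁻¹ * ∑ j ∈ Finset.Icc (nStar n m P + 1) n, P j
          ≤ P (nStar n m P) := hnsK
    set s := nStar n m P with hsdef
    set R := ∑ j ∈ Finset.Icc (s + 1) n, P j with hRdef
    set c := ((m:ℝ) - (s:ℝ))⁻¹ * R with hcdef
    have hsm : s + 1 ≤ m := by omega
    have hsn : s < n := by omega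
    have hms1 : (1:ℝ) ≤ (m:ℝ) - (s:ℝ) := by
      have h : (s:ℝ) + 1 ≤ (m:ℝ) := by exact_mod_cast hsm
      linarith
    have hms0 : (0:ℝ) < (m:ℝ) - (s:ℝ) := by linarith
    have hRpos : 0 < R := by
      rw [hRdef]
      apply Finset.sum_pos
      · intro i hi
        have h := Finset.mem_Icc.mp hi
        exact hpos i (Finset.mem_Icc.mpr ⟨by omega, h.2⟩)
      · exact ⟨s+1, Finset.mem_Icc.mpr ⟨le_rfl, by omega⟩⟩
    have hc0 : 0 < c := mul_pos (inv_pos.mpr hms0) hRpos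
    have hcs : c ≤ P s := hsc
    set xf : ℕ → ℝ := fun j => if j ≤ s then P j else c with hxf
    have hx2 : ∀ j, tildeX n m P j = xf j := fun j => hx j
    have hxpos : ∀ j, 1 ≤ j → 0 < xf j := by
      intro j h1
      simp only [hxf]
      split
      · next hjs => exact hpos j (Finset.mem_Icc.mpr ⟨h1, by omega⟩)
      · exact hc0
    have hPanti : ∀ i j, 1 ≤ i → i ≤ j → j ≤ n → P j ≤ P i := by
      intro i j h1 h2 h3
      exact hdec i (Finset.mem_Icc.mpr ⟨h1, by omega⟩) j (Finset.mem_Icc.mpr ⟨by omega, h3⟩) h2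
    have hxanti : ∀ i j, 1 ≤ i → i ≤ j → xf j ≤ xf i := by
      intro i j h1 h2
      simp only [hxf]
      by_cases hj : j ≤ s
      · rw [if_pos hj, if_pos (by omega : i ≤ s)]
        exact hPanti i j h1 h2 (by omega)
      · rw [if_neg hj]
        by_cases hi : i ≤ s
        · rw [if_pos hi]
          exact le_trans hcs (hPanti i s h1 hi (by omega))
        · rw [if_neg hi]
    have hmc : ((m:ℝ) - (s:ℝ)) * c = R := by
      rw [hcdef, ← mul_assoc, mul_inv_cancel₀ (ne_of_gt hms0), one_mul]
    have hPR : ∑ j ∈ Finset.Icc 1 s, P j + R = 1 := by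
      rw [hRdef, ← sum_Icc_split P s n (by omega), hsum]
    have hxsum_t : ∀ t, s ≤ t → ∑ j ∈ Finset.Icc 1 t, xf j
        = ∑ j ∈ Finset.Icc 1 s, P j + ((t:ℝ) - (s:ℝ)) * c := by
      intro t hst
      rw [sum_Icc_split xf s t hst]
      congr 1
      · apply Finset.sum_congr rfl
        intro j hj
        have h := Finset.mem_Icc.mp hj
        simp only [hxf]; rw [if_pos h.2]
      · rw [show (∑ j ∈ Finset.Icc (s+1) t, xf j) = ∑ j ∈ Finset.Icc (s+1) t, c from
          Finset.sum_congr rfl (fun j hj => by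
            have h := Finset.mem_Icc.mp hj
            simp only [hxf]; rw [if_neg (by omega)])]
        rw [Finset.sum_const, Nat.card_Icc, nsmul_eq_mul]
        congr 1
        rw [show t + 1 - (s + 1) = t - s from by omega, Nat.cast_sub hst]
    have hxsum : ∑ j ∈ Finset.Icc 1 m, xf j = 1 := by
      rw [hxsum_t m (by omega), hmc, hPR]
    obtain ⟨v, hanti, hv0, hG, hsub⟩ := exists_sorted m (push n f P) hQ0
    have hvsum : ∑ i ∈ Finset.range m, v i = 1 := by
      have h := hG (fun x => x)
      simpa using h.trans hQsum
    have hvα : ∑ i ∈ Finset.range m, v i ^ α = ∑ j ∈ Finset.Icc 1 m, push n f P j ^ α :=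
      hG (fun x => x ^ α)
    have claim1 : ∀ t, t ≤ m → ∑ j ∈ Finset.Icc 1 t, P j ≤ ∑ i ∈ Finset.range t, v i := by
      intro t ht
      set S₀ := (Finset.Icc 1 t).image f with hS₀
      have hS₀sub : S₀ ⊆ Finset.Icc 1 m := by
        intro j hj
        obtain ⟨i, hi, rfl⟩ := Finset.mem_image.mp hj
        have h := Finset.mem_Icc.mp hi
        exact hf i (Finset.mem_Icc.mpr ⟨h.1, by omega⟩)
      have hScard : S₀.card ≤ t :=
        le_trans Finset.card_image_le (le_of_eq (by rw [Nat.card_Icc]; omega))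
      obtain ⟨S', hcard', hsum'⟩ := hsub S₀ hS₀sub
      have hPS : ∑ j ∈ Finset.Icc 1 t, P j ≤ ∑ j ∈ S₀, push n f P j := by
        have e1 : ∑ j ∈ S₀, ∑ i ∈ (Finset.Icc 1 t).filter (fun i => f i = j), P i
            = ∑ i ∈ Finset.Icc 1 t, P i :=
          Finset.sum_fiberwise_of_maps_to (fun i hi => Finset.mem_image_of_mem f hi) P
        rw [← e1]
        apply Finset.sum_le_sum
        intro j _
        apply Finset.sum_le_sum_of_subset_of_nonneg
        · exact Finset.filter_subset_filter _ (Finset.Icc_subset_Icc_right (by omega))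
        · intro i hi _
          exact (hpos i (Finset.mem_of_mem_filter i hi)).le
      calc ∑ j ∈ Finset.Icc 1 t, P j ≤ ∑ j ∈ S₀, push n f P j := hPS
        _ = ∑ i ∈ S', v i := hsum'.symm
        _ ≤ ∑ i ∈ Finset.range t, v i := sum_le_top v hanti hv0 S' t (by omega)
    have claim2 : ∀ t, s ≤ t → t ≤ m →
        ∑ j ∈ Finset.Icc 1 s, P j + ((t:ℝ) - (s:ℝ)) * c ≤ ∑ i ∈ Finset.range t, v i := by
      intro t hst htm
      by_cases hteq : t = m
      · subst hteq
        rw [hvsum]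
        have e : ∑ j ∈ Finset.Icc 1 s, P j + ((t:ℝ) - (s:ℝ)) * c = 1 := by
          rw [hmc]; exact hPR
        linarith
      · have htm2 : t < m := by omega
        have hsplit1 : ∑ i ∈ Finset.range t, v i + ∑ i ∈ Finset.Ico t m, v i
            = ∑ i ∈ Finset.range m, v i := by
          rw [Finset.range_eq_Ico, Finset.range_eq_Ico]
          exact Finset.sum_Ico_consecutive v (Nat.zero_le t) (le_of_lt htm2)
        have hsplit2 : ∑ i ∈ Finset.range s, v i + ∑ i ∈ Finset.Ico s m, v i
            = ∑ i ∈ Finset.range m, v i := by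
          rw [Finset.range_eq_Ico, Finset.range_eq_Ico]
          exact Finset.sum_Ico_consecutive v (Nat.zero_le s) (by omega)
        have hsplit3 : ∑ i ∈ Finset.Ico s t, v i + ∑ i ∈ Finset.Ico t m, v i
            = ∑ i ∈ Finset.Ico s m, v i := Finset.sum_Ico_consecutive v hst (le_of_lt htm2)
        have hc1 := claim1 s (by omega)
        have hB : ∑ i ∈ Finset.Ico t m, v i ≤ ((m:ℝ) - (t:ℝ)) * v t := by
          have h := Finset.sum_le_card_nsmul (Finset.Ico t m) v (v t)
            (fun i hi => hanti (Finset.mem_Ico.mp hi).1)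
          rw [Nat.card_Ico, nsmul_eq_mul, Nat.cast_sub (le_of_lt htm2)] at h
          exact h
        have hM : ((t:ℝ) - (s:ℝ)) * v t ≤ ∑ i ∈ Finset.Ico s t, v i := by
          have h := Finset.card_nsmul_le_sum (Finset.Ico s t) v (v t)
            (fun i hi => hanti (le_of_lt (Finset.mem_Ico.mp hi).2))
          rw [Nat.card_Ico, nsmul_eq_mul, Nat.cast_sub hst] at h
          exact h
        have hvt : 0 ≤ v t := hv0 t
        have hmt : (0:ℝ) < (m:ℝ) - (t:ℝ) := by
          have h : (t:ℝ) + 1 ≤ (m:ℝ) := by exact_mod_cast htm2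
          linarith
        have htsR : (0:ℝ) ≤ (t:ℝ) - (s:ℝ) := by
          have h : (s:ℝ) ≤ (t:ℝ) := by exact_mod_cast hst
          linarith
        have hMB : ∑ i ∈ Finset.Ico s t, v i + ∑ i ∈ Finset.Ico t m, v i
            ≤ ((m:ℝ) - (s:ℝ)) * c := by
          rw [hsplit3, hmc]
          have h := hsplit2
          rw [hvsum] at h
          linarith
        set B := ∑ i ∈ Finset.Ico t m, v i with hB0
        set M := ∑ i ∈ Finset.Ico s t, v i with hM0
        have hBc : B ≤ ((m:ℝ) - (t:ℝ)) * c := by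
          have h1 : ((t:ℝ) - (s:ℝ)) * B ≤ ((t:ℝ) - (s:ℝ)) * (((m:ℝ) - (t:ℝ)) * v t) :=
            mul_le_mul_of_nonneg_left hB htsR
          have h2 : ((m:ℝ) - (t:ℝ)) * (((t:ℝ) - (s:ℝ)) * v t) ≤ ((m:ℝ) - (t:ℝ)) * M :=
            mul_le_mul_of_nonneg_left hM hmt.le
          have h3 : ((m:ℝ) - (t:ℝ)) * (M + B) ≤ ((m:ℝ) - (t:ℝ)) * (((m:ℝ) - (s:ℝ)) * c) :=
            mul_le_mul_of_nonneg_left hMB hmt.le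
          rw [show ((m:ℝ) - (s:ℝ)) = ((m:ℝ) - (t:ℝ)) + ((t:ℝ) - (s:ℝ)) from by ring] at h3
          exact ratio_bound hmt htsR h1 h2 h3
        have e : ((m:ℝ) - (s:ℝ)) * c = ((m:ℝ) - (t:ℝ)) * c + ((t:ℝ) - (s:ℝ)) * c := by ring
        rw [hvsum] at hsplit1
        linarith
    have hsm1 : 1 ≤ m := by omega
    set a : ℕ → ℝ := fun i => α * xf (i+1) ^ (α - 1) with ha
    set d : ℕ → ℝ := fun i => v i - xf (i+1) with hd
    have hamono : ∀ i, i + 1 < m → a i ≤ a (i+1) := by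
      intro i hi
      simp only [ha]
      apply mul_le_mul_of_nonneg_left ?_ hα0.le
      exact Real.rpow_le_rpow_of_nonpos (hxpos (i+1+1) (by omega))
        (hxanti (i+1) (i+1+1) (by omega) (by omega)) (by linarith)
    have hDt : ∀ t, t ≤ m → 0 ≤ ∑ i ∈ Finset.range t, d i := by
      intro t ht
      simp only [hd]
      rw [Finset.sum_sub_distrib, ← sum_Icc_one_eq_range' xf t]
      by_cases hts : t ≤ s
      · have h := claim1 t ht
        have e : ∑ j ∈ Finset.Icc 1 t, xf j = ∑ j ∈ Finset.Icc 1 t, P j :=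
          Finset.sum_congr rfl (fun j hj => by
            have hj2 := Finset.mem_Icc.mp hj
            simp only [hxf]; rw [if_pos (by omega : j ≤ s)])
        rw [e]
        linarith
      · have hst : s ≤ t := by omega
        rw [hxsum_t t hst]
        linarith [claim2 t hst ht]
    have hDm : ∑ i ∈ Finset.range m, d i = 0 := by
      simp only [hd]
      rw [Finset.sum_sub_distrib, ← sum_Icc_one_eq_range' xf m, hxsum, hvsum]
      ring
    have habel := abel_le a d m hsm1 hamono hDt
    rw [hDm, mul_zero] at habel
    have htang : ∀ i ∈ Finset.range m, v i ^ α ≤ xf (i+1) ^ α + a i * d i := by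
      intro i _
      simp only [ha, hd]
      exact tangent_line hα0 hα1 (hxpos (i+1) (by omega)) (hv0 i)
    calc ∑ j ∈ Finset.Icc 1 m, push n f P j ^ α = ∑ i ∈ Finset.range m, v i ^ α := hvα.symm
      _ ≤ ∑ i ∈ Finset.range m, (xf (i+1) ^ α + a i * d i) := Finset.sum_le_sum htang
      _ = ∑ i ∈ Finset.range m, xf (i+1) ^ α + ∑ i ∈ Finset.range m, a i * d i :=
          Finset.sum_add_distrib
      _ ≤ ∑ i ∈ Finset.range m, xf (i+1) ^ α := by linarith
      _ = ∑ j ∈ Finset.Icc 1 m, xf j ^ α :=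
          (sum_Icc_one_eq_range' (fun j => xf j ^ α) m).symm
      _ = ∑ j ∈ Finset.Icc 1 m, tildeX n m P j ^ α := by
          apply Finset.sum_congr rfl
          intro j _
          rw [hx2 j]

theorem stmt17 (n m k : ℕ) (hm : 2 ≤ m) (hmn : m < n) (hk : 1 ≤ k)
    (P : ℕ → ℝ) (hP : IsPMF n P) (hdec : DecOn n P)
    (f : ℕ → ℕ) (hf : ∀ i ∈ Finset.Icc 1 n, f i ∈ Finset.Icc 1 m)
    (gX : (Fin k → ℕ) → ℕ) (hgX : IsRanking n k P gX)
    (gY : (Fin k → ℕ) → ℕ) (hgY : IsRanking m k (push n f P) gY) :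
    ∀ ρ : ℝ, 0 < ρ →
      ρ * (renyiH n (1 / (1 + ρ)) P - renyiH m (1 / (1 + ρ)) (tildeX n m P))
          - (ρ / (k : ℝ)) * Real.log (1 + (k : ℝ) * Real.log n)
        ≤ (1 / (k : ℝ)) *
            Real.log (gmoment n k P gX ρ / gmoment m k (push n f P) gY ρ) := by
  intro ρ hρ
  classical
  have h1ρ : (0:ℝ) < 1 + ρ := by linarith
  have hαne : (1:ℝ)/(1+ρ) ≠ 1 := by
    have h : (1:ℝ)/(1+ρ) < 1 := by rw [div_lt_one h1ρ]; linarith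
    exact ne_of_lt h
  set α := (1:ℝ)/(1+ρ) with hα
  have hα0 : 0 < α := by positivity
  have hαlt : α < 1 := by rw [hα, div_lt_one h1ρ]; linarith
  obtain ⟨hpos, hsum⟩ := hP
  have hn1 : 1 ≤ n := by omega
  have hk0 : (0:ℝ) < (k:ℝ) := by exact_mod_cast Nat.lt_of_lt_of_le Nat.zero_lt_one hk
  simp only [renyiH]
  rw [if_neg hαne, if_neg hαne]
  set L := Real.log (1 + (k:ℝ) * Real.log n) with hL
  set SP := ∑ i ∈ Finset.Icc 1 n, P i ^ α with hSP
  set SX := ∑ i ∈ Finset.Icc 1 m, tildeX n m P i ^ α with hSX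
  set Q := push n f P with hQdef
  have hQ0 : ∀ j, 0 ≤ Q j := by
    intro j
    apply Finset.sum_nonneg
    intro i hi
    exact (hpos i (Finset.mem_of_mem_filter i hi)).le
  have hQsum : ∑ j ∈ Finset.Icc 1 m, Q j = 1 := by
    rw [show (∑ j ∈ Finset.Icc 1 m, Q j)
        = ∑ j ∈ Finset.Icc 1 m, ∑ i ∈ (Finset.Icc 1 n).filter (fun i => f i = j), P i from rfl]
    rw [Finset.sum_fiberwise_of_maps_to hf P]
    exact hsum
  set SY := ∑ j ∈ Finset.Icc 1 m, Q j ^ α with hSY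
  have hSYpos : 0 < SY := by
    have hf1 : f 1 ∈ Finset.Icc 1 m := hf 1 (Finset.mem_Icc.mpr ⟨le_rfl, hn1⟩)
    have hQf1 : 0 < Q (f 1) := by
      apply Finset.sum_pos
      · intro i hi
        exact hpos i (Finset.mem_of_mem_filter i hi)
      · exact ⟨1, Finset.mem_filter.mpr ⟨Finset.mem_Icc.mpr ⟨le_rfl, hn1⟩, rfl⟩⟩
    have h1 : Q (f 1) ^ α ≤ SY :=
      Finset.single_le_sum (fun j _ => Real.rpow_nonneg (hQ0 j) α) hf1
    exact lt_of_lt_of_le (Real.rpow_pos_of_pos hQf1 α) h1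
  have hCC : SY ≤ SX := partC n m hm hmn P ⟨hpos, hsum⟩ hdec f hf α hα0 hαlt
  have hSXpos : 0 < SX := lt_of_lt_of_le hSYpos hCC
  have hA := partA n k hn1 P hpos gX hgX ρ hρ
  rw [← hα, ← hSP, ← hL] at hA
  have hq0 : ∀ x : Fin k → ℕ, 0 ≤ prodP k Q x :=
    fun x => Finset.prod_nonneg (fun i _ => hQ0 _)
  have hA1 : (1:ℝ) ≤ gmoment n k P gX ρ :=
    gmoment_ge_one n k P (fun x hx => Finset.prod_nonneg
      (fun i _ => (hpos _ (Fintype.mem_piFinset.mp hx i)).le)) hsum gX hgX ρ hρ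
  have hB1 : (1:ℝ) ≤ gmoment m k Q gY ρ :=
    gmoment_ge_one m k Q (fun x _ => hq0 x) hQsum gY hgY ρ hρ
  have hApos : (0:ℝ) < gmoment n k P gX ρ := lt_of_lt_of_le one_pos hA1
  have hBpos : (0:ℝ) < gmoment m k Q gY ρ := lt_of_lt_of_le one_pos hB1
  have hSYk : ∑ x ∈ seqSet m k, prodP k Q x ^ α = SY ^ k :=
    sum_prod_rpow m k Q (fun j _ => hQ0 j) α
  have hSkpos : 0 < ∑ x ∈ seqSet m k, prodP k Q x ^ α := by
    rw [hSYk]; exact pow_pos hSYpos k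
  have hSkpos' := hSkpos
  rw [hα] at hSkpos'
  have hB := partB m k Q hQ0 gY hgY ρ hρ hSkpos'
  rw [← hα, hSYk] at hB
  have hlogB : Real.log (gmoment m k Q gY ρ) ≤ (k:ℝ) * (1+ρ) * Real.log SX := by
    have h1 : Real.log (gmoment m k Q gY ρ) ≤ Real.log ((SY ^ k) ^ (1+ρ)) :=
      Real.log_le_log hBpos hB
    rw [Real.log_rpow (pow_pos hSYpos k), Real.log_pow] at h1
    have h2 : Real.log SY ≤ Real.log SX := Real.log_le_log hSYpos hCC
    calc Real.log (gmoment m k Q gY ρ) ≤ (1+ρ) * ((k:ℝ) * Real.log SY) := h1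
      _ ≤ (1+ρ) * ((k:ℝ) * Real.log SX) := by
          apply mul_le_mul_of_nonneg_left ?_ h1ρ.le
          exact mul_le_mul_of_nonneg_left h2 hk0.le
      _ = (k:ℝ) * (1+ρ) * Real.log SX := by ring
  rw [Real.log_div (ne_of_gt hApos) (ne_of_gt hBpos)]
  have hρα : ρ * (1-α)⁻¹ = 1 + ρ := by
    rw [hα]
    have h : (1:ℝ) - 1/(1+ρ) = ρ/(1+ρ) := by field_simp; ring
    rw [h]
    field_simp
  rw [show (1/(k:ℝ)) * (Real.log (gmoment n k P gX ρ) - Real.log (gmoment m k Q gY ρ))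
      = (Real.log (gmoment n k P gX ρ) - Real.log (gmoment m k Q gY ρ))/(k:ℝ) from by ring]
  rw [le_div_iff₀ hk0]
  have e : (ρ * ((1-α)⁻¹ * Real.log SP - (1-α)⁻¹ * Real.log SX) - (ρ/(k:ℝ)) * L) * (k:ℝ)
      = (k:ℝ)*(ρ*(1-α)⁻¹)*Real.log SP - (k:ℝ)*(ρ*(1-α)⁻¹)*Real.log SX - ρ*L := by
    field_simp
  rw [e, hρα]
  linarith [hA, hlogB]
end

section
/- Let n > m ≥ 2 and k ≥ 1 be integers, let X_1,…,X_k be i.i.d. random variables with X_1 ∼ P_X strictly positive on a set X with |X| = n and P_X(1) ≥ … ≥ P_X(n), and let X̃_m be as follows: if P_X(1) < 1/m, X̃_m is uniform on {1,…,m}; otherwise P_{X̃_m}(i) = P_X(i) for i ≤ n* and P_{X̃_m}(i) = (1/(m−n*))·Σ_{j=n*+1}^{n} P_X(j) for n* < i ≤ m, where n* is the maximal integer i ∈ {1,…,m−1} with P_X(i) ≥ (1/(m−i))·Σ_{j=i+1}^{n} P_X(j). Define v(α) := log((α−1)/(2^α−2)) − (α/(α−1))·log(α/(2^α−1)) for α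 ∈ (0,1)∪(1,∞), with v(1) := log(2/(e·log 2)). Then there exists a deterministic function f* ∈ F_{n,m} such that, setting Y_i = f*(X_i) for all i, and letting g_{X^k}, g_{Y^k} be ranking functions of X^k and Y^k, for every ρ > 0: (1/k)·log( E[g_{X^k}(X^k)^ρ] / E[g_{Y^k}(Y^k)^ρ] ) ≤ ρ·[H_{1/(1+ρ)}(X) − H_{1/(1+ρ)}(X̃_m) + v(1/(1+ρ))] + (ρ/k)·log(1 + k·log m). -/
open Finset

namespace Aux18


noncomputable def wc (α : ℝ) : ℝ :=
  (((2:ℝ)^α - 1)/α)^α * ((2 - (2:ℝ)^α)/(1-α))^(1-α)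

lemma one_lt_two_rpow {α : ℝ} (h0 : 0 < α) : 1 < (2:ℝ)^α := by
  have := Real.rpow_lt_rpow_of_exponent_lt (by norm_num : (1:ℝ) < 2) h0
  simpa using this

lemma two_rpow_lt_two {α : ℝ} (h1 : α < 1) : (2:ℝ)^α < 2 := by
  have := Real.rpow_lt_rpow_of_exponent_lt (by norm_num : (1:ℝ) < 2) h1
  simpa using this

lemma wc_pos {α : ℝ} (h0 : 0 < α) (h1 : α < 1) : 0 < wc α := by
  have h2 := one_lt_two_rpow h0
  have h3 := two_rpow_lt_two h1
  have e1 : (0:ℝ) < ((2:ℝ)^α - 1)/α := div_pos (by linarith) h0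
  have e2 : (0:ℝ) < (2 - (2:ℝ)^α)/(1-α) := div_pos (by linarith) (by linarith)
  unfold wc
  positivity

lemma wc_le_one {α : ℝ} (h0 : 0 < α) (h1 : α < 1) : wc α ≤ 1 := by
  have h2 := one_lt_two_rpow h0
  have h3 := two_rpow_lt_two h1
  have e1 : (0:ℝ) ≤ ((2:ℝ)^α - 1)/α := le_of_lt (div_pos (by linarith) h0)
  have e2 : (0:ℝ) ≤ (2 - (2:ℝ)^α)/(1-α) := le_of_lt (div_pos (by linarith) (by linarith))
  have := Real.geom_mean_le_arith_mean2_weighted (le_of_lt h0) (by linarith : (0:ℝ) ≤ 1-α)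
    e1 e2 (by ring)
  calc wc α ≤ α * (((2:ℝ)^α - 1)/α) + (1-α) * ((2 - (2:ℝ)^α)/(1-α)) := this
    _ = 1 := by
      rw [mul_div_cancel₀ _ (by linarith : α ≠ 0), mul_div_cancel₀ _ (by linarith : (1:ℝ)-α ≠ 0)]
      ring

lemma log_wc {α : ℝ} (h0 : 0 < α) (h1 : α < 1) :
    Real.log (wc α) = -((1-α) * vFun α) := by
  have h2 := one_lt_two_rpow h0
  have h3 := two_rpow_lt_two h1
  have e1 : (0:ℝ) < ((2:ℝ)^α - 1)/α := div_pos (by linarith) h0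
  have e2 : (0:ℝ) < (2 - (2:ℝ)^α)/(1-α) := div_pos (by linarith) (by linarith)
  have hne : α ≠ 1 := by linarith
  rw [vFun, if_neg hne]
  rw [wc, Real.log_mul (by positivity) (by positivity), Real.log_rpow e1, Real.log_rpow e2]
  rw [Real.log_div (by linarith : (2:ℝ)^α - 1 ≠ 0) (by linarith : α ≠ 0),
      Real.log_div (by linarith : 2 - (2:ℝ)^α ≠ 0) (by linarith : (1:ℝ) - α ≠ 0),
      Real.log_div (by linarith : α - 1 ≠ 0) (by linarith : (2:ℝ)^α - 2 ≠ 0),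
      Real.log_div (by linarith : α ≠ 0) (by linarith : (2:ℝ)^α - 1 ≠ 0)]
  rw [show α - 1 = -(1-α) by ring, Real.log_neg_eq_log,
      show (2:ℝ)^α - 2 = -(2 - (2:ℝ)^α) by ring, Real.log_neg_eq_log]
  have h4 : α - 1 ≠ 0 := by linarith
  field_simp
  ring

lemma chord {α x : ℝ} (h0 : 0 < α) (h1 : α < 1) (hx1 : 1 ≤ x) (hx2 : x ≤ 2) :
    ((2:ℝ)^α - 1) * x + (2 - (2:ℝ)^α) ≤ x ^ α := by
  have hc := (Real.concaveOn_rpow h0.le h1.le).2 (Set.mem_Ici.mpr (by norm_num : (0:ℝ) ≤ 1))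
      (Set.mem_Ici.mpr (by norm_num : (0:ℝ) ≤ 2)) (by linarith : (0:ℝ) ≤ 2 - x)
      (by linarith : (0:ℝ) ≤ x - 1) (by ring)
  simp only [smul_eq_mul, mul_one, Real.one_rpow] at hc
  calc ((2:ℝ)^α - 1) * x + (2 - (2:ℝ)^α) = (2-x) * 1 + (x-1) * (2:ℝ)^α := by ring
    _ ≤ ((2-x) * 1 + (x-1) * 2) ^ α := by simpa using hc
    _ = x ^ α := by norm_num; ring_nf

/-- minimum of `A t^(α-1) + B t^α` over `t > 0`. -/
lemma Fmin {α A B t : ℝ} (h0 : 0 < α) (h1 : α < 1) (hA : 0 < A) (hB : 0 < B) (ht : 0 < t) :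
    A^α * B^(1-α) * (α^α)⁻¹ * (((1-α):ℝ)^(1-α))⁻¹ ≤ A * t^(α-1) + B * t^α := by
  have h1' : (0:ℝ) < 1 - α := by linarith
  have p1 : (0:ℝ) < A * t^(α-1) / α := by positivity
  have p2 : (0:ℝ) < B * t^α / (1-α) := by positivity
  have hg := Real.geom_mean_le_arith_mean2_weighted h0.le h1'.le p1.le p2.le
    (by ring : α + (1-α) = 1)
  have e : (A * t^(α-1)/α)^α * (B * t^α/(1-α))^(1-α)
      = A^α * B^(1-α) * (α^α)⁻¹ * (((1-α):ℝ)^(1-α))⁻¹ := by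
    rw [Real.div_rpow (by positivity) h0.le, Real.div_rpow (by positivity) h1'.le,
        Real.mul_rpow hA.le (by positivity), Real.mul_rpow hB.le (by positivity),
        ← Real.rpow_mul ht.le, ← Real.rpow_mul ht.le]
    rw [div_mul_div_comm]
    have : t ^ ((α-1)*α) * t ^ (α * (1-α)) = 1 := by
      rw [← Real.rpow_add ht, show (α-1)*α + α*(1-α) = 0 by ring, Real.rpow_zero]
    field_simp
    rw [mul_comm α (α - 1)]
    exact this
  calc A^α * B^(1-α) * (α^α)⁻¹ * (((1-α):ℝ)^(1-α))⁻¹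
      = (A * t^(α-1)/α)^α * (B * t^α/(1-α))^(1-α) := e.symm
    _ ≤ α * (A * t^(α-1)/α) + (1-α) * (B * t^α/(1-α)) := hg
    _ = A * t^(α-1) + B * t^α := by field_simp

/-- Key lower bound on `∑ q^α` for ratio-2 bounded positive weights. -/
lemma sum_rpow_lower {α : ℝ} (h0 : 0 < α) (h1 : α < 1) (s : Finset ℕ) (hs : s.Nonempty)
    (q : ℕ → ℝ) (hq : ∀ i ∈ s, 0 < q i) (hr : ∀ i ∈ s, ∀ j ∈ s, q i ≤ 2 * q j) :
    wc α * (∑ i ∈ s, q i) ^ α * (s.card : ℝ) ^ (1 - α) ≤ ∑ i ∈ s, q i ^ α := by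
  have h2 : (1:ℝ) < (2:ℝ)^α := by
    have := Real.rpow_lt_rpow_of_exponent_lt (by norm_num : (1:ℝ) < 2) h0
    simpa using this
  have h3 : (2:ℝ)^α < 2 := by
    have := Real.rpow_lt_rpow_of_exponent_lt (by norm_num : (1:ℝ) < 2) h1
    simpa using this
  obtain ⟨i0, hi0, hmin⟩ := s.exists_min_image q hs
  have ht : 0 < q i0 := hq i0 hi0
  set t := q i0 with htdef
  have hS : 0 < ∑ i ∈ s, q i := Finset.sum_pos hq hs
  have hM : 0 < (s.card : ℝ) := by exact_mod_cast Finset.card_pos.mpr hs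
  -- pointwise chord bound
  have hpt : ∀ i ∈ s, ((2:ℝ)^α - 1) * q i * t^(α-1) + (2 - (2:ℝ)^α) * t^α ≤ q i ^ α := by
    intro i hi
    have hqi : 0 < q i := hq i hi
    have hx1 : 1 ≤ q i / t := (one_le_div ht).mpr (hmin i hi)
    have hx2 : q i / t ≤ 2 := by
      rw [div_le_iff₀ ht]
      simpa [mul_comm] using hr i hi i0 hi0
    have := chord h0 h1 hx1 hx2
    have hqit : (q i / t) ^ α = q i ^ α * (t^α)⁻¹ := by
      rw [Real.div_rpow hqi.le ht.le, div_eq_mul_inv]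
    rw [hqit] at this
    have htα : (0:ℝ) < t ^ α := Real.rpow_pos_of_pos ht α
    have := mul_le_mul_of_nonneg_right this htα.le
    calc ((2:ℝ)^α - 1) * q i * t^(α-1) + (2 - (2:ℝ)^α) * t^α
        = (((2:ℝ)^α - 1) * (q i / t) + (2 - (2:ℝ)^α)) * t^α := by
          have htt : t^(α-1) = t^α / t := by rw [Real.rpow_sub ht, Real.rpow_one]
          rw [htt]
          field_simp
      _ ≤ q i ^ α * (t^α)⁻¹ * t^α := this
      _ = q i ^ α := by field_simp
  -- sum
  have hsum : ((2:ℝ)^α - 1) * (∑ i ∈ s, q i) * t^(α-1) + (2 - (2:ℝ)^α) * s.card * t^α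
      ≤ ∑ i ∈ s, q i ^ α := by
    have := Finset.sum_le_sum hpt
    calc ((2:ℝ)^α - 1) * (∑ i ∈ s, q i) * t^(α-1) + (2 - (2:ℝ)^α) * s.card * t^α
        = ∑ i ∈ s, (((2:ℝ)^α - 1) * q i * t^(α-1) + (2 - (2:ℝ)^α) * t^α) := by
          rw [Finset.sum_add_distrib, Finset.sum_const, ← Finset.sum_mul, ← Finset.mul_sum]
          push_cast
          ring
      _ ≤ _ := this
  have hF := Fmin (A := ((2:ℝ)^α - 1) * (∑ i ∈ s, q i)) (B := (2 - (2:ℝ)^α) * s.card)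
    h0 h1 (mul_pos (by linarith) hS) (mul_pos (by linarith) hM) ht
  refine le_trans (le_of_eq ?_) (le_trans hF hsum)
  rw [Real.mul_rpow (by linarith : (0:ℝ) ≤ (2:ℝ)^α - 1) hS.le,
      Real.mul_rpow (by linarith : (0:ℝ) ≤ 2 - (2:ℝ)^α) hM.le,
      wc, Real.div_rpow (by linarith : (0:ℝ) ≤ (2:ℝ)^α - 1) h0.le,
      Real.div_rpow (by linarith : (0:ℝ) ≤ 2 - (2:ℝ)^α) (by linarith : (0:ℝ) ≤ 1-α)]
  field_simp



/-- Two-function Hölder (geometric-mean form) for finite sums. -/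
lemma holder_mean {ι : Type*} (s : Finset ι) (p q : ι → ℝ) (hp : ∀ i ∈ s, 0 ≤ p i)
    (hq : ∀ i ∈ s, 0 ≤ q i) {α : ℝ} (h0 : 0 < α) (h1 : α < 1) :
    ∑ i ∈ s, (p i)^α * (q i)^(1-α) ≤ (∑ i ∈ s, p i)^α * (∑ i ∈ s, q i)^(1-α) := by
  have h1' : (0:ℝ) < 1 - α := by linarith
  rcases eq_or_lt_of_le (Finset.sum_nonneg hp) with hA | hA
  · have hz : ∀ i ∈ s, p i = 0 := by
      intro i hi
      exact le_antisymm (by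
        have := Finset.single_le_sum hp hi
        linarith) (hp i hi)
    have : ∀ i ∈ s, (p i)^α * (q i)^(1-α) = 0 := by
      intro i hi
      rw [hz i hi, Real.zero_rpow h0.ne', zero_mul]
    rw [Finset.sum_congr rfl this, Finset.sum_const, smul_zero, ← hA,
      Real.zero_rpow h0.ne', zero_mul]
  rcases eq_or_lt_of_le (Finset.sum_nonneg hq) with hB | hB
  · have hz : ∀ i ∈ s, q i = 0 := by
      intro i hi
      exact le_antisymm (by
        have := Finset.single_le_sum hq hi
        linarith) (hq i hi)
    have : ∀ i ∈ s, (p i)^α * (q i)^(1-α) = 0 := by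
      intro i hi
      rw [hz i hi, Real.zero_rpow h1'.ne', mul_zero]
    rw [Finset.sum_congr rfl this, Finset.sum_const, smul_zero, ← hB,
      Real.zero_rpow h1'.ne', mul_zero]
  set A := ∑ i ∈ s, p i
  set B := ∑ i ∈ s, q i
  have key : ∀ i ∈ s, (p i)^α * (q i)^(1-α)
      ≤ A^α * B^(1-α) * (α * (p i / A) + (1-α) * (q i / B)) := by
    intro i hi
    have hg := Real.geom_mean_le_arith_mean2_weighted h0.le h1'.le
      (div_nonneg (hp i hi) hA.le) (div_nonneg (hq i hi) hB.le) (by ring : α + (1-α) = 1)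
    have e : (p i / A)^α * (q i / B)^(1-α) = (p i)^α * (q i)^(1-α) * (A^α * B^(1-α))⁻¹ := by
      rw [Real.div_rpow (hp i hi) hA.le, Real.div_rpow (hq i hi) hB.le]
      field_simp
    rw [e] at hg
    have hAB : (0:ℝ) < A^α * B^(1-α) := by positivity
    calc (p i)^α * (q i)^(1-α) = (p i)^α * (q i)^(1-α) * (A^α * B^(1-α))⁻¹ * (A^α * B^(1-α)) := by
          field_simp
      _ ≤ (α * (p i / A) + (1-α) * (q i / B)) * (A^α * B^(1-α)) :=
          mul_le_mul_of_nonneg_right hg hAB.le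
      _ = A^α * B^(1-α) * (α * (p i / A) + (1-α) * (q i / B)) := by ring
  calc ∑ i ∈ s, (p i)^α * (q i)^(1-α)
      ≤ ∑ i ∈ s, A^α * B^(1-α) * (α * (p i / A) + (1-α) * (q i / B)) := Finset.sum_le_sum key
    _ = A^α * B^(1-α) * (α * (∑ i ∈ s, p i / A) + (1-α) * (∑ i ∈ s, q i / B)) := by
        rw [← Finset.mul_sum, Finset.sum_add_distrib, ← Finset.mul_sum, ← Finset.mul_sum]
    _ = A^α * B^(1-α) := by
        rw [← Finset.sum_div, ← Finset.sum_div]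
        field_simp
        show α * A * B + (1 - α) * A * B = A * B
        ring
  
lemma sum_inv_Icc_le (N : ℕ) : ∑ i ∈ Finset.Icc 1 N, ((i:ℝ))⁻¹ ≤ 1 + Real.log N := by
  have h := harmonic_le_one_add_log N
  have e : ((harmonic N : ℚ) : ℝ) = ∑ i ∈ Finset.Icc 1 N, ((i:ℝ))⁻¹ := by
    rw [harmonic_eq_sum_Icc]
    push_cast
    rfl
  linarith [e ▸ h]



lemma greedy_aux (a M : ℕ) (hM : 1 ≤ M) (w : ℕ → ℝ) (hw : ∀ i, 0 < w i) :
    ∀ t : ℕ, ∃ f : ℕ → ℕ,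
      (∀ i ∈ Icc (a+1) (a+t), f i ∈ Icc 1 M) ∧
      (((Icc 1 M).filter
          (fun j => ((Icc (a+1) (a+t)).filter (fun i => f i = j)).Nonempty)).card = min t M) ∧
      (∀ j ∈ Icc 1 M, ((Icc (a+1) (a+t)).filter (fun i => f i = j)).Nonempty →
        ∃ i ∈ (Icc (a+1) (a+t)).filter (fun i => f i = j),
          (∀ i' ∈ (Icc (a+1) (a+t)).filter (fun i => f i = j), i' ≤ i) ∧
          ∀ j' ∈ Icc 1 M,
            (∑ i' ∈ (Icc (a+1) (a+t)).filter (fun i => f i = j), w i') - w i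
              ≤ ∑ i' ∈ (Icc (a+1) (a+t)).filter (fun i => f i = j'), w i') := by
  intro t
  induction t with
  | zero =>
    refine ⟨fun _ => 1, ?_, ?_, ?_⟩
    · intro i hi
      simp only [Nat.add_zero, Finset.mem_Icc] at hi
      omega
    · have : Icc (a+1) (a+0) = ∅ := by
        apply Finset.Icc_eq_empty
        omega
      simp [this]
    · intro j hj hne
      exfalso
      have : Icc (a+1) (a+0) = ∅ := by
        apply Finset.Icc_eq_empty
        omega
      rw [this] at hne
      simp at hne
  | succ t ih =>
    obtain ⟨f, hmaps, hcnt, hwit⟩ := ih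
    obtain ⟨j0, hj0, hmin⟩ := Finset.exists_min_image (Icc 1 M)
      (fun j => ∑ i' ∈ (Icc (a+1) (a+t)).filter (fun i => f i = j), w i')
      ⟨1, Finset.mem_Icc.mpr ⟨le_refl 1, hM⟩⟩
    set istar := a + t + 1 with histar
    set f' : ℕ → ℕ := Function.update f istar j0 with hf'
    have hnotmem : istar ∉ Icc (a+1) (a+t) := by
      simp only [Finset.mem_Icc]
      omega
    have hIt : Icc (a+1) (a+(t+1)) = insert istar (Icc (a+1) (a+t)) := by
      ext i
      simp only [Finset.mem_Icc, Finset.mem_insert]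
      omega
    have hfilt : ∀ j, (Icc (a+1) (a+t)).filter (fun i => f' i = j)
        = (Icc (a+1) (a+t)).filter (fun i => f i = j) := by
      intro j
      apply Finset.filter_congr
      intro i hi
      have : i ≠ istar := fun h => hnotmem (h ▸ hi)
      simp [hf', Function.update_of_ne this]
    have hfib : ∀ j, (Icc (a+1) (a+(t+1))).filter (fun i => f' i = j)
        = if j = j0 then insert istar ((Icc (a+1) (a+t)).filter (fun i => f i = j))
          else (Icc (a+1) (a+t)).filter (fun i => f i = j) := by
      intro j
      rw [hIt, Finset.filter_insert, hfilt]
      have : f' istar = j0 := by simp [hf']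
      by_cases hj : j = j0
      · rw [if_pos (by rw [this, hj]), if_pos hj]
      · rw [if_neg (by rw [this]; exact fun h => hj h.symm), if_neg hj]
    -- loads
    set L : ℕ → ℝ := fun j => ∑ i' ∈ (Icc (a+1) (a+t)).filter (fun i => f i = j), w i' with hL
    have hload : ∀ j, (∑ i' ∈ (Icc (a+1) (a+(t+1))).filter (fun i => f' i = j), w i')
        = if j = j0 then w istar + L j else L j := by
      intro j
      rw [hfib j]
      by_cases hj : j = j0
      · rw [if_pos hj, if_pos hj, Finset.sum_insert (by
          intro hmem
          exact hnotmem (Finset.mem_of_mem_filter _ hmem))]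
      · rw [if_neg hj, if_neg hj]
    have hLle : ∀ j, L j ≤ ∑ i' ∈ (Icc (a+1) (a+(t+1))).filter (fun i => f' i = j), w i' := by
      intro j
      rw [hload j]
      split_ifs
      · have := hw istar
        linarith
      · exact le_refl _
    refine ⟨f', ?_, ?_, ?_⟩
    · intro i hi
      rw [hIt] at hi
      rcases Finset.mem_insert.mp hi with h | h
      · rw [h]
        simp [hf', hj0]
      · have : i ≠ istar := fun hh => hnotmem (hh ▸ h)
        rw [hf', Function.update_of_ne this]
        exact hmaps i h
    · -- cardinality of nonempty bins
      have hNE : (Icc 1 M).filter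
          (fun j => ((Icc (a+1) (a+(t+1))).filter (fun i => f' i = j)).Nonempty)
          = insert j0 ((Icc 1 M).filter
            (fun j => ((Icc (a+1) (a+t)).filter (fun i => f i = j)).Nonempty)) := by
        ext j
        simp only [Finset.mem_filter, Finset.mem_insert]
        constructor
        · rintro ⟨hjM, hne⟩
          rw [hfib j] at hne
          by_cases hj : j = j0
          · exact Or.inl hj
          · rw [if_neg hj] at hne
            exact Or.inr ⟨hjM, hne⟩
        · rintro (hj | ⟨hjM, hne⟩)
          · subst hj
            refine ⟨hj0, ?_⟩
            rw [hfib _, if_pos rfl]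
            exact ⟨istar, Finset.mem_insert_self _ _⟩
          · refine ⟨hjM, ?_⟩
            rw [hfib j]
            split_ifs
            · exact ⟨istar, Finset.mem_insert_self _ _⟩
            · exact hne
      rw [hNE]
      by_cases hlt : t < M
      · have hj0notin : j0 ∉ (Icc 1 M).filter
            (fun j => ((Icc (a+1) (a+t)).filter (fun i => f i = j)).Nonempty) := by
          intro hj0in
          have hss : (Icc 1 M).filter
              (fun j => ((Icc (a+1) (a+t)).filter (fun i => f i = j)).Nonempty) ⊂ Icc 1 M := by
            refine Finset.ssubset_iff_subset_ne.mpr ⟨Finset.filter_subset _ _, ?_⟩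
            intro h
            rw [h, Nat.card_Icc] at hcnt
            omega
          obtain ⟨j1, hj1M, hj1notin⟩ := Finset.exists_of_ssubset hss
          have hempty : (Icc (a+1) (a+t)).filter (fun i => f i = j1) = ∅ := by
            by_contra hne
            exact hj1notin (Finset.mem_filter.mpr ⟨hj1M, Finset.nonempty_of_ne_empty hne⟩)
          have hLj0pos : 0 < ∑ i' ∈ (Icc (a+1) (a+t)).filter (fun i => f i = j0), w i' := by
            have hnefib := (Finset.mem_filter.mp hj0in).2
            exact Finset.sum_pos (fun i _ => hw i) hnefib
          have hm := hmin j1 hj1M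
          rw [hempty, Finset.sum_empty] at hm
          linarith
        rw [Finset.card_insert_of_notMem hj0notin, hcnt]
        omega
      · -- all bins already nonempty
        have hfull : (Icc 1 M).filter
            (fun j => ((Icc (a+1) (a+t)).filter (fun i => f i = j)).Nonempty) = Icc 1 M := by
          apply Finset.eq_of_subset_of_card_le (Finset.filter_subset _ _)
          rw [hcnt, Nat.card_Icc]
          omega
        rw [Finset.insert_eq_self.mpr (by rw [hfull]; exact hj0), hfull, Nat.card_Icc]
        omega
    · -- witness invariant
      intro j hjM hne
      by_cases hj : j = j0
      · subst hj
        refine ⟨istar, ?_, ?_, ?_⟩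
        · rw [hfib _, if_pos rfl]
          exact Finset.mem_insert_self _ _
        · intro i' hi'
          rw [hfib _, if_pos rfl] at hi'
          rcases Finset.mem_insert.mp hi' with h | h
          · omega
          · have := (Finset.mem_Icc.mp (Finset.mem_of_mem_filter _ h)).2
            omega
        · intro j' hj'
          rw [hload _, if_pos rfl]
          have h1 : L _ ≤ L j' := hmin j' hj'
          have h2 := hLle j'
          simp only [add_sub_cancel_left]
          calc L j ≤ L j' := h1
            _ ≤ _ := h2
      · obtain ⟨i, hi, hmax, hldi⟩ := hwit j hjM (by
          rw [hfib j, if_neg hj] at hne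
          exact hne)
        refine ⟨i, ?_, ?_, ?_⟩
        · rw [hfib j, if_neg hj]
          exact hi
        · intro i' hi'
          rw [hfib j, if_neg hj] at hi'
          exact hmax i' hi'
        · intro j' hj'
          rw [hload j, if_neg hj]
          calc L j - w i ≤ L j' := hldi j' hj'
            _ ≤ _ := hLle j'

/-- Greedy partition: `M` nonempty bins with pairwise load ratio at most 2. -/
lemma greedy (a M T : ℕ) (hM : 1 ≤ M) (hMT : M ≤ T) (w : ℕ → ℝ) (hw : ∀ i, 0 < w i)
    (hmono : ∀ i ∈ Icc (a+1) (a+T), ∀ i' ∈ Icc (a+1) (a+T), i ≤ i' → w i' ≤ w i)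
    (havg : ∀ i ∈ Icc (a+1) (a+T), (M:ℝ) * w i < ∑ i' ∈ Icc (a+1) (a+T), w i') :
    ∃ f : ℕ → ℕ, (∀ i ∈ Icc (a+1) (a+T), f i ∈ Icc 1 M) ∧
      (∀ j ∈ Icc 1 M, ((Icc (a+1) (a+T)).filter (fun i => f i = j)).Nonempty) ∧
      (∀ j ∈ Icc 1 M, ∀ j' ∈ Icc 1 M,
        ∑ i ∈ (Icc (a+1) (a+T)).filter (fun i => f i = j), w i
          ≤ 2 * ∑ i ∈ (Icc (a+1) (a+T)).filter (fun i => f i = j'), w i) := by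
  obtain ⟨f, hmaps, hcnt, hwit⟩ := greedy_aux a M hM w hw T
  have hfullcard : ((Icc 1 M).filter
      (fun j => ((Icc (a+1) (a+T)).filter (fun i => f i = j)).Nonempty)).card
      = (Icc 1 M).card := by
    rw [hcnt, Nat.card_Icc]
    omega
  have hfull : (Icc 1 M).filter
      (fun j => ((Icc (a+1) (a+T)).filter (fun i => f i = j)).Nonempty) = Icc 1 M :=
    Finset.eq_of_subset_of_card_le (Finset.filter_subset _ _) (le_of_eq hfullcard.symm)
  have hne : ∀ j ∈ Icc 1 M, ((Icc (a+1) (a+T)).filter (fun i => f i = j)).Nonempty := by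
    intro j hj
    rw [← hfull] at hj
    exact (Finset.mem_filter.mp hj).2
  refine ⟨f, hmaps, hne, ?_⟩
  set L : ℕ → ℝ := fun j => ∑ i ∈ (Icc (a+1) (a+T)).filter (fun i => f i = j), w i with hL
  have hLpos : ∀ j ∈ Icc 1 M, 0 < L j := fun j hj =>
    Finset.sum_pos (fun i _ => hw i) (hne j hj)
  have hStot : ∑ j ∈ Icc 1 M, L j = ∑ i ∈ Icc (a+1) (a+T), w i :=
    (Finset.sum_fiberwise_of_maps_to hmaps w)
  obtain ⟨jM, hjM, hmax⟩ := Finset.exists_max_image (Icc 1 M) L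
    ⟨1, Finset.mem_Icc.mpr ⟨le_refl 1, hM⟩⟩
  -- the max bin has at least two items
  obtain ⟨i, hi, himax, hload⟩ := hwit jM hjM (hne jM hjM)
  have hiIt : i ∈ Icc (a+1) (a+T) := Finset.mem_of_mem_filter _ hi
  have hSle : ∑ i' ∈ Icc (a+1) (a+T), w i' ≤ (M:ℝ) * L jM := by
    rw [← hStot]
    calc ∑ j ∈ Icc 1 M, L j ≤ ∑ _j ∈ Icc 1 M, L jM := Finset.sum_le_sum (fun j hj => hmax j hj)
      _ = (M:ℝ) * L jM := by
        rw [Finset.sum_const, Nat.card_Icc, nsmul_eq_mul]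
        norm_num
  have htwo : ∃ i' ∈ (Icc (a+1) (a+T)).filter (fun i => f i = jM), i' ≠ i := by
    by_contra hno
    push_neg at hno
    have hsingle : (Icc (a+1) (a+T)).filter (fun i => f i = jM) = {i} := by
      apply Finset.eq_singleton_iff_unique_mem.mpr
      exact ⟨hi, fun x hx => hno x hx⟩
    have : L jM = w i := by
      rw [hL]
      simp only
      rw [hsingle, Finset.sum_singleton]
    have h1 := havg i hiIt
    rw [← this] at h1
    linarith
  obtain ⟨i', hi', hii'⟩ := htwo
  have hi'le : i' ≤ i := himax i' hi'
  have hwle : w i ≤ w i' := hmono i' (Finset.mem_of_mem_filter _ hi') i hiIt hi'le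
  have hLge : w i' + w i ≤ L jM := by
    have hsub : ({i', i} : Finset ℕ) ⊆ (Icc (a+1) (a+T)).filter (fun i => f i = jM) := by
      intro x hx
      rcases Finset.mem_insert.mp hx with h | h
      · exact h ▸ hi'
      · rw [Finset.mem_singleton] at h
        exact h ▸ hi
    calc w i' + w i = ∑ x ∈ ({i', i} : Finset ℕ), w x := (Finset.sum_pair hii').symm
      _ ≤ L jM := Finset.sum_le_sum_of_subset_of_nonneg hsub (fun x _ _ => (hw x).le)
  have hwi : 2 * w i ≤ L jM := by linarith
  intro j hj j' hj'
  have h1 : L jM - w i ≤ L j' := hload j' hj'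
  have h2 : L j ≤ L jM := hmax j hj
  have h3 : 0 < L jM := hLpos jM hjM
  show L j ≤ 2 * L j'
  linarith

lemma wrap {c A C D : ℝ} (hc0 : 0 < c) (hc1 : c ≤ 1) (hA : 0 ≤ A) (h : c * D ≤ C) :
    A + D ≤ c⁻¹ * (A + C) := by
  have h2 : c * (A + D) ≤ A + C := by nlinarith
  calc A + D = c⁻¹ * (c * (A + D)) := by
        rw [← mul_assoc, inv_mul_cancel₀ hc0.ne', one_mul]
    _ ≤ c⁻¹ * (A + C) := mul_le_mul_of_nonneg_left h2 (by positivity)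



lemma tildeX_pos (n m : ℕ) (hm : 2 ≤ m) (hmn : m < n) (P : ℕ → ℝ)
    (hP : IsPMF n P) (hdec : DecOn n P) :
    ∀ j ∈ Finset.Icc 1 m, 0 < tildeX n m P j := by
  obtain ⟨hPpos, hPsum⟩ := hP
  have hn1 : 1 ≤ n := by omega
  intro j hj
  obtain ⟨hj1, hj2⟩ := Finset.mem_Icc.mp hj
  rw [tildeX]
  by_cases hsmall : P 1 < 1/(m:ℝ)
  · rw [if_pos hsmall]
    positivity
  · rw [if_neg hsmall]
    push_neg at hsmall
    have hmpos : (0:ℝ) < m := by positivity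
    have hsum2 : ∑ j ∈ Finset.Icc 2 n, P j = 1 - P 1 := by
      have h2 : Finset.Icc 2 n = (Finset.Icc 1 n).erase 1 := by
        rw [Finset.Icc_erase_left]
        ext x
        simp only [Finset.mem_Icc, Finset.mem_Ioc]
        omega
      rw [h2]
      have h3 := Finset.add_sum_erase (Finset.Icc 1 n) P
        (Finset.mem_Icc.mpr ⟨le_refl 1, hn1⟩)
      rw [hPsum] at h3
      linarith
    have h1S : 1 ∈ {i : ℕ | 1 ≤ i ∧ i ≤ m - 1 ∧
        ((m : ℝ) - (i : ℝ))⁻¹ * ∑ j ∈ Finset.Icc (i + 1) n, P j ≤ P i} := by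
      refine ⟨le_refl 1, by omega, ?_⟩
      rw [Nat.cast_one, show (1:ℕ) + 1 = 2 by omega, hsum2]
      rw [inv_mul_le_iff₀ (by
        have : (2:ℝ) ≤ m := by exact_mod_cast hm
        linarith)]
      have hP1m : 1 ≤ (m:ℝ) * P 1 := by
        rw [div_le_iff₀ hmpos] at hsmall
        linarith
      nlinarith [hPpos 1 (Finset.mem_Icc.mpr ⟨le_refl 1, hn1⟩)]
    have hbdd : BddAbove {i : ℕ | 1 ≤ i ∧ i ≤ m - 1 ∧
        ((m : ℝ) - (i : ℝ))⁻¹ * ∑ j ∈ Finset.Icc (i + 1) n, P j ≤ P i} :=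
      ⟨m - 1, fun i hi => hi.2.1⟩
    have hnsS : nStar n m P ∈ {i : ℕ | 1 ≤ i ∧ i ≤ m - 1 ∧
        ((m : ℝ) - (i : ℝ))⁻¹ * ∑ j ∈ Finset.Icc (i + 1) n, P j ≤ P i} :=
      Nat.sSup_mem ⟨1, h1S⟩ hbdd
    obtain ⟨hns1, hns2, _⟩ := hnsS
    split_ifs with hle
    · exact hPpos j (Finset.mem_Icc.mpr ⟨hj1, by omega⟩)
    · apply mul_pos
      · apply inv_pos.mpr
        have : ((nStar n m P : ℕ):ℝ) + 1 ≤ (m:ℝ) := by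
          exact_mod_cast (by omega : nStar n m P + 1 ≤ m)
        linarith
      · apply Finset.sum_pos
        · intro i hi
          have := Finset.mem_Icc.mp hi
          exact hPpos i (Finset.mem_Icc.mpr ⟨by omega, this.2⟩)
        · exact ⟨nStar n m P + 1, Finset.mem_Icc.mpr ⟨le_refl _, by omega⟩⟩



lemma seqSet_nonempty {n k : ℕ} (hn : 1 ≤ n) : (seqSet n k).Nonempty := by
  refine ⟨fun _ => 1, ?_⟩
  rw [seqSet, Fintype.mem_piFinset]
  intro i
  exact Finset.mem_Icc.mpr ⟨le_refl 1, hn⟩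

lemma prodP_pos {n k : ℕ} {P : ℕ → ℝ} (hP : ∀ i ∈ Finset.Icc 1 n, 0 < P i)
    {x : Fin k → ℕ} (hx : x ∈ seqSet n k) : 0 < prodP k P x := by
  apply Finset.prod_pos
  intro i _
  exact hP (x i) (by
    rw [seqSet, Fintype.mem_piFinset] at hx
    exact hx i)

lemma sum_prodP_rpow {n k : ℕ} {P : ℕ → ℝ} (hP : ∀ i ∈ Finset.Icc 1 n, 0 ≤ P i) (α : ℝ) :
    ∑ x ∈ seqSet n k, (prodP k P x) ^ α = (∑ j ∈ Finset.Icc 1 n, (P j) ^ α) ^ k := by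
  have e1 : ∀ x ∈ seqSet n k, (prodP k P x) ^ α = ∏ i, (P (x i)) ^ α := by
    intro x hx
    rw [prodP, ← Real.finset_prod_rpow _ _ (fun i _ => hP (x i) (by
      rw [seqSet, Fintype.mem_piFinset] at hx
      exact hx i)) α]
  rw [Finset.sum_congr rfl e1]
  rw [show (∑ j ∈ Finset.Icc 1 n, (P j) ^ α) ^ k
      = ∏ _i : Fin k, ∑ j ∈ Finset.Icc 1 n, (P j) ^ α by
    rw [Finset.prod_const, Finset.card_univ, Fintype.card_fin]]
  rw [Finset.prod_univ_sum]
  rfl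

lemma rank_mul_le {n k : ℕ} {P : ℕ → ℝ} (hP : ∀ i ∈ Finset.Icc 1 n, 0 < P i)
    {g : (Fin k → ℕ) → ℕ} (hg : IsRanking n k P g) {x : Fin k → ℕ} (hx : x ∈ seqSet n k)
    {α : ℝ} (h0 : 0 < α) :
    (g x : ℝ) * (prodP k P x) ^ α ≤ ∑ y ∈ seqSet n k, (prodP k P y) ^ α := by
  obtain ⟨hbij, hrank⟩ := hg
  have hgx : g x ∈ Set.Icc 1 (n^k) := hbij.mapsTo (Finset.mem_coe.mpr hx)
  -- card of {y : g y ≤ g x} is g x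
  have hcard : ((seqSet n k).filter (fun y => g y ≤ g x)).card = g x := by
    have := Finset.card_bij (s := (seqSet n k).filter (fun y => g y ≤ g x))
      (t := Finset.Icc 1 (g x)) (i := fun y _ => g y) ?_ ?_ ?_
    · rw [this, Nat.card_Icc]
      omega
    · intro y hy
      have hyss := Finset.mem_filter.mp hy
      have := hbij.mapsTo (Finset.mem_coe.mpr hyss.1)
      exact Finset.mem_Icc.mpr ⟨this.1, hyss.2⟩
    · intro y1 hy1 y2 hy2 he
      exact hbij.injOn (Finset.mem_coe.mpr (Finset.mem_of_mem_filter _ hy1))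
        (Finset.mem_coe.mpr (Finset.mem_of_mem_filter _ hy2)) he
    · intro b hb
      have hbIcc := Finset.mem_Icc.mp hb
      have hbN : b ∈ Set.Icc 1 (n^k) := ⟨hbIcc.1, le_trans hbIcc.2 hgx.2⟩
      obtain ⟨y, hy, hgy⟩ := hbij.surjOn hbN
      exact ⟨y, Finset.mem_filter.mpr ⟨Finset.mem_coe.mp hy, by omega⟩, hgy⟩
  have hsub : (seqSet n k).filter (fun y => g y ≤ g x)
      ⊆ (seqSet n k).filter (fun y => prodP k P x ≤ prodP k P y) := by
    intro y hy
    have hyss := Finset.mem_filter.mp hy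
    refine Finset.mem_filter.mpr ⟨hyss.1, ?_⟩
    by_contra hlt
    push_neg at hlt
    have := hrank x hx y hyss.1 hlt
    omega
  have hc2 : (g x : ℝ) ≤ ((seqSet n k).filter
      (fun y => prodP k P x ≤ prodP k P y)).card := by
    rw [← hcard]
    exact_mod_cast Finset.card_le_card hsub
  have hxpos := prodP_pos hP hx
  have hxα : (0:ℝ) < (prodP k P x) ^ α := Real.rpow_pos_of_pos hxpos α
  calc (g x : ℝ) * (prodP k P x) ^ α
      ≤ (((seqSet n k).filter (fun y => prodP k P x ≤ prodP k P y)).card : ℝ)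
          * (prodP k P x) ^ α := by
        exact mul_le_mul_of_nonneg_right hc2 hxα.le
    _ = ∑ y ∈ (seqSet n k).filter (fun y => prodP k P x ≤ prodP k P y),
          (prodP k P x) ^ α := by
        rw [Finset.sum_const, nsmul_eq_mul]
    _ ≤ ∑ y ∈ (seqSet n k).filter (fun y => prodP k P x ≤ prodP k P y),
          (prodP k P y) ^ α := by
        apply Finset.sum_le_sum
        intro y hy
        have := (Finset.mem_filter.mp hy).2
        exact Real.rpow_le_rpow hxpos.le this h0.le
    _ ≤ ∑ y ∈ seqSet n k, (prodP k P y) ^ α := by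
        apply Finset.sum_le_sum_of_subset_of_nonneg (Finset.filter_subset _ _)
        intro y hy _
        exact (Real.rpow_pos_of_pos (prodP_pos hP hy) α).le

lemma gmoment_le {n k : ℕ} (hn : 1 ≤ n) {P : ℕ → ℝ} (hP : ∀ i ∈ Finset.Icc 1 n, 0 < P i)
    {g : (Fin k → ℕ) → ℕ} (hg : IsRanking n k P g) {ρ : ℝ} (hρ : 0 < ρ) :
    gmoment n k P g ρ ≤ ((∑ j ∈ Finset.Icc 1 n, (P j) ^ (1/(1+ρ))) ^ k) ^ (ρ+1) := by
  set α := 1/(1+ρ) with hα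
  have h0 : 0 < α := by positivity
  have hαρ : α * ρ = 1 - α := by
    rw [hα]
    field_simp
    ring
  set Sk := ∑ y ∈ seqSet n k, (prodP k P y) ^ α with hSk
  have hSkpos : 0 < Sk := Finset.sum_pos
    (fun y hy => Real.rpow_pos_of_pos (prodP_pos hP hy) α) (seqSet_nonempty hn)
  have hterm : ∀ x ∈ seqSet n k, prodP k P x * (g x : ℝ) ^ ρ ≤ Sk ^ ρ * (prodP k P x) ^ α := by
    intro x hx
    have hxpos := prodP_pos hP hx
    have hxα : (0:ℝ) < (prodP k P x) ^ α := Real.rpow_pos_of_pos hxpos α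
    have hgle : (g x : ℝ) ≤ Sk / (prodP k P x) ^ α := by
      rw [le_div_iff₀ hxα]
      exact rank_mul_le hP hg hx h0
    have hgρ : ((g x : ℝ)) ^ ρ ≤ (Sk / (prodP k P x) ^ α) ^ ρ :=
      Real.rpow_le_rpow (by positivity) hgle hρ.le
    calc prodP k P x * (g x : ℝ) ^ ρ ≤ prodP k P x * (Sk / (prodP k P x) ^ α) ^ ρ :=
          mul_le_mul_of_nonneg_left hgρ hxpos.le
      _ = Sk ^ ρ * (prodP k P x) ^ α := by
          rw [Real.div_rpow hSkpos.le hxα.le, ← Real.rpow_mul hxpos.le, hαρ]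
          have e3 : (prodP k P x)^α * (prodP k P x)^(1-α) = prodP k P x := by
            rw [← Real.rpow_add hxpos]
            norm_num
          field_simp
          linear_combination (-1 : ℝ) * e3
  calc gmoment n k P g ρ ≤ ∑ x ∈ seqSet n k, Sk ^ ρ * (prodP k P x) ^ α :=
        Finset.sum_le_sum hterm
    _ = Sk ^ ρ * Sk := by rw [← Finset.mul_sum]
    _ = Sk ^ (ρ+1) := by rw [Real.rpow_add_one hSkpos.ne']
    _ = ((∑ j ∈ Finset.Icc 1 n, (P j) ^ α) ^ k) ^ (ρ+1) := by
        rw [hSk, sum_prodP_rpow (fun i hi => (hP i hi).le)]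

lemma gmoment_ge {m k : ℕ} (hm : 2 ≤ m) (hk : 1 ≤ k) {Q : ℕ → ℝ}
    (hQ : ∀ j ∈ Finset.Icc 1 m, 0 ≤ Q j) {g : (Fin k → ℕ) → ℕ} (hg : IsRanking m k Q g)
    {ρ : ℝ} (hρ : 0 < ρ) :
    (∑ j ∈ Finset.Icc 1 m, (Q j) ^ (1/(1+ρ))) ^ k
      ≤ (gmoment m k Q g ρ) ^ (1/(1+ρ)) * (1 + (k:ℝ) * Real.log m) ^ (1 - 1/(1+ρ)) := by
  set α := 1/(1+ρ) with hα
  have h0 : 0 < α := by positivity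
  have h1 : α < 1 := by
    rw [hα, div_lt_one (by linarith)]
    linarith
  have hαρ : ρ * α = 1 - α := by
    rw [hα]
    field_simp
    ring
  obtain ⟨hbij, _⟩ := hg
  have hQx : ∀ x ∈ seqSet m k, 0 ≤ prodP k Q x := by
    intro x hx
    apply Finset.prod_nonneg
    intro i _
    exact hQ (x i) (by
      rw [seqSet, Fintype.mem_piFinset] at hx
      exact hx i)
  have hgx1 : ∀ x ∈ seqSet m k, 1 ≤ g x := by
    intro x hx
    exact (hbij.mapsTo (Finset.mem_coe.mpr hx)).1
  -- pointwise identity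
  have hpt : ∀ x ∈ seqSet m k, (prodP k Q x) ^ α
      = (prodP k Q x * (g x : ℝ) ^ ρ) ^ α * (((g x : ℝ))⁻¹) ^ (1-α) := by
    intro x hx
    have hgpos : (0:ℝ) < (g x : ℝ) := by
      have := hgx1 x hx
      exact_mod_cast Nat.lt_of_lt_of_le Nat.zero_lt_one this
    rw [Real.mul_rpow (hQx x hx) (by positivity)]
    have e : (((g x:ℝ))^ρ)^α * (((g x:ℝ))⁻¹)^(1-α) = 1 := by
      rw [← Real.rpow_mul hgpos.le, Real.inv_rpow hgpos.le, ← Real.rpow_neg hgpos.le,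
        ← Real.rpow_add hgpos, show ρ*α + -(1-α) = 0 by linarith [hαρ], Real.rpow_zero]
    rw [mul_assoc, e, mul_one]
  -- harmonic sum
  have hharm : ∑ x ∈ seqSet m k, ((g x : ℝ))⁻¹ = ∑ i ∈ Finset.Icc 1 (m^k), ((i:ℝ))⁻¹ := by
    apply Finset.sum_bij (i := fun x _ => g x)
    · intro x hx
      have := hbij.mapsTo (Finset.mem_coe.mpr hx)
      exact Finset.mem_Icc.mpr ⟨this.1, this.2⟩
    · intro x hx y hy he
      exact hbij.injOn (Finset.mem_coe.mpr hx) (Finset.mem_coe.mpr hy) he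
    · intro b hb
      have hbIcc := Finset.mem_Icc.mp hb
      obtain ⟨y, hy, hgy⟩ := hbij.surjOn (Set.mem_Icc.mpr ⟨hbIcc.1, hbIcc.2⟩)
      exact ⟨y, Finset.mem_coe.mp hy, hgy⟩
    · intro x hx
      rfl
  have hD : ∑ x ∈ seqSet m k, ((g x : ℝ))⁻¹ ≤ 1 + (k:ℝ) * Real.log m := by
    rw [hharm]
    calc ∑ i ∈ Finset.Icc 1 (m^k), ((i:ℝ))⁻¹ ≤ 1 + Real.log (m^k) := by
          exact_mod_cast sum_inv_Icc_le (m^k)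
      _ = 1 + (k:ℝ) * Real.log m := by
        rw [Real.log_pow]
  -- apply Hölder
  have hH := holder_mean (seqSet m k) (fun x => prodP k Q x * (g x : ℝ) ^ ρ)
    (fun x => ((g x : ℝ))⁻¹)
    (fun x hx => mul_nonneg (hQx x hx) (by positivity))
    (fun x hx => by positivity) h0 h1
  have hgm_nonneg : 0 ≤ gmoment m k Q g ρ :=
    Finset.sum_nonneg (fun x hx => mul_nonneg (hQx x hx) (by positivity))
  have hDpos : (0:ℝ) ≤ ∑ x ∈ seqSet m k, ((g x:ℝ))⁻¹ :=
    Finset.sum_nonneg (fun x hx => by positivity)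
  calc (∑ j ∈ Finset.Icc 1 m, (Q j) ^ α) ^ k
      = ∑ x ∈ seqSet m k, (prodP k Q x) ^ α := (sum_prodP_rpow hQ α).symm
    _ = ∑ x ∈ seqSet m k, (prodP k Q x * (g x : ℝ) ^ ρ) ^ α * (((g x : ℝ))⁻¹) ^ (1-α) :=
        Finset.sum_congr rfl hpt
    _ ≤ (gmoment m k Q g ρ) ^ α * (∑ x ∈ seqSet m k, ((g x : ℝ))⁻¹) ^ (1-α) := hH
    _ ≤ (gmoment m k Q g ρ) ^ α * (1 + (k:ℝ) * Real.log m) ^ (1-α) := by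
        apply mul_le_mul_of_nonneg_left _ (by positivity)
        exact Real.rpow_le_rpow hDpos hD (by linarith)

lemma exists_good_f (n m : ℕ) (hm : 2 ≤ m) (hmn : m < n) (P : ℕ → ℝ)
    (hP : IsPMF n P) (hdec : DecOn n P) :
    ∃ f : ℕ → ℕ, (∀ i ∈ Finset.Icc 1 n, f i ∈ Finset.Icc 1 m) ∧
      (∀ j ∈ Finset.Icc 1 m, 0 < push n f P j) ∧
      ∀ α : ℝ, 0 < α → α < 1 →
        ∑ j ∈ Finset.Icc 1 m, (tildeX n m P j) ^ α
          ≤ (wc α)⁻¹ * ∑ j ∈ Finset.Icc 1 m, (push n f P j) ^ α := by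
  obtain ⟨hPpos, hPsum⟩ := hP
  have hn1 : 1 ≤ n := by omega
  set w : ℕ → ℝ := fun i => if 1 ≤ i ∧ i ≤ n then P i else 1 with hw
  have hwpos : ∀ i, 0 < w i := by
    intro i
    simp only [hw]
    split_ifs with h
    · exact hPpos i (Finset.mem_Icc.mpr h)
    · norm_num
  have hwP : ∀ i ∈ Finset.Icc 1 n, w i = P i := by
    intro i hi
    simp only [hw]
    rw [if_pos (Finset.mem_Icc.mp hi)]
  by_cases hsmall : P 1 < 1 / (m : ℝ)
  · -- uniform case: greedy on everything
    have hmono : ∀ i ∈ Icc (0+1) (0+n), ∀ i' ∈ Icc (0+1) (0+n), i ≤ i' → w i' ≤ w i := by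
      intro i hi i' hi' hle
      simp only [Nat.zero_add] at hi hi'
      rw [hwP i hi, hwP i' hi']
      exact hdec i hi i' hi' hle
    have hsumw : ∑ i' ∈ Icc (0+1) (0+n), w i' = 1 := by
      simp only [Nat.zero_add]
      rw [Finset.sum_congr rfl hwP, hPsum]
    have havg : ∀ i ∈ Icc (0+1) (0+n), (m:ℝ) * w i < ∑ i' ∈ Icc (0+1) (0+n), w i' := by
      intro i hi
      simp only [Nat.zero_add] at hi
      rw [hsumw, hwP i hi]
      have h1 : P i ≤ P 1 := hdec 1 (Finset.mem_Icc.mpr ⟨le_refl 1, hn1⟩) i hi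
          (Finset.mem_Icc.mp hi).1
      have hmpos : (0:ℝ) < m := by positivity
      calc (m:ℝ) * P i ≤ (m:ℝ) * P 1 := by nlinarith
        _ < (m:ℝ) * (1/m) := by nlinarith
        _ = 1 := by field_simp
    obtain ⟨f, hmaps, hne, hratio⟩ := greedy 0 m n (by omega) (by omega) w hwpos hmono havg
    simp only [Nat.zero_add] at hmaps hne hratio
    have hpush : ∀ j, push n f P j = ∑ i ∈ (Icc 1 n).filter (fun i => f i = j), w i := by
      intro j
      rw [push]
      exact Finset.sum_congr rfl (fun i hi => (hwP i (Finset.mem_of_mem_filter _ hi)).symm)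
    have hpushpos : ∀ j ∈ Finset.Icc 1 m, 0 < push n f P j := by
      intro j hj
      rw [hpush]
      exact Finset.sum_pos (fun i _ => hwpos i) (hne j hj)
    refine ⟨f, hmaps, hpushpos, ?_⟩
    intro α h0 h1
    have hwcpos := wc_pos h0 h1
    have hpushsum : ∑ j ∈ Finset.Icc 1 m, push n f P j = 1 := by
      rw [Finset.sum_congr rfl (fun j _ => hpush j), Finset.sum_fiberwise_of_maps_to hmaps w]
      simpa using hsumw
    have hlow := sum_rpow_lower h0 h1 (Finset.Icc 1 m) ⟨1, Finset.mem_Icc.mpr ⟨le_refl 1, by omega⟩⟩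
      (push n f P) hpushpos (fun j hj j' hj' => by
        rw [hpush j, hpush j']
        exact hratio j hj j' hj')
    rw [hpushsum, Nat.card_Icc] at hlow
    simp only [Nat.add_sub_cancel] at hlow
    rw [Real.one_rpow, mul_one] at hlow
    have htX : ∀ j ∈ Finset.Icc 1 m, (tildeX n m P j) ^ α = ((m:ℝ))^(-α) := by
      intro j _
      rw [tildeX, if_pos hsmall, one_div, ← Real.rpow_neg_one (m:ℝ),
        ← Real.rpow_mul (by positivity : (0:ℝ) ≤ (m:ℝ))]
      norm_num
    rw [Finset.sum_congr rfl htX, Finset.sum_const, Nat.card_Icc]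
    simp only [Nat.add_sub_cancel, nsmul_eq_mul]
    have hmpos : (0:ℝ) < m := by positivity
    have e : (m:ℝ) * ((m:ℝ))^(-α) = ((m:ℝ))^(1-α) := by
      rw [Real.rpow_sub hmpos, Real.rpow_one, Real.rpow_neg hmpos.le, div_eq_mul_inv]
    rw [e]
    calc ((m:ℝ))^(1-α) ≤ (wc α)⁻¹ * (wc α * ((m:ℝ))^(1-α)) := by
          rw [← mul_assoc, inv_mul_cancel₀ hwcpos.ne', one_mul]
      _ ≤ (wc α)⁻¹ * ∑ j ∈ Finset.Icc 1 m, (push n f P j)^α := by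
          apply mul_le_mul_of_nonneg_left hlow (by positivity)
  · -- structured case
    have hsmall' : ¬ P 1 < 1 / (m:ℝ) := hsmall
    push_neg at hsmall
    have hmpos : (0:ℝ) < m := by positivity
    have hP1m : 1 ≤ (m:ℝ) * P 1 := by
      rw [div_le_iff₀ hmpos] at hsmall
      linarith [hsmall]
    have hsum2 : ∑ j ∈ Finset.Icc 2 n, P j = 1 - P 1 := by
      have h2 : Finset.Icc 2 n = (Finset.Icc 1 n).erase 1 := by
        rw [Finset.Icc_erase_left]
        ext x
        simp only [Finset.mem_Icc, Finset.mem_Ioc]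
        omega
      rw [h2]
      have h3 := Finset.add_sum_erase (Finset.Icc 1 n) P
        (Finset.mem_Icc.mpr ⟨le_refl 1, hn1⟩)
      rw [hPsum] at h3
      linarith
    have h1S : 1 ∈ {i : ℕ | 1 ≤ i ∧ i ≤ m - 1 ∧
        ((m : ℝ) - (i : ℝ))⁻¹ * ∑ j ∈ Finset.Icc (i + 1) n, P j ≤ P i} := by
      refine ⟨le_refl 1, by omega, ?_⟩
      rw [Nat.cast_one]
      rw [show (1:ℕ) + 1 = 2 by omega, hsum2]
      rw [inv_mul_le_iff₀ (by
        have : (2:ℝ) ≤ m := by exact_mod_cast hm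
        linarith)]
      nlinarith [hPpos 1 (Finset.mem_Icc.mpr ⟨le_refl 1, hn1⟩)]
    have hbdd : BddAbove {i : ℕ | 1 ≤ i ∧ i ≤ m - 1 ∧
        ((m : ℝ) - (i : ℝ))⁻¹ * ∑ j ∈ Finset.Icc (i + 1) n, P j ≤ P i} :=
      ⟨m - 1, fun i hi => hi.2.1⟩
    have hnsS : nStar n m P ∈ {i : ℕ | 1 ≤ i ∧ i ≤ m - 1 ∧
        ((m : ℝ) - (i : ℝ))⁻¹ * ∑ j ∈ Finset.Icc (i + 1) n, P j ≤ P i} :=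
      Nat.sSup_mem ⟨1, h1S⟩ hbdd
    set ns := nStar n m P with hns
    obtain ⟨hns1, hns2, _⟩ := hnsS
    have hnsm : ns + 1 ≤ m := by omega
    set M := m - ns with hMdef
    have hM1 : 1 ≤ M := by omega
    have hMcast : (M:ℝ) = (m:ℝ) - (ns:ℝ) := by
      rw [hMdef]
      push_cast [Nat.cast_sub (by omega : ns ≤ m)]
      ring
    have hMpos : (0:ℝ) < M := by
      rw [hMcast]
      have : (ns:ℝ) + 1 ≤ (m:ℝ) := by exact_mod_cast hnsm
      linarith
    set sig := ∑ j ∈ Finset.Icc (ns + 1) n, P j with hsig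
    have htailsub : ∀ i ∈ Finset.Icc (ns+1) n, i ∈ Finset.Icc 1 n := by
      intro i hi
      have := Finset.mem_Icc.mp hi
      exact Finset.mem_Icc.mpr ⟨by omega, this.2⟩
    have hsigpos : 0 < sig := Finset.sum_pos
      (fun j hj => hPpos j (htailsub j hj))
      ⟨ns+1, Finset.mem_Icc.mpr ⟨le_refl _, by omega⟩⟩
    have hsplit2 : sig = P (ns+1) + ∑ j ∈ Finset.Icc (ns+2) n, P j := by
      rw [hsig]
      rw [show Finset.Icc (ns+2) n = (Finset.Icc (ns+1) n).erase (ns+1) by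
        rw [Finset.Icc_erase_left]
        ext x
        simp only [Finset.mem_Icc, Finset.mem_Ioc]
        omega]
      exact (Finset.add_sum_erase _ P (Finset.mem_Icc.mpr ⟨le_refl _, by omega⟩)).symm
    have htailpos : 0 < ∑ j ∈ Finset.Icc (ns+2) n, P j := Finset.sum_pos
      (fun j hj => hPpos j (by
        have := Finset.mem_Icc.mp hj
        exact Finset.mem_Icc.mpr ⟨by omega, this.2⟩))
      ⟨ns+2, Finset.mem_Icc.mpr ⟨le_refl _, by omega⟩⟩
    have hkeyns : (M:ℝ) * P (ns+1) < sig := by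
      by_cases hcase : ns + 1 ≤ m - 1
      · have hnotS : ns + 1 ∉ {i : ℕ | 1 ≤ i ∧ i ≤ m - 1 ∧
            ((m : ℝ) - (i : ℝ))⁻¹ * ∑ j ∈ Finset.Icc (i + 1) n, P j ≤ P i} := by
          intro hmem
          have h5 : ns + 1 ≤ ns := le_csSup hbdd hmem
          omega
        have hcond : ¬ (((m:ℝ) - ((ns:ℝ)+1))⁻¹ * ∑ j ∈ Finset.Icc (ns+2) n, P j ≤ P (ns+1)) := by
          intro hc
          refine hnotS ⟨by omega, hcase, ?_⟩
          push_cast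
          rw [show ns + 1 + 1 = ns + 2 by omega]
          exact hc
        push_neg at hcond
        have hpos : (0:ℝ) < (m:ℝ) - ((ns:ℝ)+1) := by
          have hnat : ns + 2 ≤ m := by omega
          have : (ns:ℝ) + 2 ≤ (m:ℝ) := by exact_mod_cast hnat
          linarith
        rw [lt_inv_mul_iff₀ hpos] at hcond
        rw [hMcast]
        nlinarith [hcond, hsplit2]
      · have hnseq : ns = m - 1 := by omega
        have hMone : (M:ℝ) = 1 := by
          rw [hMcast]
          have : (ns:ℝ) = (m:ℝ) - 1 := by
            rw [hnseq]
            push_cast [Nat.cast_sub (by omega : 1 ≤ m)]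
            ring
          linarith
        rw [hMone, one_mul]
        nlinarith [hsplit2, htailpos]
    have hkey : ∀ i ∈ Finset.Icc (ns+1) n, (M:ℝ) * P i < sig := by
      intro i hi
      have hPle : P i ≤ P (ns+1) := hdec (ns+1)
        (Finset.mem_Icc.mpr ⟨by omega, by omega⟩) i (htailsub i hi) (Finset.mem_Icc.mp hi).1
      nlinarith
    -- greedy on the tail
    have haT : ns + (n - ns) = n := by omega
    obtain ⟨g, hgmaps, hgne, hgratio⟩ := greedy ns M (n - ns) hM1 (by omega) w hwpos
      (by
        rw [haT]
        intro i hi i' hi' hle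
        rw [hwP i (htailsub i hi), hwP i' (htailsub i' hi')]
        exact hdec i (htailsub i hi) i' (htailsub i' hi') hle)
      (by
        rw [haT]
        intro i hi
        rw [hwP i (htailsub i hi), Finset.sum_congr rfl (fun i' hi' => hwP i' (htailsub i' hi'))]
        exact hkey i hi)
    rw [haT] at hgmaps hgne hgratio
    set f : ℕ → ℕ := fun i => if i ≤ ns then i else ns + g i with hf
    have hfmaps : ∀ i ∈ Finset.Icc 1 n, f i ∈ Finset.Icc 1 m := by
      intro i hi
      obtain ⟨hi1, hi2⟩ := Finset.mem_Icc.mp hi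
      simp only [hf]
      split_ifs with hle
      · exact Finset.mem_Icc.mpr ⟨hi1, by omega⟩
      · have hgi := hgmaps i (Finset.mem_Icc.mpr ⟨by omega, hi2⟩)
        have := Finset.mem_Icc.mp hgi
        exact Finset.mem_Icc.mpr ⟨by omega, by omega⟩
    have hpushhead : ∀ j, 1 ≤ j → j ≤ ns → push n f P j = P j := by
      intro j hj1 hj2
      rw [push]
      have hset : (Finset.Icc 1 n).filter (fun i => f i = j) = {j} := by
        ext i
        simp only [Finset.mem_filter, Finset.mem_Icc, Finset.mem_singleton]
        constructor
        · rintro ⟨⟨hi1, hi2⟩, hfi⟩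
          simp only [hf] at hfi
          by_cases hle : i ≤ ns
          · rwa [if_pos hle] at hfi
          · exfalso
            rw [if_neg hle] at hfi
            have hgi := hgmaps i (Finset.mem_Icc.mpr ⟨by omega, hi2⟩)
            have := Finset.mem_Icc.mp hgi
            omega
        · intro h
          subst h
          refine ⟨⟨hj1, by omega⟩, ?_⟩
          simp only [hf]
          rw [if_pos hj2]
      rw [hset, Finset.sum_singleton]
    have hpushtail : ∀ j' ∈ Finset.Icc 1 M, push n f P (ns + j') =
        ∑ i ∈ (Finset.Icc (ns+1) n).filter (fun i => g i = j'), P i := by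
      intro j' hj'
      obtain ⟨hj'1, hj'2⟩ := Finset.mem_Icc.mp hj'
      rw [push]
      congr 1
      ext i
      simp only [Finset.mem_filter, Finset.mem_Icc]
      constructor
      · rintro ⟨⟨hi1, hi2⟩, hfi⟩
        simp only [hf] at hfi
        by_cases hle : i ≤ ns
        · exfalso
          rw [if_pos hle] at hfi
          omega
        · rw [if_neg hle] at hfi
          exact ⟨⟨by omega, hi2⟩, by omega⟩
      · rintro ⟨⟨hi1, hi2⟩, hgi⟩
        refine ⟨⟨by omega, hi2⟩, ?_⟩
        simp only [hf]
        rw [if_neg (by omega : ¬ i ≤ ns)]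
        omega
    have hpushtailw : ∀ j' ∈ Finset.Icc 1 M, push n f P (ns + j') =
        ∑ i ∈ (Finset.Icc (ns+1) n).filter (fun i => g i = j'), w i := by
      intro j' hj'
      rw [hpushtail j' hj']
      exact Finset.sum_congr rfl
        (fun i hi => (hwP i (htailsub i (Finset.mem_of_mem_filter _ hi))).symm)
    have hpushtailpos : ∀ j' ∈ Finset.Icc 1 M, 0 < push n f P (ns + j') := by
      intro j' hj'
      rw [hpushtail j' hj']
      exact Finset.sum_pos
        (fun i hi => hPpos i (htailsub i (Finset.mem_of_mem_filter _ hi))) (hgne j' hj')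
    have hpushpos : ∀ j ∈ Finset.Icc 1 m, 0 < push n f P j := by
      intro j hj
      obtain ⟨hj1, hj2⟩ := Finset.mem_Icc.mp hj
      by_cases hle : j ≤ ns
      · rw [hpushhead j hj1 hle]
        exact hPpos j (Finset.mem_Icc.mpr ⟨hj1, by omega⟩)
      · have hj' : j - ns ∈ Finset.Icc 1 M := Finset.mem_Icc.mpr ⟨by omega, by omega⟩
        have : j = ns + (j - ns) := by omega
        rw [this]
        exact hpushtailpos (j - ns) hj'
    refine ⟨f, hfmaps, hpushpos, ?_⟩
    intro α h0 h1
    have hwcpos := wc_pos h0 h1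
    have hwcle := wc_le_one h0 h1
    -- sum splitting
    have hIoc1 : ∀ b : ℕ, Finset.Icc 1 b = Finset.Ioc 0 b := by
      intro b
      ext x
      simp only [Finset.mem_Icc, Finset.mem_Ioc]
      omega
    have hIocns : ∀ b : ℕ, Finset.Icc (ns+1) b = Finset.Ioc ns b := by
      intro b
      ext x
      simp only [Finset.mem_Icc, Finset.mem_Ioc]
      omega
    have hsplitm : ∀ (F : ℕ → ℝ), ∑ j ∈ Finset.Icc 1 m, F j
        = ∑ j ∈ Finset.Icc 1 ns, F j + ∑ j ∈ Finset.Icc (ns+1) m, F j := by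
      intro F
      rw [hIoc1 m, hIoc1 ns, hIocns m]
      exact (Finset.sum_Ioc_consecutive F (by omega) (by omega : ns ≤ m)).symm
    -- head terms
    have hheads : ∀ j ∈ Finset.Icc 1 ns, (tildeX n m P j) ^ α = (push n f P j) ^ α := by
      intro j hj
      obtain ⟨hj1, hj2⟩ := Finset.mem_Icc.mp hj
      rw [tildeX, if_neg hsmall', ← hns, if_pos hj2, hpushhead j hj1 hj2]
    -- tail tildeX terms
    set u := ((m : ℝ) - (ns : ℝ))⁻¹ * sig with hu
    have htails : ∀ j ∈ Finset.Icc (ns+1) m, (tildeX n m P j) ^ α = u ^ α := by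
      intro j hj
      obtain ⟨hj1, hj2⟩ := Finset.mem_Icc.mp hj
      rw [tildeX, if_neg hsmall', ← hns, if_neg (by omega : ¬ j ≤ ns)]
    have hucalc : (Finset.Icc (ns+1) m).card • (u ^ α) = sig ^ α * (M:ℝ) ^ (1-α) := by
      rw [Nat.card_Icc, show m + 1 - (ns+1) = M by omega, nsmul_eq_mul]
      rw [hu, ← hMcast, mul_comm ((M:ℝ))⁻¹ sig, ← div_eq_mul_inv]
      rw [Real.div_rpow hsigpos.le hMpos.le]
      rw [Real.rpow_sub hMpos, Real.rpow_one]
      field_simp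
    -- tail push sum reindexed
    have hmap : Finset.Icc (ns+1) m = Finset.map (addLeftEmbedding ns) (Finset.Icc 1 M) := by
      rw [Finset.map_add_left_Icc]
      congr 1
      omega
    have htailQ : ∑ j ∈ Finset.Icc (ns+1) m, (push n f P j) ^ α
        = ∑ j' ∈ Finset.Icc 1 M, (push n f P (ns + j')) ^ α := by
      rw [hmap, Finset.sum_map]
      rfl
    -- lower bound on tail push sum
    have hsumq : ∑ j' ∈ Finset.Icc 1 M, push n f P (ns + j') = sig := by
      rw [hsig, ← Finset.sum_fiberwise_of_maps_to hgmaps P]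
      exact Finset.sum_congr rfl hpushtail
    have hlow := sum_rpow_lower h0 h1 (Finset.Icc 1 M)
      ⟨1, Finset.mem_Icc.mpr ⟨le_refl 1, hM1⟩⟩
      (fun j' => push n f P (ns + j'))
      (fun j' hj' => hpushtailpos j' hj')
      (fun j' hj' j'' hj'' => by
        show push n f P (ns + j') ≤ 2 * push n f P (ns + j'')
        rw [hpushtailw j' hj', hpushtailw j'' hj'']
        exact hgratio j' hj' j'' hj'')
    rw [hsumq, Nat.card_Icc] at hlow
    simp only [Nat.add_sub_cancel] at hlow
    -- assemble
    rw [hsplitm (fun j => (tildeX n m P j) ^ α), hsplitm (fun j => (push n f P j) ^ α)]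
    rw [Finset.sum_congr rfl hheads, Finset.sum_congr rfl htails, Finset.sum_const, hucalc,
      htailQ]
    have hHpos : 0 ≤ ∑ j ∈ Finset.Icc 1 ns, (push n f P j) ^ α :=
      Finset.sum_nonneg (fun j hj => Real.rpow_nonneg (le_of_lt (hpushpos j (by
        have := Finset.mem_Icc.mp hj
        exact Finset.mem_Icc.mpr ⟨this.1, by omega⟩))) α)
    have hTQge : wc α * (sig ^ α * (M:ℝ) ^ (1-α))
        ≤ ∑ j' ∈ Finset.Icc 1 M, (push n f P (ns + j')) ^ α := by
      rw [← mul_assoc]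
      exact hlow
    exact wrap hwcpos hwcle hHpos hTQge

lemma gmoment_pos {n k : ℕ} (hn : 1 ≤ n) {P : ℕ → ℝ}
    (hP : ∀ i ∈ Finset.Icc 1 n, 0 < P i) {g : (Fin k → ℕ) → ℕ}
    (hg : IsRanking n k P g) (ρ : ℝ) : 0 < gmoment n k P g ρ := by
  apply Finset.sum_pos _ (seqSet_nonempty hn)
  intro x hx
  have h1 : 1 ≤ g x := (hg.1.mapsTo (Finset.mem_coe.mpr hx)).1
  have hgpos : (0:ℝ) < (g x : ℝ) := by exact_mod_cast Nat.lt_of_lt_of_le Nat.zero_lt_one h1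
  exact mul_pos (prodP_pos hP hx) (Real.rpow_pos_of_pos hgpos ρ)

end Aux18

open Aux18

theorem stmt18 (n m k : ℕ) (hm : 2 ≤ m) (hmn : m < n) (hk : 1 ≤ k)
    (P : ℕ → ℝ) (hP : IsPMF n P) (hdec : DecOn n P) :
    ∃ f : ℕ → ℕ, (∀ i ∈ Finset.Icc 1 n, f i ∈ Finset.Icc 1 m) ∧
      ∀ gX gY : (Fin k → ℕ) → ℕ,
        IsRanking n k P gX → IsRanking m k (push n f P) gY →
          ∀ ρ : ℝ, 0 < ρ →
            (1 / (k : ℝ)) *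
                Real.log (gmoment n k P gX ρ / gmoment m k (push n f P) gY ρ)
              ≤ ρ * (renyiH n (1 / (1 + ρ)) P - renyiH m (1 / (1 + ρ)) (tildeX n m P)
                    + vFun (1 / (1 + ρ)))
                + (ρ / (k : ℝ)) * Real.log (1 + (k : ℝ) * Real.log m) := by
  obtain ⟨f, hfmaps, hQpos, hC⟩ := exists_good_f n m hm hmn P hP hdec
  refine ⟨f, hfmaps, ?_⟩
  intro gX gY hgX hgY ρ hρ
  have hn1 : 1 ≤ n := by omega
  have h1ρ : (0:ℝ) < 1 + ρ := by linarith
  set α := 1/(1+ρ) with hα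
  have h0 : 0 < α := by positivity
  have h1 : α < 1 := by
    rw [hα, div_lt_one h1ρ]
    linarith
  have hαne : α ≠ 1 := by linarith
  have hwcpos := wc_pos h0 h1
  have hKpos : (0:ℝ) < (k:ℝ) := by exact_mod_cast Nat.lt_of_lt_of_le Nat.zero_lt_one hk
  -- positive sums
  set SP := ∑ j ∈ Finset.Icc 1 n, (P j) ^ α with hSP
  set SQ := ∑ j ∈ Finset.Icc 1 m, (push n f P j) ^ α with hSQ
  set ST := ∑ j ∈ Finset.Icc 1 m, (tildeX n m P j) ^ α with hST
  have hSPpos : 0 < SP := Finset.sum_pos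
    (fun j hj => Real.rpow_pos_of_pos (hP.1 j hj) α)
    ⟨1, Finset.mem_Icc.mpr ⟨le_refl 1, hn1⟩⟩
  have hSQpos : 0 < SQ := Finset.sum_pos
    (fun j hj => Real.rpow_pos_of_pos (hQpos j hj) α)
    ⟨1, Finset.mem_Icc.mpr ⟨le_refl 1, by omega⟩⟩
  have hSTpos : 0 < ST := Finset.sum_pos
    (fun j hj => Real.rpow_pos_of_pos (tildeX_pos n m hm hmn P hP hdec j hj) α)
    ⟨1, Finset.mem_Icc.mpr ⟨le_refl 1, by omega⟩⟩
  have hGXpos := gmoment_pos hn1 hP.1 hgX ρ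
  have hGYpos := gmoment_pos (by omega : 1 ≤ m) hQpos hgY ρ
  set LGX := Real.log (gmoment n k P gX ρ) with hLGX
  set LGY := Real.log (gmoment m k (push n f P) gY ρ) with hLGY
  set LD := Real.log (1 + (k:ℝ) * Real.log m) with hLD
  set V := vFun α with hV
  have hDpos : (0:ℝ) < 1 + (k:ℝ) * Real.log m := by
    have h2 : (0:ℝ) < Real.log m := Real.log_pos (by exact_mod_cast hm)
    nlinarith
  have hLD0 : 0 ≤ LD := by
    rw [hLD]
    apply Real.log_nonneg
    have h2 : (0:ℝ) < Real.log m := Real.log_pos (by exact_mod_cast hm)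
    nlinarith
  -- upper bound on LGX
  have F1 : LGX ≤ (ρ+1) * ((k:ℝ) * Real.log SP) := by
    rw [hLGX]
    calc Real.log (gmoment n k P gX ρ) ≤ Real.log ((SP ^ k) ^ (ρ+1)) :=
          Real.log_le_log hGXpos (gmoment_le hn1 hP.1 hgX hρ)
      _ = (ρ+1) * ((k:ℝ) * Real.log SP) := by
          rw [Real.log_rpow (by positivity), Real.log_pow]
  -- lower bound on LGY
  have F2 : (k:ℝ) * Real.log SQ ≤ α * LGY + (1-α) * LD := by
    have h := gmoment_ge hm hk (fun j hj => (hQpos j hj).le) hgY hρ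
    have hlog := Real.log_le_log (by positivity : (0:ℝ) < SQ ^ k) h
    rw [Real.log_pow, Real.log_mul (by positivity) (by positivity),
      Real.log_rpow hGYpos, Real.log_rpow hDpos] at hlog
    rw [hLGY, hLD]
    linarith
  -- majorization bound
  have F3 : Real.log ST ≤ (1-α) * V + Real.log SQ := by
    have h := hC α h0 h1
    have hlog := Real.log_le_log hSTpos h
    rw [Real.log_mul (by positivity) hSQpos.ne', Real.log_inv, log_wc h0 h1] at hlog
    rw [hV]
    linarith
  -- identities
  have hid1 : (1+ρ) * (1-α) = ρ := by
    rw [hα]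
    field_simp
    ring
  have hid2 : (1+ρ) * α = 1 := by
    rw [hα]
    field_simp
  -- renyiH rewriting
  rw [renyiH, if_neg hαne, renyiH, if_neg hαne]
  rw [show Real.log (gmoment n k P gX ρ / gmoment m k (push n f P) gY ρ) = LGX - LGY from by
    rw [hLGX, hLGY, Real.log_div hGXpos.ne' hGYpos.ne']]
  -- combine
  have hGY1 : (1+ρ) * ((k:ℝ) * Real.log SQ) ≤ LGY + ρ * LD := by
    have t1 := mul_le_mul_of_nonneg_left F2 h1ρ.le
    have t2 : (1+ρ) * (α * LGY + (1-α) * LD) = LGY + ρ * LD := by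
      linear_combination LGY * hid2 + LD * hid1
    linarith
  have hST2 : (1+ρ) * ((k:ℝ) * Real.log ST) ≤ ρ * ((k:ℝ) * V) + (1+ρ) * ((k:ℝ) * Real.log SQ) := by
    have t1 := mul_le_mul_of_nonneg_left F3 (by positivity : (0:ℝ) ≤ (1+ρ) * (k:ℝ))
    have t2 : (1+ρ) * (k:ℝ) * ((1-α) * V + Real.log SQ)
        = ρ * ((k:ℝ) * V) + (1+ρ) * ((k:ℝ) * Real.log SQ) := by
      linear_combination ((k:ℝ) * V) * hid1
    nlinarith [t1, t2]
  have main : LGX - LGY ≤ (1+ρ) * ((k:ℝ) * Real.log SP) - (1+ρ) * ((k:ℝ) * Real.log ST)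
      + ρ * ((k:ℝ) * V) + ρ * LD := by
    linarith
  have hρinv : ρ * (1-α)⁻¹ = 1 + ρ := by
    rw [hα]
    rw [show 1 - 1/(1+ρ) = ρ/(1+ρ) from by field_simp; ring]
    rw [inv_div]
    field_simp
  have hfin := mul_le_mul_of_nonneg_left main (by positivity : (0:ℝ) ≤ 1/(k:ℝ))
  calc (1/(k:ℝ)) * (LGX - LGY)
      ≤ (1/(k:ℝ)) * ((1+ρ) * ((k:ℝ) * Real.log SP) - (1+ρ) * ((k:ℝ) * Real.log ST)
          + ρ * ((k:ℝ) * V) + ρ * LD) := hfin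
    _ = (1+ρ) * Real.log SP - (1+ρ) * Real.log ST + ρ * V + ρ/(k:ℝ) * LD := by
        have hKne : (k:ℝ) ≠ 0 := hKpos.ne'
        field_simp
    _ = ρ * ((1-α)⁻¹ * Real.log SP - (1-α)⁻¹ * Real.log ST + V) + ρ/(k:ℝ) * LD := by
        linear_combination (Real.log ST - Real.log SP) * hρinv
end

section
/- Let n > m ≥ 2, k ≥ 1 and D ≥ 2 be integers, let P_X be a probability mass function strictly positive on a set X with |X| = n and P_X(1) ≥ … ≥ P_X(n), let f ∈ F_{n,m} be a deterministic function, and let P_Y on Y = {1,…,m} be given by P_Y(y) = Σ_{x: f(x)=y} P_X(x). Let X̃_m be as follows: if P_X(1) < 1/m, X̃_m is uniform on {1,…,m}; otherwise P_{X̃_m}(i) = P_X(i) for i ≤ n* and P_{X̃_m}(i) = (1/(m−n*))·Σ_{j=n*+1}^{n} P_X(j) for n* < i ≤ m, where n* is the maximal integer i ∈ {1,…,m−1} with P_X(i) ≥ (1/(m−i))·Σ_{j=i+1}^{n} P_X(j). Then for every ρ > 0 there exists a length function ℓ̄: Y^k → ℕ satisfying the Kraft inequality Σ_{y^k ∈ Y^k}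 D^{−ℓ̄(y^k)} ≤ 1 such that, for every length function ℓ: X^k → ℕ satisfying Σ_{x^k ∈ X^k} D^{−ℓ(x^k)} ≤ 1, the scaled cumulant generating functions Λ_k(ρ) := (1/k)·log_D(Σ_{x^k} P_{X^k}(x^k)·D^{ρ·ℓ(x^k)}) and Λ̄_k(ρ) := (1/k)·log_D(Σ_{y^k} P_{Y^k}(y^k)·D^{ρ·ℓ̄(y^k)}) satisfy Λ_k(ρ) − Λ̄_k(ρ) ≥ (ρ/log D)·[H_{1/(1+ρ)}(X) − H_{1/(1+ρ)}(X̃_m)] − ρ/k. -/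
set_option maxHeartbeats 1000000


open Finset

section AuxStmt19

open Real

/-- Abel summation comparison: if `bb` dominates `qq` in partial sums with equal totals and
`c` is nondecreasing, then `∑ bb*c ≤ ∑ qq*c`. -/
lemma aux_abel_comp (m : ℕ) (bb qq c : ℕ → ℝ)
    (hc : ∀ i, i + 1 < m → c i ≤ c (i + 1))
    (hmaj : ∀ r, r ≤ m → ∑ i ∈ Finset.range r, qq i ≤ ∑ i ∈ Finset.range r, bb i)
    (htot : ∑ i ∈ Finset.range m, bb i = ∑ i ∈ Finset.range m, qq i) :
    ∑ i ∈ Finset.range m, bb i * c i ≤ ∑ i ∈ Finset.range m, qq i * c i := by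
  have key : ∑ i ∈ Finset.range m, c i * (bb i - qq i) ≤ 0 := by
    have hb := Finset.sum_range_by_parts c (fun i => bb i - qq i) m
    simp only [smul_eq_mul] at hb
    rw [hb]
    have h0 : ∑ i ∈ Finset.range m, (bb i - qq i) = 0 := by
      rw [Finset.sum_sub_distrib, htot, sub_self]
    rw [h0, mul_zero, zero_sub, neg_nonpos]
    apply Finset.sum_nonneg
    intro i hi
    rw [Finset.mem_range] at hi
    have h1 : i + 1 < m := by omega
    have h2 : 0 ≤ c (i + 1) - c i := sub_nonneg.2 (hc i h1)
    have h3 : 0 ≤ ∑ j ∈ Finset.range (i + 1), (bb j - qq j) := by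
      rw [Finset.sum_sub_distrib]
      have := hmaj (i + 1) (by omega)
      linarith
    positivity
  have : ∑ i ∈ Finset.range m, bb i * c i - ∑ i ∈ Finset.range m, qq i * c i
      = ∑ i ∈ Finset.range m, c i * (bb i - qq i) := by
    rw [← Finset.sum_sub_distrib]
    congr 1; ext i; ring
  linarith

/-- Top-`r` sums of an antitone nonnegative sequence dominate sums over sets of card `≤ r`. -/
lemma aux_top_r (m r : ℕ) (bb : ℕ → ℝ) (h0 : ∀ i, 0 ≤ bb i)
    (hanti : ∀ i j, i ≤ j → j < m → bb j ≤ bb i)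
    (S : Finset ℕ) (hS : S ⊆ Finset.range m) (hcard : S.card ≤ r) (hrm : r ≤ m) :
    ∑ i ∈ S, bb i ≤ ∑ i ∈ Finset.range r, bb i := by
  rcases Nat.eq_zero_or_pos r with hr0 | hr1
  · subst hr0
    have : S = ∅ := Finset.card_eq_zero.mp (by omega)
    simp [this]
  · have hsplit1 : ∑ i ∈ S ∩ Finset.range r, bb i + ∑ i ∈ S \ Finset.range r, bb i
        = ∑ i ∈ S, bb i := Finset.sum_inter_add_sum_sdiff S (Finset.range r) bb
    have hsplit2 : ∑ i ∈ Finset.range r ∩ S, bb i + ∑ i ∈ Finset.range r \ S, bb i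
        = ∑ i ∈ Finset.range r, bb i := Finset.sum_inter_add_sum_sdiff _ S bb
    rw [Finset.inter_comm] at hsplit2
    have hcard1 : (S ∩ Finset.range r).card + (S \ Finset.range r).card = S.card :=
      Finset.card_inter_add_card_sdiff S (Finset.range r)
    have hcard2 : (Finset.range r ∩ S).card + (Finset.range r \ S).card = r := by
      have := Finset.card_inter_add_card_sdiff (Finset.range r) S
      rwa [Finset.card_range] at this
    rw [Finset.inter_comm] at hcard2
    have hcc : (S \ Finset.range r).card ≤ (Finset.range r \ S).card := by omega
    have hkey : ∑ i ∈ S \ Finset.range r, bb i ≤ ∑ i ∈ Finset.range r \ S, bb i := by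
      have hrm1 : r - 1 < m := by omega
      have hub : ∑ i ∈ S \ Finset.range r, bb i ≤ (S \ Finset.range r).card • bb (r - 1) := by
        apply Finset.sum_le_card_nsmul
        intro x hx
        rw [Finset.mem_sdiff, Finset.mem_range] at hx
        have hxm : x < m := Finset.mem_range.mp (hS hx.1)
        exact hanti (r - 1) x (by omega) hxm
      have hlb : (Finset.range r \ S).card • bb (r - 1) ≤ ∑ i ∈ Finset.range r \ S, bb i := by
        apply Finset.card_nsmul_le_sum
        intro x hx
        rw [Finset.mem_sdiff, Finset.mem_range] at hx
        exact hanti x (r - 1) (by omega) hrm1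
      calc ∑ i ∈ S \ Finset.range r, bb i ≤ (S \ Finset.range r).card • bb (r - 1) := hub
        _ ≤ (Finset.range r \ S).card • bb (r - 1) := by
            exact nsmul_le_nsmul_left (h0 _) hcc
        _ ≤ ∑ i ∈ Finset.range r \ S, bb i := hlb
    linarith

/-- Sum of products over `seqSet` factorises. -/
lemma aux_sum_prod (M K : ℕ) (g : ℕ → ℝ) :
    ∑ x ∈ seqSet M K, ∏ i, g (x i) = (∑ j ∈ Finset.Icc 1 M, g j) ^ K := by
  rw [seqSet, ← Finset.prod_univ_sum]
  simp

/-- The pushforward sums to the total. -/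
lemma aux_sum_push (n m : ℕ) (P : ℕ → ℝ) (f : ℕ → ℕ)
    (hf : ∀ i ∈ Finset.Icc 1 n, f i ∈ Finset.Icc 1 m) :
    ∑ j ∈ Finset.Icc 1 m, push n f P j = ∑ i ∈ Finset.Icc 1 n, P i := by
  unfold push
  exact Finset.sum_fiberwise_of_maps_to hf P

/-- Campbell achievability: given a full-support pmf `Q` on `{1,…,M}` bounded by `1`,
there is a Kraft length function whose cgf-sum is controlled. -/
lemma aux_achieve (M K D : ℕ) (hD : 2 ≤ D) (hK : 1 ≤ K) (ρ : ℝ) (hρ : 0 < ρ)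
    (PP Q : ℕ → ℝ) (hPP : ∀ j ∈ Finset.Icc 1 M, 0 ≤ PP j)
    (hQpos : ∀ j ∈ Finset.Icc 1 M, 0 < Q j) (hQ1 : ∀ j ∈ Finset.Icc 1 M, Q j ≤ 1)
    (hQsum : ∑ j ∈ Finset.Icc 1 M, Q j = 1) :
    ∃ ℓbar : (Fin K → ℕ) → ℕ, Kraft M K D ℓbar ∧
      ∑ y ∈ seqSet M K, prodP K PP y * (D : ℝ) ^ (ρ * (ℓbar y : ℝ))
        ≤ (D : ℝ) ^ ρ * (∑ j ∈ Finset.Icc 1 M, PP j * Q j ^ (-ρ)) ^ K := by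
  classical
  have hD1 : (1 : ℝ) < (D : ℝ) := by exact_mod_cast (by omega : 1 < D)
  have hD0 : (0 : ℝ) < (D : ℝ) := by linarith
  set w : (Fin K → ℕ) → ℝ := fun y => ∏ i, Q (y i) with hwdef
  have hmem : ∀ y ∈ seqSet M K, ∀ i : Fin K, y i ∈ Finset.Icc 1 M := by
    intro y hy i
    exact Fintype.mem_piFinset.mp hy i
  have hwpos : ∀ y ∈ seqSet M K, 0 < w y := by
    intro y hy
    exact Finset.prod_pos fun i _ => hQpos _ (hmem y hy i)
  have hwle1 : ∀ y ∈ seqSet M K, w y ≤ 1 := by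
    intro y hy
    exact Finset.prod_le_one (fun i _ => (hQpos _ (hmem y hy i)).le)
      (fun i _ => hQ1 _ (hmem y hy i))
  have hlognn : ∀ y ∈ seqSet M K, 0 ≤ -Real.logb D (w y) := by
    intro y hy
    exact neg_nonneg.2 (Real.logb_nonpos hD1 (hwpos y hy).le (hwle1 y hy))
  refine ⟨fun y => ⌈-Real.logb D (w y)⌉₊, ?_, ?_⟩
  · -- Kraft
    unfold Kraft
    have hterm : ∀ y ∈ seqSet M K,
        (D : ℝ) ^ (-((⌈-Real.logb D (w y)⌉₊ : ℕ) : ℝ)) ≤ w y := by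
      intro y hy
      have h1 : -Real.logb D (w y) ≤ (⌈-Real.logb D (w y)⌉₊ : ℝ) := Nat.le_ceil _
      have h2 : -((⌈-Real.logb D (w y)⌉₊ : ℕ) : ℝ) ≤ Real.logb D (w y) := by linarith
      calc (D : ℝ) ^ (-((⌈-Real.logb D (w y)⌉₊ : ℕ) : ℝ))
          ≤ (D : ℝ) ^ Real.logb D (w y) := Real.rpow_le_rpow_of_exponent_le hD1.le h2
        _ = w y := Real.rpow_logb hD0 hD1.ne' (hwpos y hy)
    calc ∑ y ∈ seqSet M K, (D : ℝ) ^ (-((⌈-Real.logb D (w y)⌉₊ : ℕ) : ℝ))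
        ≤ ∑ y ∈ seqSet M K, w y := Finset.sum_le_sum hterm
      _ = (∑ j ∈ Finset.Icc 1 M, Q j) ^ K := aux_sum_prod M K Q
      _ = 1 := by rw [hQsum, one_pow]
  · -- cgf sum bound
    have hterm : ∀ y ∈ seqSet M K,
        prodP K PP y * (D : ℝ) ^ (ρ * ((⌈-Real.logb D (w y)⌉₊ : ℕ) : ℝ))
          ≤ (D : ℝ) ^ ρ * (prodP K PP y * w y ^ (-ρ)) := by
      intro y hy
      have hPnn : 0 ≤ prodP K PP y := Finset.prod_nonneg fun i _ => hPP _ (hmem y hy i)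
      have h1 : ((⌈-Real.logb D (w y)⌉₊ : ℕ) : ℝ) < -Real.logb D (w y) + 1 :=
        Nat.ceil_lt_add_one (hlognn y hy)
      have h2 : (D : ℝ) ^ (ρ * ((⌈-Real.logb D (w y)⌉₊ : ℕ) : ℝ))
          ≤ (D : ℝ) ^ (ρ + Real.logb D (w y) * (-ρ)) := by
        apply Real.rpow_le_rpow_of_exponent_le hD1.le
        nlinarith
      have h3 : (D : ℝ) ^ (ρ + Real.logb D (w y) * (-ρ)) = (D : ℝ) ^ ρ * w y ^ (-ρ) := by
        rw [Real.rpow_add hD0, Real.rpow_mul hD0.le, Real.rpow_logb hD0 hD1.ne' (hwpos y hy)]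
      calc prodP K PP y * (D : ℝ) ^ (ρ * ((⌈-Real.logb D (w y)⌉₊ : ℕ) : ℝ))
          ≤ prodP K PP y * ((D : ℝ) ^ ρ * w y ^ (-ρ)) := by
            rw [← h3]; exact mul_le_mul_of_nonneg_left h2 hPnn
        _ = (D : ℝ) ^ ρ * (prodP K PP y * w y ^ (-ρ)) := by ring
    calc ∑ y ∈ seqSet M K, prodP K PP y * (D : ℝ) ^ (ρ * ((⌈-Real.logb D (w y)⌉₊ : ℕ) : ℝ))
        ≤ ∑ y ∈ seqSet M K, (D : ℝ) ^ ρ * (prodP K PP y * w y ^ (-ρ)) :=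
          Finset.sum_le_sum hterm
      _ = (D : ℝ) ^ ρ * ∑ y ∈ seqSet M K, prodP K PP y * w y ^ (-ρ) := by
          rw [← Finset.mul_sum]
      _ = (D : ℝ) ^ ρ * (∑ j ∈ Finset.Icc 1 M, PP j * Q j ^ (-ρ)) ^ K := by
          congr 1
          have : ∀ y ∈ seqSet M K, prodP K PP y * w y ^ (-ρ) =
              ∏ i, (PP (y i) * Q (y i) ^ (-ρ)) := by
            intro y hy
            have hw : w y ^ (-ρ) = ∏ i, Q (y i) ^ (-ρ) := by
              rw [hwdef]
              exact (Real.finset_prod_rpow Finset.univ _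
                (fun i _ => (hQpos _ (hmem y hy i)).le) (-ρ)).symm
            rw [prodP, hw, ← Finset.prod_mul_distrib]
          rw [Finset.sum_congr rfl this]
          exact aux_sum_prod M K (fun j => PP j * Q j ^ (-ρ))

/-- Campbell converse. -/
lemma aux_converse (N K D : ℕ) (hD : 2 ≤ D) (hK : 1 ≤ K) (ρ : ℝ) (hρ : 0 < ρ)
    (P : ℕ → ℝ) (hP : ∀ i ∈ Finset.Icc 1 N, 0 ≤ P i)
    (ℓ : (Fin K → ℕ) → ℕ) (hℓ : Kraft N K D ℓ) :
    (∑ i ∈ Finset.Icc 1 N, P i ^ (1 / (1 + ρ))) ^ ((K : ℝ) * (1 + ρ))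
      ≤ ∑ x ∈ seqSet N K, prodP K P x * (D : ℝ) ^ (ρ * (ℓ x : ℝ)) := by
  classical
  have hD1 : (1 : ℝ) < (D : ℝ) := by exact_mod_cast (by omega : 1 < D)
  have hD0 : (0 : ℝ) < (D : ℝ) := by linarith
  set p : ℝ := 1 + ρ with hp
  set q : ℝ := (1 + ρ) / ρ with hq
  have hp1 : 1 < p := by rw [hp]; linarith
  have hρ1 : (0:ℝ) < 1 + ρ := by linarith
  have hpq : p.HolderConjugate q := by
    rw [Real.holderConjugate_iff]
    constructor
    · exact hp1
    · rw [hp, hq]; field_simp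
  set F : (Fin K → ℕ) → ℝ := fun x => prodP K P x * (D : ℝ) ^ (ρ * (ℓ x : ℝ)) with hF
  set G : (Fin K → ℕ) → ℝ := fun x => (D : ℝ) ^ (-(ℓ x : ℝ)) with hG
  have hmem : ∀ x ∈ seqSet N K, ∀ i : Fin K, x i ∈ Finset.Icc 1 N := by
    intro x hx i; exact Fintype.mem_piFinset.mp hx i
  have hFnn : ∀ x ∈ seqSet N K, 0 ≤ F x := by
    intro x hx
    exact mul_nonneg (Finset.prod_nonneg fun i _ => hP _ (hmem x hx i)) (Real.rpow_nonneg hD0.le _)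
  have hGnn : ∀ x, 0 ≤ G x := fun x => Real.rpow_nonneg hD0.le _
  have hfg : ∀ x ∈ seqSet N K, F x ^ (1/p) * G x ^ (1/q) = prodP K P x ^ (1/p) := by
    intro x hx
    have h1 : F x ^ (1/p) = prodP K P x ^ (1/p) * ((D:ℝ) ^ (ρ * (ℓ x : ℝ))) ^ (1/p) :=
      Real.mul_rpow (Finset.prod_nonneg fun i _ => hP _ (hmem x hx i)) (Real.rpow_nonneg hD0.le _)
    have h2 : ((D:ℝ) ^ (ρ * (ℓ x : ℝ))) ^ (1/p) * ((D:ℝ) ^ (-(ℓ x : ℝ))) ^ (1/q) = 1 := by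
      rw [← Real.rpow_mul hD0.le, ← Real.rpow_mul hD0.le, ← Real.rpow_add hD0]
      rw [show ρ * ((ℓ x : ℕ):ℝ) * (1/p) + -((ℓ x : ℕ):ℝ) * (1/q) = 0 by
        rw [hp, hq]; field_simp; ring]
      exact Real.rpow_zero _
    calc F x ^ (1/p) * G x ^ (1/q)
        = prodP K P x ^ (1/p) * (((D:ℝ) ^ (ρ * (ℓ x : ℝ))) ^ (1/p) * ((D:ℝ) ^ (-(ℓ x : ℝ))) ^ (1/q)) := by
          rw [h1]; ring
      _ = prodP K P x ^ (1/p) := by rw [h2, mul_one]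
  have hholder := Real.inner_le_Lp_mul_Lq (seqSet N K) (fun x => F x ^ (1/p))
    (fun x => G x ^ (1/q)) hpq
  have hpne : p ≠ 0 := by positivity
  have hqne : q ≠ 0 := by rw [hq]; positivity
  have habs1 : ∀ x ∈ seqSet N K, |F x ^ (1/p)| ^ p = F x := by
    intro x hx
    rw [abs_of_nonneg (Real.rpow_nonneg (hFnn x hx) _), ← Real.rpow_mul (hFnn x hx),
      one_div, inv_mul_cancel₀ hpne, Real.rpow_one]
  have habs2 : ∀ x, |G x ^ (1/q)| ^ q = G x := by
    intro x
    rw [abs_of_nonneg (Real.rpow_nonneg (hGnn x) _), ← Real.rpow_mul (hGnn x),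
      one_div, inv_mul_cancel₀ hqne, Real.rpow_one]
  rw [Finset.sum_congr rfl hfg, Finset.sum_congr rfl (fun x hx => habs1 x hx),
    Finset.sum_congr rfl (fun x _ => habs2 x)] at hholder
  -- the LHS of hholder is A^K
  set A : ℝ := ∑ i ∈ Finset.Icc 1 N, P i ^ (1/p) with hA
  have hAnn : 0 ≤ A := Finset.sum_nonneg fun i hi => Real.rpow_nonneg (hP i hi) _
  have hLHS : ∑ x ∈ seqSet N K, prodP K P x ^ (1/p) = A ^ K := by
    have : ∀ x ∈ seqSet N K, prodP K P x ^ (1/p) = ∏ i, P (x i) ^ (1/p) := by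
      intro x hx
      rw [prodP]
      exact (Real.finset_prod_rpow Finset.univ _ (fun i _ => hP _ (hmem x hx i)) _).symm
    rw [Finset.sum_congr rfl this, hA]
    exact aux_sum_prod N K (fun j => P j ^ (1/p))
  rw [hLHS] at hholder
  have hSFnn : 0 ≤ ∑ x ∈ seqSet N K, F x := Finset.sum_nonneg hFnn
  have hSG1 : (∑ x ∈ seqSet N K, G x) ^ (1/q) ≤ 1 := by
    apply Real.rpow_le_one (Finset.sum_nonneg fun x _ => hGnn x) hℓ
    positivity
  have hmain : (A : ℝ) ^ K ≤ (∑ x ∈ seqSet N K, F x) ^ (1/p) := by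
    calc (A : ℝ) ^ K ≤ (∑ x ∈ seqSet N K, F x) ^ (1/p) * (∑ x ∈ seqSet N K, G x) ^ (1/q) :=
        hholder
      _ ≤ (∑ x ∈ seqSet N K, F x) ^ (1/p) * 1 := by
          exact mul_le_mul_of_nonneg_left hSG1 (Real.rpow_nonneg hSFnn _)
      _ = (∑ x ∈ seqSet N K, F x) ^ (1/p) := mul_one _
  have hfinal : ((A : ℝ) ^ K) ^ p ≤ ∑ x ∈ seqSet N K, F x := by
    calc ((A : ℝ) ^ K) ^ p ≤ ((∑ x ∈ seqSet N K, F x) ^ (1/p)) ^ p :=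
        Real.rpow_le_rpow (by positivity) hmain (by positivity)
      _ = ∑ x ∈ seqSet N K, F x := by
          rw [← Real.rpow_mul hSFnn, one_div, inv_mul_cancel₀ hpne, Real.rpow_one]
  calc A ^ ((K : ℝ) * p) = ((A : ℝ) ^ (K : ℝ)) ^ p := Real.rpow_mul hAnn _ _ ▸ rfl
    _ = ((A : ℝ) ^ K) ^ p := by rw [Real.rpow_natCast]
    _ ≤ ∑ x ∈ seqSet N K, F x := hfinal

/-- Shift between `Icc 1 m` and `range m`. -/
lemma aux_Icc_range (m : ℕ) (g : ℕ → ℝ) :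
    ∑ j ∈ Finset.Icc 1 m, g j = ∑ i ∈ Finset.range m, g (i + 1) := by
  rw [← Finset.Ico_add_one_right_eq_Icc, Finset.sum_Ico_eq_sum_range]
  simp [add_comm]

/-- Splitting off the bottom element of an `Icc` sum. -/
lemma aux_sum_Icc_bot (a b : ℕ) (hab : a ≤ b) (g : ℕ → ℝ) :
    ∑ i ∈ Finset.Icc a b, g i = g a + ∑ i ∈ Finset.Icc (a + 1) b, g i := by
  have h : Finset.Icc a b = insert a (Finset.Icc (a + 1) b) := by
    ext x; simp only [Finset.mem_Icc, Finset.mem_insert]; omega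
  rw [h, Finset.sum_insert (by simp)]

/-- Glueing two `Icc` sums. -/
lemma aux_sum_Icc_glue (a b : ℕ) (hab : a ≤ b) (g : ℕ → ℝ) :
    ∑ i ∈ Finset.Icc 1 a, g i + ∑ i ∈ Finset.Icc (a + 1) b, g i = ∑ i ∈ Finset.Icc 1 b, g i := by
  have h1 : ∀ c : ℕ, Finset.Icc 1 c = Finset.Ioc 0 c := fun c => Finset.Icc_add_one_left_eq_Ioc 0 c
  have h2 : Finset.Icc (a + 1) b = Finset.Ioc a b := Finset.Icc_add_one_left_eq_Ioc a b
  rw [h1, h1, h2]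
  exact Finset.sum_Ioc_consecutive g (Nat.zero_le a) hab

/-- The key comparison: a good full-support pmf `Q` on `{1,…,m}` adapted to `f`. -/
lemma aux_keyQ (n m : ℕ) (hm : 2 ≤ m) (hmn : m < n)
    (P : ℕ → ℝ) (hP : IsPMF n P) (hdec : DecOn n P)
    (f : ℕ → ℕ) (hf : ∀ i ∈ Finset.Icc 1 n, f i ∈ Finset.Icc 1 m)
    (ρ : ℝ) (hρ : 0 < ρ) :
    ∃ Q : ℕ → ℝ, (∀ j ∈ Finset.Icc 1 m, 0 < Q j) ∧ (∀ j ∈ Finset.Icc 1 m, Q j ≤ 1) ∧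
      (∑ j ∈ Finset.Icc 1 m, Q j = 1) ∧
      (0 < ∑ j ∈ Finset.Icc 1 m, tildeX n m P j ^ (1 / (1 + ρ))) ∧
      ∑ j ∈ Finset.Icc 1 m, push n f P j * Q j ^ (-ρ)
        ≤ (∑ j ∈ Finset.Icc 1 m, tildeX n m P j ^ (1 / (1 + ρ))) ^ (1 + ρ) := by
  classical
  obtain ⟨hPpos, hPsum⟩ := hP
  have hρ1 : (0:ℝ) < 1 + ρ := by linarith
  set α : ℝ := 1 / (1 + ρ) with hα
  have hα0 : 0 < α := by positivity
  have hα1 : α < 1 := by rw [hα]; rw [div_lt_one hρ1]; linarith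
  have hm0 : (0:ℝ) < (m:ℝ) := by positivity
  have hppnn : ∀ j, 0 ≤ push n f P j := by
    intro j
    apply Finset.sum_nonneg
    intro i hi
    exact (hPpos i (Finset.mem_filter.mp hi).1).le
  have hppsum : ∑ j ∈ Finset.Icc 1 m, push n f P j = 1 := by
    rw [aux_sum_push n m P f hf, hPsum]
  by_cases hc : P 1 < 1 / (m : ℝ)
  · -- uniform case
    have htX : ∀ i, tildeX n m P i = 1 / (m:ℝ) := by
      intro i; simp only [tildeX, if_pos hc]
    have hcard : (Finset.Icc 1 m).card = m := by rw [Nat.card_Icc]; omega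
    refine ⟨fun _ => 1 / (m:ℝ), fun j _ => by positivity, fun j _ => by
        rw [div_le_one hm0]; exact_mod_cast (by omega : 1 ≤ m), ?_, ?_, ?_⟩
    · rw [Finset.sum_const, hcard, nsmul_eq_mul]
      field_simp
    · apply Finset.sum_pos
      · intro j hj; rw [htX j]; positivity
      · exact Finset.nonempty_Icc.mpr (by omega)
    · have hsum1 : ∑ j ∈ Finset.Icc 1 m, push n f P j * ((1:ℝ)/m) ^ (-ρ)
          = ((1:ℝ)/m) ^ (-ρ) := by
        rw [← Finset.sum_mul, hppsum, one_mul]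
      have hsum2 : ∑ j ∈ Finset.Icc 1 m, tildeX n m P j ^ α = (m:ℝ) * ((1:ℝ)/m) ^ α := by
        rw [Finset.sum_congr rfl (fun j _ => by rw [htX j]), Finset.sum_const, hcard,
          nsmul_eq_mul]
      rw [hsum1, hsum2]
      have h1 : ((1:ℝ)/m) = (m:ℝ) ^ (-1 : ℝ) := by
        rw [Real.rpow_neg_one]; field_simp
      rw [h1, ← Real.rpow_mul hm0.le, ← Real.rpow_mul hm0.le]
      have h2 : (m:ℝ) * (m:ℝ) ^ (-1 * α) = (m:ℝ) ^ (1 + -1 * α) := by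
        rw [Real.rpow_add hm0, Real.rpow_one]
      rw [h2, ← Real.rpow_mul hm0.le]
      have h3 : (1 + -1 * α) * (1 + ρ) = -1 * -ρ := by
        have : α * (1 + ρ) = 1 := by rw [hα]; field_simp
        nlinarith
      rw [h3]
  · -- non-uniform case
    push_neg at hc
    set t := nStar n m P with htdef
    have hSne : (1:ℕ) ∈ {i : ℕ | 1 ≤ i ∧ i ≤ m - 1 ∧
        ((m : ℝ) - (i : ℝ))⁻¹ * ∑ j ∈ Finset.Icc (i + 1) n, P j ≤ P i} := by
      refine ⟨le_refl 1, by omega, ?_⟩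
      have hsplit : ∑ j ∈ Finset.Icc 1 n, P j
          = P 1 + ∑ j ∈ Finset.Icc 2 n, P j := aux_sum_Icc_bot 1 n (by omega) P
      have h2 : ∑ j ∈ Finset.Icc 2 n, P j = 1 - P 1 := by rw [hPsum] at hsplit; linarith
      have hm1 : (0:ℝ) < (m:ℝ) - 1 := by
        have : (2:ℝ) ≤ (m:ℝ) := by exact_mod_cast hm
        linarith
      have hc' : 1 ≤ (m:ℝ) * P 1 := by
        rw [div_le_iff₀ hm0] at hc; linarith [hc]
      show ((m : ℝ) - (1 : ℕ))⁻¹ * ∑ j ∈ Finset.Icc (1 + 1) n, P j ≤ P 1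
      push_cast
      rw [h2, inv_mul_le_iff₀ hm1]
      nlinarith
    have hbdd : BddAbove {i : ℕ | 1 ≤ i ∧ i ≤ m - 1 ∧
        ((m : ℝ) - (i : ℝ))⁻¹ * ∑ j ∈ Finset.Icc (i + 1) n, P j ≤ P i} :=
      ⟨m - 1, fun x hx => hx.2.1⟩
    have htS := Nat.sSup_mem ⟨1, hSne⟩ hbdd
    rw [← nStar, ← htdef] at htS
    obtain ⟨ht1, htm, htu⟩ := htS
    set u : ℝ := ((m : ℝ) - (t : ℝ))⁻¹ * ∑ j ∈ Finset.Icc (t + 1) n, P j with hudef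
    have htm' : t + 1 ≤ m := by omega
    have hmt : (0:ℝ) < (m:ℝ) - (t:ℝ) := by
      have : ((t:ℝ) + 1) ≤ (m:ℝ) := by exact_mod_cast htm'
      linarith
    have htn : t + 1 ≤ n := by omega
    have hSpos : 0 < ∑ j ∈ Finset.Icc (t + 1) n, P j := by
      apply Finset.sum_pos
      · intro i hi
        rw [Finset.mem_Icc] at hi
        exact hPpos i (Finset.mem_Icc.mpr ⟨by omega, hi.2⟩)
      · exact Finset.nonempty_Icc.mpr htn
    have hupos : 0 < u := by positivity
    have htX : ∀ i, tildeX n m P i = if i ≤ t then P i else u := by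
      intro i
      simp only [tildeX, if_neg (not_lt.mpr hc), ← htdef, ← hudef]
    -- positivity and monotonicity of tildeX on Icc 1 m
    have hqpos : ∀ i, 1 ≤ i → i ≤ m → 0 < tildeX n m P i := by
      intro i h1 h2
      rw [htX i]
      split
      · exact hPpos i (Finset.mem_Icc.mpr ⟨h1, by omega⟩)
      · exact hupos
    have hqanti : ∀ i j, 1 ≤ i → i ≤ j → j ≤ m → tildeX n m P j ≤ tildeX n m P i := by
      intro i j h1 hij hjm
      rw [htX i, htX j]
      have hin : i ∈ Finset.Icc 1 n := Finset.mem_Icc.mpr ⟨h1, by omega⟩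
      by_cases hjt : j ≤ t
      · rw [if_pos (le_trans hij hjt), if_pos hjt]
        exact hdec i hin j (Finset.mem_Icc.mpr ⟨by omega, by omega⟩) hij
      · rw [if_neg hjt]
        by_cases hit : i ≤ t
        · rw [if_pos hit]
          calc u ≤ P t := htu
            _ ≤ P i := hdec i hin t (Finset.mem_Icc.mpr ⟨by omega, by omega⟩) hit
        · rw [if_neg hit]
    -- sum of tildeX is 1
    have hcardI : ∀ a b : ℕ, a ≤ b + 1 → ((Finset.Icc a b).card : ℝ) = (b:ℝ) + 1 - (a:ℝ) := by
      intro a b h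
      rw [Nat.card_Icc]
      push_cast [Nat.cast_sub h]
      ring
    have hsum_tail : ∑ i ∈ Finset.Icc (t + 1) m, tildeX n m P i
        = ∑ j ∈ Finset.Icc (t + 1) n, P j := by
      have h1 : ∀ i ∈ Finset.Icc (t + 1) m, tildeX n m P i = u := by
        intro i hi
        rw [Finset.mem_Icc] at hi
        rw [htX i, if_neg (by omega)]
      rw [Finset.sum_congr rfl h1, Finset.sum_const, nsmul_eq_mul]
      have hcard : ((Finset.Icc (t + 1) m).card : ℝ) = (m:ℝ) - (t:ℝ) := by
        rw [hcardI (t+1) m (by omega)]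
        push_cast
        ring
      rw [hcard, hudef]
      field_simp
    have hqsum : ∑ i ∈ Finset.Icc 1 m, tildeX n m P i = 1 := by
      rw [← aux_sum_Icc_glue t m (by omega) (tildeX n m P), hsum_tail]
      have h1 : ∑ i ∈ Finset.Icc 1 t, tildeX n m P i = ∑ i ∈ Finset.Icc 1 t, P i := by
        apply Finset.sum_congr rfl
        intro i hi
        rw [Finset.mem_Icc] at hi
        rw [htX i, if_pos hi.2]
      rw [h1, aux_sum_Icc_glue t n (by omega) P, hPsum]
    have hIccsplit : ∑ i ∈ Finset.Icc 1 t, P i + ∑ j ∈ Finset.Icc (t+1) n, P j = 1 := by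
      rw [aux_sum_Icc_glue t n (by omega) P, hPsum]
    have hMTU : ∑ j ∈ Finset.Icc (t+1) n, P j = ((m:ℝ) - (t:ℝ)) * u := by
      rw [hudef]; field_simp
    -- sort the pushforward
    set pp := push n f P with hpp
    obtain ⟨σ, hσmono⟩ : ∃ σ : Equiv.Perm (Fin m),
        Monotone ((fun i : Fin m => -pp (i.val + 1)) ∘ σ) :=
      ⟨Tuple.sort _, Tuple.monotone_sort _⟩
    set bb : ℕ → ℝ := fun i => if h : i < m then pp ((σ ⟨i, h⟩).val + 1) else 0 with hbb
    have hbbnn : ∀ i, 0 ≤ bb i := by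
      intro i; rw [hbb]; dsimp only; split
      · exact hppnn _
      · exact le_refl 0
    have hbbanti : ∀ i j, i ≤ j → j < m → bb j ≤ bb i := by
      intro i j hij hj
      have hi : i < m := lt_of_le_of_lt hij hj
      have h2 := hσmono (a := ⟨i, hi⟩) (b := ⟨j, hj⟩) (Fin.mk_le_mk.mpr hij)
      simp only [Function.comp_apply] at h2
      rw [hbb]; dsimp only; rw [dif_pos hi, dif_pos hj]
      linarith
    have hbbFin : ∀ i : Fin m, bb i.val = pp ((σ i).val + 1) := by
      intro i; rw [hbb]; dsimp only; rw [dif_pos i.isLt]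
    have htotbb : ∑ i ∈ Finset.range m, bb i = 1 := by
      rw [← Fin.sum_univ_eq_sum_range]
      calc ∑ i : Fin m, bb i.val = ∑ i : Fin m, pp ((σ i).val + 1) :=
            Finset.sum_congr rfl fun i _ => hbbFin i
        _ = ∑ i : Fin m, pp (i.val + 1) := Equiv.sum_comp σ (fun i : Fin m => pp (i.val + 1))
        _ = ∑ i ∈ Finset.range m, pp (i + 1) := Fin.sum_univ_eq_sum_range (fun i => pp (i + 1)) m
        _ = 1 := by rw [← aux_Icc_range, hppsum]
    -- majorization, small indices
    have hM1 : ∀ r, r ≤ m → ∑ i ∈ Finset.Icc 1 r, P i ≤ ∑ i ∈ Finset.range r, bb i := by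
      intro r hr
      set J := (Finset.Icc 1 r).image f with hJ
      have hJm : J ⊆ Finset.Icc 1 m := by
        intro j hj
        rw [hJ, Finset.mem_image] at hj
        obtain ⟨i, hi, rfl⟩ := hj
        rw [Finset.mem_Icc] at hi
        exact hf i (Finset.mem_Icc.mpr ⟨hi.1, by omega⟩)
      have hJcard : J.card ≤ r :=
        le_trans Finset.card_image_le (by rw [Nat.card_Icc]; omega)
      have step1 : ∑ i ∈ Finset.Icc 1 r, P i ≤ ∑ j ∈ J, pp j := by
        rw [hpp]
        simp only [push]
        rw [Finset.sum_fiberwise_eq_sum_filter (Finset.Icc 1 n) J f P]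
        apply Finset.sum_le_sum_of_subset_of_nonneg
        · intro i hi
          rw [Finset.mem_Icc] at hi
          rw [Finset.mem_filter]
          exact ⟨Finset.mem_Icc.mpr ⟨hi.1, by omega⟩,
            Finset.mem_image_of_mem f (Finset.mem_Icc.mpr hi)⟩
        · intro i hi _
          exact (hPpos i (Finset.mem_filter.mp hi).1).le
      have step2 : ∑ j ∈ J, pp j ≤ ∑ i ∈ Finset.range r, bb i := by
        set e : ℕ → ℕ :=
          fun j => if h : j - 1 < m then ((σ.symm ⟨j - 1, h⟩ : Fin m)).val else 0 with he
        have hbbe : ∀ j ∈ Finset.Icc 1 m, bb (e j) = pp j := by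
          intro j hj
          rw [Finset.mem_Icc] at hj
          have h1 : j - 1 < m := by omega
          rw [he]; dsimp only; rw [dif_pos h1]
          rw [hbb]; dsimp only
          rw [dif_pos (σ.symm ⟨j - 1, h1⟩).isLt]
          rw [show (⟨(σ.symm ⟨j - 1, h1⟩).val, (σ.symm ⟨j - 1, h1⟩).isLt⟩ : Fin m)
            = σ.symm ⟨j - 1, h1⟩ from rfl]
          rw [Equiv.apply_symm_apply]
          congr 1
          show j - 1 + 1 = j
          omega
        have hinj : ∀ x ∈ J, ∀ y ∈ J, e x = e y → x = y := by
          intro x hx y hy hxy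
          have hx1 := Finset.mem_Icc.mp (hJm hx)
          have hy1 := Finset.mem_Icc.mp (hJm hy)
          have h1 : x - 1 < m := by omega
          have h2 : y - 1 < m := by omega
          rw [he] at hxy; dsimp only at hxy
          rw [dif_pos h1, dif_pos h2] at hxy
          have h3 : σ.symm ⟨x - 1, h1⟩ = σ.symm ⟨y - 1, h2⟩ := Fin.ext hxy
          have h4 := σ.symm.injective h3
          have h5 : x - 1 = y - 1 := by
            have := congrArg Fin.val h4
            simpa using this
          omega
        have hsumeq : ∑ x ∈ J.image e, bb x = ∑ j ∈ J, pp j := by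
          rw [Finset.sum_image hinj]
          exact Finset.sum_congr rfl fun j hj => hbbe j (hJm hj)
        have hSsub : J.image e ⊆ Finset.range m := by
          intro x hx
          rw [Finset.mem_image] at hx
          obtain ⟨j, hj, rfl⟩ := hx
          rw [he]; dsimp only; split
          · exact Finset.mem_range.mpr (Fin.isLt _)
          · exact Finset.mem_range.mpr (by omega)
        rw [← hsumeq]
        exact aux_top_r m r bb hbbnn hbbanti (J.image e)
          hSsub (le_trans Finset.card_image_le hJcard) hr
      linarith
    -- majorization, bottom sums
    have hbot : ∑ i ∈ Finset.Ico t m, bb i ≤ ((m:ℝ) - t) * u := by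
      have h1 : ∑ i ∈ Finset.Ico t m, bb i
          = ∑ i ∈ Finset.range m, bb i - ∑ i ∈ Finset.range t, bb i :=
        Finset.sum_Ico_eq_sub bb (by omega)
      have h2 := hM1 t (by omega)
      rw [h1, htotbb]
      linarith [hIccsplit, hMTU]
    have hM2 : ∀ r, t ≤ r → r ≤ m → ∑ i ∈ Finset.Ico r m, bb i ≤ ((m:ℝ) - r) * u := by
      intro r htr hrm
      rcases eq_or_lt_of_le hrm with rfl | hrlt
      · simp
      · have hr1 : 1 ≤ r := by omega
        have hrm1 : r - 1 < m := by omega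
        have hcast1 : ((m - r : ℕ) : ℝ) = (m:ℝ) - r := by
          push_cast [Nat.cast_sub hrm]; ring
        have hcast2 : ((r - t : ℕ) : ℝ) = (r:ℝ) - t := by
          push_cast [Nat.cast_sub htr]; ring
        have hub : ∑ i ∈ Finset.Ico r m, bb i ≤ ((m:ℝ) - r) * bb (r - 1) := by
          have h := Finset.sum_le_card_nsmul (Finset.Ico r m) bb (bb (r - 1))
            (fun x hx => by
              rw [Finset.mem_Ico] at hx
              exact hbbanti (r - 1) x (by omega) hx.2)
          rw [Nat.card_Ico, nsmul_eq_mul, hcast1] at h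
          exact h
        have hlb : ((r:ℝ) - t) * bb (r - 1) ≤ ∑ i ∈ Finset.Ico t r, bb i := by
          have h := Finset.card_nsmul_le_sum (Finset.Ico t r) bb (bb (r - 1))
            (fun x hx => by
              rw [Finset.mem_Ico] at hx
              exact hbbanti x (r - 1) (by omega) hrm1)
          rw [Nat.card_Ico, nsmul_eq_mul, hcast2] at h
          exact h
        have hcons : ∑ i ∈ Finset.Ico t r, bb i + ∑ i ∈ Finset.Ico r m, bb i
            = ∑ i ∈ Finset.Ico t m, bb i :=
          Finset.sum_Ico_consecutive bb (by omega) (by omega)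
        have hmr : (0:ℝ) < (m:ℝ) - r := by
          have : ((r:ℝ) + 1) ≤ (m:ℝ) := by exact_mod_cast hrlt
          linarith
        have hrt : (0:ℝ) ≤ (r:ℝ) - t := by
          have : (t:ℝ) ≤ (r:ℝ) := by exact_mod_cast htr
          linarith
        nlinarith [hbot, hbbnn (r - 1)]
    -- partial sum domination
    have hmaj : ∀ r, r ≤ m → ∑ i ∈ Finset.range r, tildeX n m P (i + 1)
        ≤ ∑ i ∈ Finset.range r, bb i := by
      intro r hr
      by_cases hrt : r ≤ t
      · have h1 : ∀ i ∈ Finset.range r, tildeX n m P (i + 1) = P (i + 1) := by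
          intro i hi
          rw [Finset.mem_range] at hi
          rw [htX, if_pos (by omega)]
        calc ∑ i ∈ Finset.range r, tildeX n m P (i + 1)
            = ∑ i ∈ Finset.range r, P (i + 1) := Finset.sum_congr rfl h1
          _ = ∑ i ∈ Finset.Icc 1 r, P i := (aux_Icc_range r P).symm
          _ ≤ ∑ i ∈ Finset.range r, bb i := hM1 r hr
      · push_neg at hrt
        have hsplit := Finset.sum_range_add_sum_Ico (fun i => tildeX n m P (i + 1))
          (by omega : t ≤ r)
        have h1 : ∑ i ∈ Finset.range t, tildeX n m P (i + 1) = ∑ i ∈ Finset.Icc 1 t, P i := by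
          have e1 : ∑ i ∈ Finset.range t, tildeX n m P (i + 1)
              = ∑ i ∈ Finset.range t, P (i + 1) :=
            Finset.sum_congr rfl (fun i hi => by
              rw [Finset.mem_range] at hi
              rw [htX, if_pos (by omega)])
          rw [e1, ← aux_Icc_range t P]
        have h2 : ∑ i ∈ Finset.Ico t r, tildeX n m P (i + 1) = ((r:ℝ) - t) * u := by
          have e2 : ∑ i ∈ Finset.Ico t r, tildeX n m P (i + 1)
              = ∑ i ∈ Finset.Ico t r, u :=
            Finset.sum_congr rfl (fun i hi => by
              rw [Finset.mem_Ico] at hi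
              rw [htX, if_neg (by omega)])
          rw [e2, Finset.sum_const, Nat.card_Ico, nsmul_eq_mul]
          congr 1
          push_cast [Nat.cast_sub (by omega : t ≤ r)]
          ring
        have h3 : ∑ i ∈ Finset.range r, bb i
            = ∑ i ∈ Finset.range m, bb i - ∑ i ∈ Finset.Ico r m, bb i := by
          have := Finset.sum_Ico_eq_sub bb hr
          linarith
        have h4 := hM2 r (by omega) hr
        rw [htotbb] at h3
        linarith
    -- Abel comparison
    set c : ℕ → ℝ := fun i => tildeX n m P (i + 1) ^ (α - 1) with hcdef
    have hα1' : α - 1 ≤ 0 := by linarith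
    have hcmono : ∀ i, i + 1 < m → c i ≤ c (i + 1) := by
      intro i hi
      rw [hcdef]
      exact Real.rpow_le_rpow_of_nonpos (hqpos (i + 1 + 1) (by omega) (by omega))
        (hqanti (i + 1) (i + 1 + 1) (by omega) (by omega) (by omega)) hα1'
    have htoteq : ∑ i ∈ Finset.range m, bb i = ∑ i ∈ Finset.range m, tildeX n m P (i + 1) := by
      rw [htotbb, ← aux_Icc_range m (tildeX n m P), hqsum]
    have habel := aux_abel_comp m bb (fun i => tildeX n m P (i + 1)) c hcmono hmaj htoteq
    -- the pmf Q
    set W : ℝ := ∑ j ∈ Finset.Icc 1 m, tildeX n m P j ^ α with hWdef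
    have hWpos : 0 < W := by
      apply Finset.sum_pos
      · intro j hj
        rw [Finset.mem_Icc] at hj
        exact Real.rpow_pos_of_pos (hqpos j hj.1 hj.2) _
      · exact Finset.nonempty_Icc.mpr (by omega)
    set Q : ℕ → ℝ := fun j => if h : j - 1 < m
      then tildeX n m P ((σ.symm ⟨j - 1, h⟩).val + 1) ^ α / W else 1 with hQdef
    have hQval : ∀ i : Fin m, Q (i.val + 1) = tildeX n m P ((σ.symm i).val + 1) ^ α / W := by
      intro i
      rw [hQdef]; dsimp only
      have h1 : i.val + 1 - 1 < m := by omega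
      rw [dif_pos h1]
      have h2 : (⟨i.val + 1 - 1, h1⟩ : Fin m) = i := Fin.ext (by simp)
      rw [h2]
    have hQpos : ∀ j ∈ Finset.Icc 1 m, 0 < Q j := by
      intro j hj
      rw [Finset.mem_Icc] at hj
      have h1 : j - 1 < m := by omega
      rw [hQdef]; dsimp only; rw [dif_pos h1]
      have := hqpos ((σ.symm ⟨j - 1, h1⟩).val + 1) (by omega) (by
        have := (σ.symm ⟨j - 1, h1⟩).isLt; omega)
      positivity
    have hQle1 : ∀ j ∈ Finset.Icc 1 m, Q j ≤ 1 := by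
      intro j hj
      rw [Finset.mem_Icc] at hj
      have h1 : j - 1 < m := by omega
      rw [hQdef]; dsimp only; rw [dif_pos h1]
      rw [div_le_one hWpos, hWdef]
      apply Finset.single_le_sum (f := fun j => tildeX n m P j ^ α)
      · intro i hi
        rw [Finset.mem_Icc] at hi
        exact (Real.rpow_pos_of_pos (hqpos i hi.1 hi.2) _).le
      · have := (σ.symm ⟨j - 1, h1⟩).isLt
        exact Finset.mem_Icc.mpr ⟨by omega, by omega⟩
    have hQsum : ∑ j ∈ Finset.Icc 1 m, Q j = 1 := by
      rw [aux_Icc_range m Q, ← Fin.sum_univ_eq_sum_range (fun i => Q (i + 1)) m]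
      rw [Finset.sum_congr rfl (fun i _ => hQval i)]
      rw [Equiv.sum_comp σ.symm (fun i : Fin m => tildeX n m P (i.val + 1) ^ α / W)]
      rw [← Finset.sum_div]
      rw [Fin.sum_univ_eq_sum_range (fun i => tildeX n m P (i + 1) ^ α) m]
      rw [← aux_Icc_range m (fun j => tildeX n m P j ^ α), ← hWdef]
      exact div_self hWpos.ne'
    refine ⟨Q, hQpos, hQle1, hQsum, hWpos, ?_⟩
    -- the key inequality
    have hαρ : α * (1 + ρ) = 1 := by rw [hα]; field_simp
    have hstep : ∑ j ∈ Finset.Icc 1 m, pp j * Q j ^ (-ρ)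
        = ∑ i ∈ Finset.range m, bb i * (c i * W ^ ρ) := by
      rw [aux_Icc_range m (fun j => pp j * Q j ^ (-ρ)),
        ← Fin.sum_univ_eq_sum_range (fun i => pp (i + 1) * Q (i + 1) ^ (-ρ)) m]
      rw [← Equiv.sum_comp σ (fun i : Fin m => pp (i.val + 1) * Q (i.val + 1) ^ (-ρ))]
      rw [← Fin.sum_univ_eq_sum_range (fun i => bb i * (c i * W ^ ρ)) m]
      apply Finset.sum_congr rfl
      intro i _
      rw [hQval (σ i), Equiv.symm_apply_apply, hbbFin i]
      congr 1
      rw [hcdef]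
      have hx : 0 < tildeX n m P (i.val + 1) := hqpos _ (by omega) (by have := i.isLt; omega)
      rw [Real.div_rpow (Real.rpow_nonneg hx.le α) hWpos.le]
      rw [← Real.rpow_mul hx.le]
      rw [show α * (-ρ) = α - 1 by nlinarith [hαρ]]
      rw [Real.rpow_neg hWpos.le]
      field_simp
    rw [hstep]
    have hbound : ∑ i ∈ Finset.range m, bb i * (c i * W ^ ρ)
        ≤ ∑ i ∈ Finset.range m, tildeX n m P (i + 1) * c i * W ^ ρ := by
      have h1 : ∑ i ∈ Finset.range m, bb i * (c i * W ^ ρ)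
          = (∑ i ∈ Finset.range m, bb i * c i) * W ^ ρ := by
        rw [Finset.sum_mul]; congr 1; ext i; ring
      have h2 : ∑ i ∈ Finset.range m, tildeX n m P (i + 1) * c i * W ^ ρ
          = (∑ i ∈ Finset.range m, tildeX n m P (i + 1) * c i) * W ^ ρ := by
        rw [Finset.sum_mul]
      rw [h1, h2]
      exact mul_le_mul_of_nonneg_right habel (Real.rpow_nonneg hWpos.le _)
    have hfinal : ∑ i ∈ Finset.range m, tildeX n m P (i + 1) * c i * W ^ ρ = W ^ (1 + ρ) := by
      have h1 : ∀ i ∈ Finset.range m, tildeX n m P (i + 1) * c i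
          = tildeX n m P (i + 1) ^ α := by
        intro i hi
        rw [Finset.mem_range] at hi
        have hx : 0 < tildeX n m P (i + 1) := hqpos _ (by omega) (by omega)
        rw [hcdef]
        dsimp only
        rw [← Real.rpow_one_add' hx.le (show (1:ℝ) + (α - 1) ≠ 0 by
          intro h
          have : α = 0 := by linarith
          exact hα0.ne' this)]
        congr 1
        ring
      calc ∑ i ∈ Finset.range m, tildeX n m P (i + 1) * c i * W ^ ρ
          = (∑ i ∈ Finset.range m, tildeX n m P (i + 1) * c i) * W ^ ρ := by
            rw [Finset.sum_mul]
        _ = (∑ i ∈ Finset.range m, tildeX n m P (i + 1) ^ α) * W ^ ρ := by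
            rw [Finset.sum_congr rfl h1]
        _ = W * W ^ ρ := by
            rw [← aux_Icc_range m (fun j => tildeX n m P j ^ α), ← hWdef]
        _ = W ^ (1 + ρ) := by
            rw [Real.rpow_add hWpos, Real.rpow_one]
    linarith

theorem stmt19 (n m k D : ℕ) (hm : 2 ≤ m) (hmn : m < n) (hk : 1 ≤ k) (hD : 2 ≤ D)
    (P : ℕ → ℝ) (hP : IsPMF n P) (hdec : DecOn n P)
    (f : ℕ → ℕ) (hf : ∀ i ∈ Finset.Icc 1 n, f i ∈ Finset.Icc 1 m) :
    ∀ ρ : ℝ, 0 < ρ →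
      ∃ ℓbar : (Fin k → ℕ) → ℕ, Kraft m k D ℓbar ∧
        ∀ ℓ : (Fin k → ℕ) → ℕ, Kraft n k D ℓ →
          (ρ / Real.log D) *
              (renyiH n (1 / (1 + ρ)) P - renyiH m (1 / (1 + ρ)) (tildeX n m P)) - ρ / (k : ℝ)
            ≤ cgf n k D P ℓ ρ - cgf m k D (push n f P) ℓbar ρ := by
  intro ρ hρ
  have hρ1 : (0:ℝ) < 1 + ρ := by linarith
  have hk0 : (0:ℝ) < (k:ℝ) := by exact_mod_cast (by omega : 0 < k)
  have hD1 : (1:ℝ) < (D:ℝ) := by exact_mod_cast (by omega : 1 < D)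
  have hD0 : (0:ℝ) < (D:ℝ) := by linarith
  have hlogD : 0 < Real.log D := Real.log_pos hD1
  obtain ⟨Q, hQpos, hQle1, hQsum, hWpos, hkey⟩ := aux_keyQ n m hm hmn P hP hdec f hf ρ hρ
  have hppnn : ∀ j ∈ Finset.Icc 1 m, 0 ≤ push n f P j := fun j _ =>
    Finset.sum_nonneg (fun i hi => (hP.1 i (Finset.mem_filter.mp hi).1).le)
  have hppsum : ∑ j ∈ Finset.Icc 1 m, push n f P j = 1 := by
    rw [aux_sum_push n m P f hf, hP.2]
  obtain ⟨ℓbar, hKraft, hach⟩ :=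
    aux_achieve m k D hD hk ρ hρ (push n f P) Q hppnn hQpos hQle1 hQsum
  refine ⟨ℓbar, hKraft, ?_⟩
  intro ℓ hℓ
  set α : ℝ := 1 / (1 + ρ) with hα
  have hαne : α ≠ 1 := by
    rw [hα]
    intro h
    rw [div_eq_one_iff_eq (by linarith : (1:ℝ) + ρ ≠ 0)] at h
    linarith
  set A : ℝ := ∑ i ∈ Finset.Icc 1 n, P i ^ α with hA
  set W : ℝ := ∑ j ∈ Finset.Icc 1 m, tildeX n m P j ^ α with hW
  have hApos : 0 < A := Finset.sum_pos
    (fun i hi => Real.rpow_pos_of_pos (hP.1 i hi) _) (Finset.nonempty_Icc.mpr (by omega))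
  -- converse bound
  set Sn : ℝ := ∑ x ∈ seqSet n k, prodP k P x * (D : ℝ) ^ (ρ * (ℓ x : ℝ)) with hSn
  have hcon := aux_converse n k D hD hk ρ hρ P (fun i hi => (hP.1 i hi).le) ℓ hℓ
  rw [← hα, ← hA, ← hSn] at hcon
  have hSnpos : 0 < Sn := lt_of_lt_of_le (Real.rpow_pos_of_pos hApos _) hcon
  have hgoal1 : (1 + ρ) * Real.log A / Real.log D ≤ cgf n k D P ℓ ρ := by
    rw [cgf, ← hSn]
    have h1 : Real.logb D (A ^ ((k:ℝ) * (1 + ρ))) ≤ Real.logb D Sn :=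
      (Real.logb_le_logb hD1 (Real.rpow_pos_of_pos hApos _) hSnpos).mpr hcon
    have h2 : Real.logb D (A ^ ((k:ℝ) * (1 + ρ)))
        = (k:ℝ) * (1 + ρ) * Real.log A / Real.log D := by
      rw [Real.logb, Real.log_rpow hApos]
    rw [h2] at h1
    have h3 : (1 / (k:ℝ)) * ((k:ℝ) * (1 + ρ) * Real.log A / Real.log D)
        = (1 + ρ) * Real.log A / Real.log D := by
      field_simp
    calc (1 + ρ) * Real.log A / Real.log D
        = (1 / (k:ℝ)) * ((k:ℝ) * (1 + ρ) * Real.log A / Real.log D) := h3.symm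
      _ ≤ (1 / (k:ℝ)) * Real.logb D Sn := by
          exact mul_le_mul_of_nonneg_left h1 (by positivity)
  -- achievability bound
  set Sm : ℝ := ∑ y ∈ seqSet m k, prodP k (push n f P) y * (D : ℝ) ^ (ρ * (ℓbar y : ℝ))
    with hSm
  have hSmge1 : 1 ≤ Sm := by
    have h1 : ∑ y ∈ seqSet m k, prodP k (push n f P) y = 1 := by
      have := aux_sum_prod m k (push n f P)
      rw [hppsum, one_pow] at this
      rw [← this]
      apply Finset.sum_congr rfl
      intro y _
      rfl
    rw [hSm, ← h1]
    apply Finset.sum_le_sum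
    intro y hy
    have hynn : 0 ≤ prodP k (push n f P) y :=
      Finset.prod_nonneg fun i _ => hppnn _ (Fintype.mem_piFinset.mp hy i)
    have h2 : 1 ≤ (D:ℝ) ^ (ρ * (ℓbar y : ℝ)) := Real.one_le_rpow hD1.le (by positivity)
    nlinarith
  have hQnn : 0 ≤ ∑ j ∈ Finset.Icc 1 m, push n f P j * Q j ^ (-ρ) :=
    Finset.sum_nonneg fun j hj => mul_nonneg (hppnn j hj) (Real.rpow_nonneg (hQpos j hj).le _)
  have hach2 : Sm ≤ (D:ℝ) ^ ρ * (W ^ (1 + ρ)) ^ k := by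
    rw [hSm]
    refine le_trans hach ?_
    apply mul_le_mul_of_nonneg_left _ (Real.rpow_nonneg hD0.le _)
    exact pow_le_pow_left₀ hQnn hkey k
  have hgoal2 : cgf m k D (push n f P) ℓbar ρ ≤ ρ / (k:ℝ) + (1 + ρ) * Real.log W / Real.log D := by
    rw [cgf, ← hSm]
    have hpos2 : (0:ℝ) < (D:ℝ) ^ ρ * (W ^ (1 + ρ)) ^ k := by
      have : (0:ℝ) < W ^ (1 + ρ) := Real.rpow_pos_of_pos hWpos _
      positivity
    have h1 : Real.logb D Sm ≤ Real.logb D ((D:ℝ) ^ ρ * (W ^ (1 + ρ)) ^ k) :=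
      (Real.logb_le_logb hD1 (by linarith) hpos2).mpr hach2
    have h2 : Real.logb D ((D:ℝ) ^ ρ * (W ^ (1 + ρ)) ^ k)
        = (ρ * Real.log D + (k:ℝ) * ((1 + ρ) * Real.log W)) / Real.log D := by
      rw [Real.logb, Real.log_mul (by positivity) (by
        have : (0:ℝ) < W ^ (1 + ρ) := Real.rpow_pos_of_pos hWpos _
        positivity),
        Real.log_rpow hD0, Real.log_pow, Real.log_rpow hWpos]
    rw [h2] at h1
    have h3 : (1 / (k:ℝ)) * ((ρ * Real.log D + (k:ℝ) * ((1 + ρ) * Real.log W)) / Real.log D)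
        = ρ / (k:ℝ) + (1 + ρ) * Real.log W / Real.log D := by
      field_simp
    calc (1 / (k:ℝ)) * Real.logb D Sm
        ≤ (1 / (k:ℝ)) * ((ρ * Real.log D + (k:ℝ) * ((1 + ρ) * Real.log W)) / Real.log D) := by
          exact mul_le_mul_of_nonneg_left h1 (by positivity)
      _ = ρ / (k:ℝ) + (1 + ρ) * Real.log W / Real.log D := h3
  -- rewrite the Rényi entropies
  have hrenyi : (ρ / Real.log D) * (renyiH n α P - renyiH m α (tildeX n m P)) - ρ / (k:ℝ)
      = (1 + ρ) * Real.log A / Real.log D - (1 + ρ) * Real.log W / Real.log D - ρ / (k:ℝ) := by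
    rw [renyiH, renyiH, if_neg hαne, if_neg hαne, ← hA, ← hW]
    have h1 : (1 - α)⁻¹ = (1 + ρ) / ρ := by
      rw [hα]
      rw [show (1:ℝ) - 1 / (1 + ρ) = ρ / (1 + ρ) by field_simp; ring]
      rw [inv_div]
    rw [h1]
    field_simp
  rw [hrenyi]
  linarith
end AuxStmt19
end
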